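/- arXiv:1001.4907 — 9 statements merged into one kernel-verified Lean document; each statement's English description precedes it below -/
import Mathlib

section
/- Fix t ∈ [0,T] and a ∈ ℝ. The map ω ↦ M_{t ∧ τ̲_a(ω)}(ω) is continuous at every point ω₀ ∈ E at which M_{t ∧ τ̲_a(ω₀)}(ω₀) < a. -/
open Set

/-- Lower hitting time `τ̲_a(ω) = inf{t ∈ [0,T] : M_t(ω) ≥ a} ∧ T` (with `inf ∅ = +∞`),
realized as `sInf ({t ∈ [0,T] | M ω t ≥ a} ∪ {T})`. -/
noncomputable def tauLow {E : Type*} (T : ℝ) (M : E → ℝ → ℝ) (a : ℝ) (ω : E) : ℝ :=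
  sInf ({s ∈ Set.Icc (0 : ℝ) T | a ≤ M ω s} ∪ {T})

theorem stmt_0 {E : Type*} [MetricSpace E] (T : ℝ) (hT : 0 < T)
    (M : E → ℝ → ℝ)
    (hM : ContinuousOn (fun p : E × ℝ => M p.1 p.2) (Set.univ ×ˢ Set.Icc 0 T))
    (a : ℝ) (t : ℝ) (ht : t ∈ Set.Icc 0 T)
    (ω₀ : E) (hω₀ : M ω₀ (min t (tauLow T M a ω₀)) < a) :
    ContinuousAt (fun ω => M ω (min t (tauLow T M a ω))) ω₀ := by
  obtain ⟨ht0, htT⟩ := ht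
  -- Step 0: general fact: if ∀ s ∈ Icc 0 t, M ω s < a, then t ≤ tauLow ω
  have htau : ∀ ω : E, (∀ s ∈ Icc 0 t, M ω s < a) → t ≤ tauLow T M a ω := by
    intro ω h
    refine le_csInf (by simp) ?_
    rintro s (⟨hs1, hs2⟩ | hs)
    · by_contra hlt
      push_neg at hlt
      exact absurd hs2 (not_le.2 (h s ⟨hs1.1, hlt.le⟩))
    · rw [Set.mem_singleton_iff] at hs
      exact hs ▸ htT
  -- Step 1: ∀ s ∈ Icc 0 t, M ω₀ s < a
  have key : ∀ s ∈ Icc 0 t, M ω₀ s < a := by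
    by_contra h
    push_neg at h
    obtain ⟨s, hs, hsa⟩ := h
    set S : Set ℝ := {s ∈ Set.Icc (0 : ℝ) T | a ≤ M ω₀ s} with hS
    have hsS : s ∈ S := ⟨⟨hs.1, hs.2.trans htT⟩, hsa⟩
    have hSne : S.Nonempty := ⟨s, hsS⟩
    have hSbdd : BddBelow S := ⟨0, fun x hx => hx.1.1⟩
    have hScl : IsClosed S := by
      have : ContinuousOn (fun u => M ω₀ u) (Icc 0 T) := by
        have : Continuous (fun u : ℝ => ((ω₀, u) : E × ℝ)) := by continuity
        exact (hM.comp this.continuousOn (fun u hu => ⟨mem_univ _, hu⟩))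
      have h2 := this.preimage_isClosed_of_isClosed isClosed_Icc (isClosed_Ici (a := a))
      have hSeq : S = Icc 0 T ∩ (fun u => M ω₀ u) ⁻¹' Ici a := by
        ext u; simp [hS, Set.mem_Ici, and_comm]
      rw [hSeq]; exact h2
    have hmem : sInf S ∈ S := hScl.csInf_mem hSne hSbdd
    have hInfle : sInf S ≤ s := csInf_le hSbdd hsS
    have hunion : tauLow T M a ω₀ = min (sInf S) T := by
      rw [tauLow, csInf_union hSbdd hSne (bddBelow_singleton) (singleton_nonempty T)]
      simp [min_def]
    have htauval : tauLow T M a ω₀ = sInf S := by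
      rw [hunion, min_eq_left hmem.1.2]
    have : min t (tauLow T M a ω₀) = sInf S := by
      rw [htauval, min_eq_right (hInfle.trans hs.2)]
    rw [this] at hω₀
    exact absurd hmem.2 (not_le.2 hω₀)
  -- Step 2: tube lemma
  have tube : ∀ᶠ ω in nhds ω₀, ∀ s ∈ Icc (0:ℝ) t, M ω s < a := by
    have hcomp : IsCompact (Icc (0:ℝ) t) := isCompact_Icc
    have := hcomp.eventually_forall_of_forall_eventually (x₀ := ω₀)
      (P := fun ω s => s ∈ Icc (0:ℝ) T → M ω s < a) ?_
    · filter_upwards [this] with ω hω s hs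
      exact hω s hs ⟨hs.1, hs.2.trans htT⟩
    · intro s hs
      have hmem : ((ω₀, s) : E × ℝ) ∈ Set.univ ×ˢ Set.Icc (0:ℝ) T :=
        ⟨mem_univ _, ⟨hs.1, hs.2.trans htT⟩⟩
      have hc := hM (ω₀, s) hmem
      have hlt : M ω₀ s < a := key s hs
      have hev : ∀ᶠ p in nhdsWithin (ω₀, s) (Set.univ ×ˢ Set.Icc (0:ℝ) T),
          M p.1 p.2 < a := hc (Iio_mem_nhds hlt)
      rw [eventually_nhdsWithin_iff] at hev
      filter_upwards [hev] with p hp hps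
      exact hp ⟨mem_univ _, hps⟩
  -- Step 3: the function equals ω ↦ M ω t near ω₀
  have heq : (fun ω => M ω (min t (tauLow T M a ω))) =ᶠ[nhds ω₀] (fun ω => M ω t) := by
    filter_upwards [tube] with ω hω
    rw [min_eq_left (htau ω hω)]
  have hcont : Continuous (fun ω => M ω t) := by
    have : Continuous (fun ω : E => ((ω, t) : E × ℝ)) := by continuity
    exact hM.comp_continuous this (fun ω => ⟨mem_univ _, ht0, htT⟩)
  exact hcont.continuousAt.congr heq.symm
end

section
/- Fix t ∈ [0,T] and a ∈ ℝ. The map ω ↦ M_{t ∧ τ̄_a(ω)}(ω) is continuous at every point ω₀ ∈ E at which M_{t ∧ τ̄_a(ω₀)}(ω₀) = a. -/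
open Set

/-- Upper hitting time `τ̄_a(ω) = inf{t ∈ [0,T] : M_t(ω) > a} ∧ T` (with `inf ∅ = +∞`),
realized as `sInf ({t ∈ [0,T] | M ω t > a} ∪ {T})`. -/
noncomputable def tauUp {E : Type*} (T : ℝ) (M : E → ℝ → ℝ) (a : ℝ) (ω : E) : ℝ :=
  sInf ({s ∈ Set.Icc (0 : ℝ) T | a < M ω s} ∪ {T})

section Aux

variable {E : Type*} [MetricSpace E] {T : ℝ} {M : E → ℝ → ℝ} {a : ℝ}

lemma tauUp_lb (hT : 0 ≤ T) (ω : E) :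
    ∀ x ∈ ({s ∈ Set.Icc (0 : ℝ) T | a < M ω s} ∪ {T}), (0 : ℝ) ≤ x := by
  rintro x (hx | hx)
  · exact hx.1.1
  · rw [mem_singleton_iff] at hx; exact hx ▸ hT

lemma tauUp_bddBelow (hT : 0 ≤ T) (ω : E) :
    BddBelow ({s ∈ Set.Icc (0 : ℝ) T | a < M ω s} ∪ {T}) :=
  ⟨0, tauUp_lb hT ω⟩

lemma tauUp_mem (hT : 0 ≤ T) (ω : E) : tauUp T M a ω ∈ Set.Icc 0 T := by
  constructor
  · exact le_csInf ⟨T, Or.inr rfl⟩ (tauUp_lb hT ω)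
  · exact csInf_le (tauUp_bddBelow hT ω) (Or.inr rfl)

lemma tauUp_le {ω : E} {x : ℝ} (hx : x ∈ Set.Icc (0 : ℝ) T) (h : a < M ω x) :
    tauUp T M a ω ≤ x :=
  csInf_le (tauUp_bddBelow (hx.1.trans hx.2) ω) (Or.inl ⟨hx, h⟩)

lemma le_of_lt_tauUp {ω : E} {r : ℝ} (hr : r ∈ Set.Icc (0 : ℝ) T)
    (h : r < tauUp T M a ω) : M ω r ≤ a := by
  by_contra hc
  push_neg at hc
  exact absurd (tauUp_le hr hc) (not_le.mpr h)

lemma contAt_slice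
    (hM : ContinuousOn (fun p : E × ℝ => M p.1 p.2) (Set.univ ×ˢ Set.Icc 0 T))
    {r : ℝ} (hr : r ∈ Set.Icc (0 : ℝ) T) (ω₀ : E) :
    ContinuousAt (fun ω => M ω r) ω₀ := by
  have h : ContinuousOn ((fun p : E × ℝ => M p.1 p.2) ∘ (fun ω : E => (ω, r))) univ :=
    hM.comp (Continuous.continuousOn (continuous_id.prodMk continuous_const))
      (fun ω _ => ⟨mem_univ _, hr⟩)
  exact (continuousOn_univ.mp h).continuousAt

lemma contOn_time
    (hM : ContinuousOn (fun p : E × ℝ => M p.1 p.2) (Set.univ ×ˢ Set.Icc 0 T))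
    (ω : E) : ContinuousOn (M ω) (Set.Icc 0 T) := by
  have h : ContinuousOn ((fun p : E × ℝ => M p.1 p.2) ∘ (fun r : ℝ => (ω, r)))
      (Set.Icc 0 T) :=
    hM.comp (Continuous.continuousOn (continuous_const.prodMk continuous_id))
      (fun r hr => ⟨mem_univ _, hr⟩)
  exact h

lemma le_a_at
    (hM : ContinuousOn (fun p : E × ℝ => M p.1 p.2) (Set.univ ×ˢ Set.Icc 0 T))
    (ω : E) {s : ℝ} (h0 : 0 < s) (hsT : s ≤ T)
    (hbelow : ∀ r, 0 ≤ r → r < s → M ω r ≤ a) : M ω s ≤ a := by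
  have hc : ContinuousWithinAt (M ω) (Set.Ico 0 s) s :=
    ((contOn_time hM ω) s ⟨h0.le, hsT⟩).mono (fun r hr => ⟨hr.1, hr.2.le.trans hsT⟩)
  haveI : (nhdsWithin s (Set.Ico (0:ℝ) s)).NeBot := by
    apply mem_closure_iff_nhdsWithin_neBot.mp
    rw [closure_Ico h0.ne]
    exact ⟨h0.le, le_refl s⟩
  exact le_of_tendsto hc (eventually_mem_nhdsWithin.mono fun r hr => hbelow r hr.1 hr.2)

lemma a_le_at_tau
    (hM : ContinuousOn (fun p : E × ℝ => M p.1 p.2) (Set.univ ×ˢ Set.Icc 0 T))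
    (hT : 0 ≤ T) (ω : E) (hlt : tauUp T M a ω < T) :
    a ≤ M ω (tauUp T M a ω) := by
  set B := ({s ∈ Set.Icc (0 : ℝ) T | a < M ω s} ∪ {T}) with hB
  have hbdd : BddBelow B := tauUp_bddBelow hT ω
  have hne : B.Nonempty := ⟨T, Or.inr rfl⟩
  have hτ : tauUp T M a ω = sInf B := rfl
  have hmem : tauUp T M a ω ∈ closure (B ∩ Set.Iio T) := by
    rw [Metric.mem_closure_iff]
    intro ε hε
    have hlt' : sInf B < sInf B + min ε (T - tauUp T M a ω) := by
      have : 0 < min ε (T - tauUp T M a ω) := lt_min hε (sub_pos.mpr hlt)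
      linarith
    obtain ⟨x, hxB, hxlt⟩ := (csInf_lt_iff hbdd hne).mp hlt'
    have hτx : tauUp T M a ω ≤ x := csInf_le hbdd hxB
    have hxT : x < T := by
      have h1 : min ε (T - tauUp T M a ω) ≤ T - tauUp T M a ω := min_le_right _ _
      rw [← hτ] at hxlt
      linarith
    refine ⟨x, ⟨hxB, hxT⟩, ?_⟩
    have h2 : min ε (T - tauUp T M a ω) ≤ ε := min_le_left _ _
    rw [← hτ] at hxlt
    rw [Real.dist_eq, abs_sub_lt_iff]
    constructor <;> linarith
  have hsub : B ∩ Set.Iio T ⊆ Set.Icc 0 T := by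
    rintro x ⟨hx | hx, _⟩
    · exact hx.1
    · rw [mem_singleton_iff] at hx; rw [hx]; exact ⟨hT, le_refl T⟩
  have hc : ContinuousWithinAt (M ω) (B ∩ Set.Iio T) (tauUp T M a ω) :=
    ((contOn_time hM ω) _ (tauUp_mem hT ω)).mono hsub
  haveI : (nhdsWithin (tauUp T M a ω) (B ∩ Set.Iio T)).NeBot :=
    mem_closure_iff_nhdsWithin_neBot.mp hmem
  refine ge_of_tendsto hc (eventually_mem_nhdsWithin.mono fun x hx => ?_)
  rcases hx.1 with h | h
  · exact h.2.le
  · rw [mem_singleton_iff] at h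
    exact absurd (h ▸ hx.2) (lt_irrefl T)

end Aux

theorem stmt_1 {E : Type*} [MetricSpace E] (T : ℝ) (hT : 0 < T)
    (M : E → ℝ → ℝ)
    (hM : ContinuousOn (fun p : E × ℝ => M p.1 p.2) (Set.univ ×ˢ Set.Icc 0 T))
    (a : ℝ) (t : ℝ) (ht : t ∈ Set.Icc 0 T)
    (ω₀ : E) (hω₀ : M ω₀ (min t (tauUp T M a ω₀)) = a) :
    ContinuousAt (fun ω => M ω (min t (tauUp T M a ω))) ω₀ := by
  have hT0 : (0:ℝ) ≤ T := hT.le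
  have hM0le : M ω₀ 0 ≤ a := by
    rcases eq_or_lt_of_le (le_min ht.1 (tauUp_mem hT0 ω₀).1 :
        (0:ℝ) ≤ min t (tauUp T M a ω₀)) with h | h
    · rw [← h] at hω₀; exact hω₀.le
    · exact le_of_lt_tauUp ⟨le_refl 0, hT0⟩ (h.trans_le (min_le_right _ _))
  rw [Metric.continuousAt_iff]
  intro ε hε
  simp only [hω₀]
  obtain ⟨δ₀, hδ₀pos, hδ₀⟩ :=
    Metric.continuousAt_iff.mp (contAt_slice hM ⟨le_refl (0:ℝ), hT0⟩ ω₀) ε hε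
  have key : ∀ ω : E, tauUp T M a ω < t → dist (M ω 0) (M ω₀ 0) < ε →
      dist (M ω (min t (tauUp T M a ω))) a < ε := by
    intro ω hlt h0
    rw [min_eq_right hlt.le]
    have hτT : tauUp T M a ω < T := hlt.trans_le ht.2
    have hge : a ≤ M ω (tauUp T M a ω) := a_le_at_tau hM hT0 ω hτT
    rcases eq_or_lt_of_le (tauUp_mem hT0 ω).1 with h0τ | h0τ
    · rw [← h0τ] at hge ⊢
      have habs := abs_lt.mp (by rwa [Real.dist_eq] at h0)
      rw [Real.dist_eq, abs_lt]
      constructor <;> [linarith; linarith [habs.2]]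
    · have hle : M ω (tauUp T M a ω) ≤ a :=
        le_a_at hM ω h0τ hτT.le (fun r hr0 hrs =>
          le_of_lt_tauUp ⟨hr0, hrs.le.trans hτT.le⟩ hrs)
      rw [le_antisymm hle hge]
      simpa using hε
  rcases le_or_gt t (tauUp T M a ω₀) with hcase | hcase
  · -- t ≤ τ₀
    have hMt : M ω₀ t = a := by rw [min_eq_left hcase] at hω₀; exact hω₀
    obtain ⟨δ₁, hδ₁pos, hδ₁⟩ := Metric.continuousAt_iff.mp (contAt_slice hM ht ω₀) ε hε
    refine ⟨min δ₀ δ₁, lt_min hδ₀pos hδ₁pos, ?_⟩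
    intro ω hω
    rcases le_or_gt t (tauUp T M a ω) with hc | hc
    · rw [min_eq_left hc]
      have h := hδ₁ (lt_of_lt_of_le hω (min_le_right _ _))
      rwa [hMt] at h
    · exact key ω hc (hδ₀ (lt_of_lt_of_le hω (min_le_left _ _)))
  · -- τ₀ < t
    have hbdd : BddBelow ({s ∈ Set.Icc (0 : ℝ) T | a < M ω₀ s} ∪ {T}) :=
      tauUp_bddBelow hT0 ω₀
    have hcase' : sInf ({s ∈ Set.Icc (0 : ℝ) T | a < M ω₀ s} ∪ {T}) < t := hcase
    obtain ⟨r, hrB, hrt⟩ := (csInf_lt_iff hbdd ⟨T, Or.inr rfl⟩).mp hcase'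
    have hrA : r ∈ Set.Icc (0:ℝ) T ∧ a < M ω₀ r := by
      rcases hrB with h | h
      · exact h
      · rw [mem_singleton_iff] at h
        exact absurd (h ▸ hrt) (not_lt.mpr ht.2)
    obtain ⟨δ₂, hδ₂pos, hδ₂⟩ := Metric.continuousAt_iff.mp
      (contAt_slice hM hrA.1 ω₀) (M ω₀ r - a) (sub_pos.mpr hrA.2)
    refine ⟨min δ₀ δ₂, lt_min hδ₀pos hδ₂pos, ?_⟩
    intro ω hω
    have hgt : a < M ω r := by
      have h1 := hδ₂ (lt_of_lt_of_le hω (min_le_right _ _))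
      have h2 := abs_lt.mp (by rwa [Real.dist_eq] at h1)
      linarith [h2.1]
    have hτω : tauUp T M a ω ≤ r := tauUp_le hrA.1 hgt
    exact key ω (hτω.trans_lt hrt) (hδ₀ (lt_of_lt_of_le hω (min_le_left _ _)))
end

section
/- Fix t ∈ [0,T] and a ∈ ℝ. The map ω ↦ M_{t ∧ τ̲_a(ω)}(ω) is upper semicontinuous on E; equivalently, for every b ∈ ℝ the set {ω ∈ E : M_{t ∧ τ̲_a(ω)}(ω) < b} is open in E. -/
open Set

section Aux

variable {E : Type*} [MetricSpace E] {T : ℝ} {M : E → ℝ → ℝ} {a : ℝ}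

lemma tauAux_nonempty (ω : E) : ({s ∈ Set.Icc (0 : ℝ) T | a ≤ M ω s} ∪ {T}).Nonempty :=
  ⟨T, Or.inr rfl⟩

lemma tauAux_bddBelow (hT : 0 ≤ T) (ω : E) :
    BddBelow ({s ∈ Set.Icc (0 : ℝ) T | a ≤ M ω s} ∪ {T}) := by
  refine ⟨0, fun x hx => ?_⟩
  rcases hx with ⟨⟨h0, _⟩, _⟩ | h
  · exact h0
  · simp only [mem_singleton_iff] at h; exact h ▸ hT

lemma tauLow_nonneg (hT : 0 ≤ T) (ω : E) : 0 ≤ tauLow T M a ω := by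
  refine le_csInf (tauAux_nonempty ω) fun x hx => ?_
  rcases hx with ⟨⟨h0, _⟩, _⟩ | h
  · exact h0
  · simp only [mem_singleton_iff] at h; exact h ▸ hT

lemma tauLow_le_T (hT : 0 ≤ T) (ω : E) : tauLow T M a ω ≤ T :=
  csInf_le (tauAux_bddBelow hT ω) (Or.inr rfl)

lemma lt_a_of_lt_tauLow (hT : 0 ≤ T) {ω : E} {s : ℝ} (hs : s ∈ Set.Icc (0 : ℝ) T)
    (h : s < tauLow T M a ω) : M ω s < a := by
  by_contra hc
  push_neg at hc
  exact absurd (csInf_le (tauAux_bddBelow hT ω) (Or.inl ⟨hs, hc⟩)) (not_le.2 h)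

lemma le_tauLow (hT : 0 ≤ T) {ω : E} {u : ℝ} (hu : u ≤ T)
    (h : ∀ s, 0 ≤ s → s ≤ u → M ω s < a) : u ≤ tauLow T M a ω := by
  refine le_csInf (tauAux_nonempty ω) fun x hx => ?_
  rcases hx with ⟨⟨hx0, _⟩, hxa⟩ | hxT
  · by_contra hlt
    push_neg at hlt
    exact absurd (h x hx0 hlt.le) (not_lt.2 hxa)
  · simp only [mem_singleton_iff] at hxT; exact hxT ▸ hu

lemma contOn_slice (hM : ContinuousOn (fun p : E × ℝ => M p.1 p.2) (Set.univ ×ˢ Set.Icc 0 T))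
    (ω : E) : ContinuousOn (M ω) (Set.Icc (0 : ℝ) T) := by
  have : ContinuousOn ((fun p : E × ℝ => M p.1 p.2) ∘ fun s : ℝ => (ω, s))
      (Set.Icc (0 : ℝ) T) :=
    hM.comp ((continuous_const.prodMk continuous_id).continuousOn)
      (fun s hs => ⟨mem_univ _, hs⟩)
  exact this

lemma tauLow_mem (hT : 0 ≤ T)
    (hM : ContinuousOn (fun p : E × ℝ => M p.1 p.2) (Set.univ ×ˢ Set.Icc 0 T)) (ω : E) :
    tauLow T M a ω ∈ ({s ∈ Set.Icc (0 : ℝ) T | a ≤ M ω s} ∪ {T}) := by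
  have hclosed : IsClosed ({s ∈ Set.Icc (0 : ℝ) T | a ≤ M ω s} ∪ {T}) := by
    have h1 : IsClosed (Set.Icc (0 : ℝ) T ∩ (M ω) ⁻¹' Set.Ici a) :=
      (contOn_slice hM ω).preimage_isClosed_of_isClosed isClosed_Icc isClosed_Ici
    have : {s ∈ Set.Icc (0 : ℝ) T | a ≤ M ω s} = Set.Icc (0 : ℝ) T ∩ (M ω) ⁻¹' Set.Ici a := by
      ext x; simp [Set.mem_sep_iff, and_comm]
    rw [this]
    exact h1.union isClosed_singleton
  exact hclosed.csInf_mem (tauAux_nonempty ω) (tauAux_bddBelow hT ω)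

lemma M_tauLow_le (hT : 0 ≤ T)
    (hM : ContinuousOn (fun p : E × ℝ => M p.1 p.2) (Set.univ ×ˢ Set.Icc 0 T)) {ω : E}
    (h : 0 < tauLow T M a ω) : M ω (tauLow T M a ω) ≤ a := by
  set τ := tauLow T M a ω with hτ
  have hτT : τ ≤ T := tauLow_le_T hT ω
  have hcont : ContinuousWithinAt (M ω) (Set.Icc (0 : ℝ) T) τ :=
    (contOn_slice hM ω) τ ⟨h.le, hτT⟩
  have hsub : Set.Ico (0 : ℝ) τ ⊆ Set.Icc (0 : ℝ) T :=
    fun x hx => ⟨hx.1, hx.2.le.trans hτT⟩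
  have htend : Filter.Tendsto (M ω) (nhdsWithin τ (Set.Ico (0 : ℝ) τ)) (nhds (M ω τ)) :=
    (hcont.mono hsub)
  haveI : (nhdsWithin τ (Set.Ico (0 : ℝ) τ)).NeBot := by
    rw [← mem_closure_iff_nhdsWithin_neBot, closure_Ico (ne_of_lt h)]
    exact ⟨h.le, le_refl _⟩
  refine le_of_tendsto htend ?_
  filter_upwards [self_mem_nhdsWithin] with s hs
  exact (lt_a_of_lt_tauLow hT ⟨hs.1, hs.2.le.trans hτT⟩ hs.2).le

lemma exists_open_eq (hM : ContinuousOn (fun p : E × ℝ => M p.1 p.2) (Set.univ ×ˢ Set.Icc 0 T))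
    (c : ℝ) : ∃ W : Set (E × ℝ), IsOpen W ∧
      (fun p : E × ℝ => M p.1 p.2) ⁻¹' Set.Iio c ∩ (Set.univ ×ˢ Set.Icc 0 T) =
        W ∩ (Set.univ ×ˢ Set.Icc 0 T) :=
  continuousOn_iff'.mp hM (Set.Iio c) isOpen_Iio

lemma tube_bound (hM : ContinuousOn (fun p : E × ℝ => M p.1 p.2) (Set.univ ×ˢ Set.Icc 0 T))
    {u c : ℝ} (hu : u ∈ Set.Icc (0 : ℝ) T) (ω₀ : E)
    (h : ∀ s ∈ Set.Icc (0 : ℝ) u, M ω₀ s < c) :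
    ∃ U ∈ nhds ω₀, ∀ ω ∈ U, ∀ s ∈ Set.Icc (0 : ℝ) u, M ω s < c := by
  obtain ⟨W, hWo, hWe⟩ := exists_open_eq hM c
  have hsub : ({ω₀} : Set E) ×ˢ Set.Icc (0 : ℝ) u ⊆ W := by
    rintro ⟨ω, s⟩ ⟨hω, hs⟩
    simp only [mem_singleton_iff] at hω
    have hmem : (ω, s) ∈ (fun p : E × ℝ => M p.1 p.2) ⁻¹' Set.Iio c ∩
        (Set.univ ×ˢ Set.Icc 0 T) :=
      ⟨by rw [hω]; exact h s hs, ⟨mem_univ _, ⟨hs.1, hs.2.trans hu.2⟩⟩⟩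
    rw [hWe] at hmem
    exact hmem.1
  obtain ⟨U, V, hUo, _, hU1, hV1, hUV⟩ :=
    generalized_tube_lemma isCompact_singleton isCompact_Icc hWo hsub
  refine ⟨U, hUo.mem_nhds (hU1 rfl), fun ω hω s hs => ?_⟩
  have hmem : (ω, s) ∈ W ∩ (Set.univ ×ˢ Set.Icc 0 T) :=
    ⟨hUV ⟨hω, hV1 hs⟩, ⟨mem_univ _, ⟨hs.1, hs.2.trans hu.2⟩⟩⟩
  rw [← hWe] at hmem
  exact hmem.1

lemma local_bound (hM : ContinuousOn (fun p : E × ℝ => M p.1 p.2) (Set.univ ×ˢ Set.Icc 0 T))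
    {s₀ c : ℝ} (hs₀ : s₀ ∈ Set.Icc (0 : ℝ) T) (ω₀ : E) (h : M ω₀ s₀ < c) :
    ∃ δ > 0, ∃ U ∈ nhds ω₀, ∀ ω ∈ U, ∀ s ∈ Set.Icc (0 : ℝ) T, |s - s₀| ≤ δ → M ω s < c := by
  obtain ⟨W, hWo, hWe⟩ := exists_open_eq hM c
  have hmem : (ω₀, s₀) ∈ W := by
    have : (ω₀, s₀) ∈ (fun p : E × ℝ => M p.1 p.2) ⁻¹' Set.Iio c ∩
        (Set.univ ×ˢ Set.Icc 0 T) := ⟨h, ⟨mem_univ _, hs₀⟩⟩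
    rw [hWe] at this
    exact this.1
  obtain ⟨ε, hε, hball⟩ := Metric.isOpen_iff.mp hWo _ hmem
  refine ⟨ε / 2, by positivity, Metric.ball ω₀ (ε / 2),
    Metric.ball_mem_nhds _ (by positivity), fun ω hω s hs hd => ?_⟩
  have hW : (ω, s) ∈ W := by
    apply hball
    rw [Metric.mem_ball, Prod.dist_eq]
    apply max_lt
    · exact lt_of_lt_of_le (Metric.mem_ball.mp hω) (by linarith)
    · rw [Real.dist_eq]; linarith [hd]
  have hmem2 : (ω, s) ∈ W ∩ (Set.univ ×ˢ Set.Icc 0 T) := ⟨hW, ⟨mem_univ _, hs⟩⟩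
  rw [← hWe] at hmem2
  exact hmem2.1

lemma cont_eval (hM : ContinuousOn (fun p : E × ℝ => M p.1 p.2) (Set.univ ×ˢ Set.Icc 0 T))
    {t : ℝ} (ht : t ∈ Set.Icc (0 : ℝ) T) : Continuous fun ω : E => M ω t :=
  hM.comp_continuous (continuous_id.prodMk continuous_const) (fun ω => ⟨mem_univ _, ht⟩)

end Aux

theorem stmt_2 {E : Type*} [MetricSpace E] (T : ℝ) (hT : 0 < T)
    (M : E → ℝ → ℝ)
    (hM : ContinuousOn (fun p : E × ℝ => M p.1 p.2) (Set.univ ×ˢ Set.Icc 0 T))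
    (a : ℝ) (t : ℝ) (ht : t ∈ Set.Icc 0 T) :
    UpperSemicontinuous (fun ω => M ω (min t (tauLow T M a ω))) ∧
      ∀ b : ℝ, IsOpen {ω : E | M ω (min t (tauLow T M a ω)) < b} := by
  have hT0 : (0 : ℝ) ≤ T := hT.le
  have key : ∀ b : ℝ, IsOpen {ω : E | M ω (min t (tauLow T M a ω)) < b} := by
    intro b
    rw [isOpen_iff_mem_nhds]
    intro ω₀ h₀
    simp only [mem_setOf_eq] at h₀
    have hτ₀0 : 0 ≤ tauLow T M a ω₀ := tauLow_nonneg hT0 ω₀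
    have hτ₀T : tauLow T M a ω₀ ≤ T := tauLow_le_T hT0 ω₀
    set τ₀ := tauLow T M a ω₀ with hτ₀def
    set σ₀ := min t τ₀ with hσ₀def
    have hσ₀mem : σ₀ ∈ Set.Icc (0 : ℝ) T :=
      ⟨le_min ht.1 hτ₀0, (min_le_left _ _).trans ht.2⟩
    by_cases hcase : M ω₀ σ₀ < a
    · -- Case A : value below `a`; then `σ₀ = t` and `M ω₀ < a` on `[0, t]`.
      have hσt : σ₀ = t := by
        rcases le_total t τ₀ with h | h
        · exact min_eq_left h
        · have hσ : σ₀ = τ₀ := min_eq_right h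
          rcases tauLow_mem hT0 hM ω₀ with hmem | hmem
          · exact absurd hmem.2 (not_le.2 (hσ ▸ hcase))
          · simp only [mem_singleton_iff] at hmem
            have hTt : t = T := le_antisymm ht.2 (hmem ▸ h)
            rw [hσ, show τ₀ = T from hτ₀def.trans hmem]
            exact hTt.symm
      have ht_le : t ≤ τ₀ := min_eq_left_iff.mp (hσ₀def ▸ hσt)
      have hAa : ∀ s, 0 ≤ s → s ≤ t → M ω₀ s < a := by
        intro s h0 hst
        rcases lt_or_eq_of_le hst with hlt | heq
        · exact lt_a_of_lt_tauLow hT0 ⟨h0, hst.trans ht.2⟩ (lt_of_lt_of_le hlt ht_le)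
        · rw [heq, ← hσt]; exact hcase
      obtain ⟨U₁, hU₁n, hU₁⟩ := tube_bound hM ht ω₀ (fun s hs => hAa s hs.1 hs.2)
      have hcont := cont_eval hM ht
      have hU₂n : {ω : E | M ω t < b} ∈ nhds ω₀ :=
        (isOpen_Iio.preimage hcont).mem_nhds (by simpa [hσt] using h₀)
      refine Filter.mem_of_superset (Filter.inter_mem hU₁n hU₂n) ?_
      rintro ω ⟨hω1, hω2⟩
      have hτω : t ≤ tauLow T M a ω :=
        le_tauLow hT0 ht.2 (fun s h0 hs => hU₁ ω hω1 s ⟨h0, hs⟩)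
      simp only [mem_setOf_eq, min_eq_left hτω]
      exact hω2
    · -- Case B : `a ≤ M ω₀ σ₀ < b`, hence `σ₀ = τ₀`.
      push_neg at hcase
      have hab : a < b := lt_of_le_of_lt hcase h₀
      have hστ : σ₀ = τ₀ := by
        rcases lt_or_ge t τ₀ with h | h
        · exfalso
          have hσ : σ₀ = t := min_eq_left h.le
          have : M ω₀ t < a := lt_a_of_lt_tauLow hT0 ht h
          rw [← hσ] at this
          exact absurd hcase (not_le.2 this)
        · exact min_eq_right h
      have hs₀t : τ₀ ≤ t := hστ ▸ min_le_left t τ₀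
      obtain ⟨δ, hδ, U₁, hU₁n, hU₁⟩ :=
        local_bound hM ⟨hτ₀0, hτ₀T⟩ ω₀ (by rw [← hστ]; exact h₀)
      have hP : ∃ U₂ ∈ nhds ω₀, ∀ ω ∈ U₂, ∀ s, 0 ≤ s → s ≤ τ₀ - δ → M ω s < a := by
        by_cases hpos : 0 ≤ τ₀ - δ
        · obtain ⟨U₂, hn, hU₂⟩ := tube_bound hM (c := a) ⟨hpos, by linarith⟩ ω₀
            (fun s hs => lt_a_of_lt_tauLow hT0 ⟨hs.1, by linarith [hs.2]⟩
              (by linarith [hs.2]))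
          exact ⟨U₂, hn, fun ω hω s h0 h1 => hU₂ ω hω s ⟨h0, h1⟩⟩
        · push_neg at hpos
          exact ⟨Set.univ, Filter.univ_mem, fun ω _ s h0 h1 => absurd (h0.trans h1)
            (not_le.2 hpos)⟩
      obtain ⟨U₂, hU₂n, hU₂⟩ := hP
      refine Filter.mem_of_superset (Filter.inter_mem hU₁n hU₂n) ?_
      rintro ω ⟨hω1, hω2⟩
      simp only [mem_setOf_eq]
      have hτ0 : 0 ≤ tauLow T M a ω := tauLow_nonneg hT0 ω
      have hτT : tauLow T M a ω ≤ T := tauLow_le_T hT0 ω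
      set τ := tauLow T M a ω with hτdef
      have hτlb : τ₀ - δ ≤ τ := by
        refine le_csInf (tauAux_nonempty ω) fun x hx => ?_
        rcases hx with ⟨⟨hx0, _⟩, hxa⟩ | hxT
        · by_contra hlt
          push_neg at hlt
          exact absurd (hU₂ ω hω2 x hx0 hlt.le) (not_lt.2 hxa)
        · simp only [mem_singleton_iff] at hxT
          rw [hxT]; linarith
      set σ := min t τ with hσdef
      have hσ0 : 0 ≤ σ := le_min ht.1 hτ0
      have hσT : σ ≤ T := (min_le_left _ _).trans ht.2
      have hσlb : τ₀ - δ ≤ σ := le_min (by linarith) hτlb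
      by_cases hσub : σ ≤ τ₀ + δ
      · exact hU₁ ω hω1 σ ⟨hσ0, hσT⟩ (abs_le.mpr ⟨by linarith, by linarith⟩)
      · push_neg at hσub
        rcases le_or_gt τ t with hh | hh
        · have hστ' : σ = τ := min_eq_right hh
          have hτpos : 0 < τ := by rw [← hστ']; linarith
          have := M_tauLow_le hT0 hM (a := a) (ω := ω) hτpos
          rw [hστ']
          exact lt_of_le_of_lt this hab
        · have hσt : σ = t := min_eq_left hh.le
          have : M ω t < a := lt_a_of_lt_tauLow hT0 ht hh
          rw [hσt]
          linarith
  refine ⟨?_, key⟩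
  intro ω₀ b hb
  exact Filter.eventually_of_mem ((key b).mem_nhds hb) (fun ω h => h)
end

section
/- Fix t ∈ [0,T] and a ∈ ℝ. The map ω ↦ M_{t ∧ τ̄_a(ω)}(ω) is lower semicontinuous on E; equivalently, for every b ∈ ℝ the set {ω ∈ E : M_{t ∧ τ̄_a(ω)}(ω) > b} is open in E. -/
open Set Filter Topology

theorem stmt_3 {E : Type*} [MetricSpace E] (T : ℝ) (hT : 0 < T)
    (M : E → ℝ → ℝ)
    (hM : ContinuousOn (fun p : E × ℝ => M p.1 p.2) (Set.univ ×ˢ Set.Icc 0 T))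
    (a : ℝ) (t : ℝ) (ht : t ∈ Set.Icc 0 T) :
    LowerSemicontinuous (fun ω => M ω (min t (tauUp T M a ω))) ∧
      ∀ b : ℝ, IsOpen {ω : E | b < M ω (min t (tauUp T M a ω))} := by
  set S : E → Set ℝ := fun ω => {s ∈ Set.Icc (0 : ℝ) T | a < M ω s} ∪ {T} with hS
  have hτdef : ∀ ω, tauUp T M a ω = sInf (S ω) := fun ω => rfl
  have hne : ∀ ω, (S ω).Nonempty := fun ω => ⟨T, Or.inr rfl⟩
  have hbdd : ∀ ω, BddBelow (S ω) := by
    intro ω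
    refine ⟨0, ?_⟩
    rintro s (⟨⟨h0, _⟩, _⟩ | rfl)
    · exact h0
    · exact hT.le
  have hτ0 : ∀ ω, 0 ≤ tauUp T M a ω := fun ω => le_csInf (hne ω) (fun s hs => by
    rcases hs with ⟨⟨h0, _⟩, _⟩ | rfl
    · exact h0
    · exact hT.le)
  have hτT : ∀ ω, tauUp T M a ω ≤ T := fun ω => csInf_le (hbdd ω) (Or.inr rfl)
  -- continuity in ω for fixed time
  have hMcE : ∀ s : ℝ, s ∈ Set.Icc (0:ℝ) T → Continuous (fun ω => M ω s) := by
    intro s hs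
    exact hM.comp_continuous (continuous_id.prodMk continuous_const)
      (fun ω => ⟨trivial, hs⟩)
  -- continuity in time for fixed ω
  have hMc : ∀ ω : E, ContinuousOn (fun s => M ω s) (Set.Icc 0 T) := by
    intro ω
    exact hM.comp ((continuous_const.prodMk continuous_id).continuousOn)
      (fun s hs => ⟨trivial, hs⟩)
  -- before the hitting time, M ≤ a
  have hle : ∀ ω s, s ∈ Set.Icc (0:ℝ) T → s < tauUp T M a ω → M ω s ≤ a := by
    intro ω s hs hlt
    by_contra hgt
    exact absurd (csInf_le (hbdd ω) (Or.inl ⟨hs, not_le.1 hgt⟩)) (not_le.2 hlt)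
  -- if τ > 0 then M ω τ ≤ a (left limit)
  have hL1 : ∀ ω, 0 < tauUp T M a ω → M ω (tauUp T M a ω) ≤ a := by
    intro ω hpos
    set τ := tauUp T M a ω with hτ
    by_contra hgt
    push_neg at hgt
    have hmem : τ ∈ Set.Icc (0:ℝ) T := ⟨hτ0 ω, hτT ω⟩
    have hcw : ContinuousWithinAt (fun s => M ω s) (Set.Ico 0 τ) τ :=
      ((hMc ω) τ hmem).mono (fun s hs => ⟨hs.1, hs.2.le.trans (hτT ω)⟩)
    have hev : ∀ᶠ s in 𝓝[Set.Ico 0 τ] τ, a < M ω s := hcw (Ioi_mem_nhds hgt)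
    have hnb : (𝓝[Set.Ico 0 τ] τ).NeBot := right_nhdsWithin_Ico_neBot hpos
    obtain ⟨s, hsev, hsmem⟩ := (hev.and (eventually_mem_nhdsWithin)).exists
    exact absurd (csInf_le (hbdd ω) (Or.inl ⟨⟨hsmem.1, hsmem.2.le.trans (hτT ω)⟩, hsev⟩))
      (not_le.2 hsmem.2)
  -- if τ < T then M ω τ ≥ a (right limit from the hitting set)
  have hL2 : ∀ ω, tauUp T M a ω < T → a ≤ M ω (tauUp T M a ω) := by
    intro ω hlt
    set τ := tauUp T M a ω with hτ
    by_contra hgt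
    push_neg at hgt
    have hmem : τ ∈ Set.Icc (0:ℝ) T := ⟨hτ0 ω, hτT ω⟩
    have hcw : ContinuousWithinAt (fun s => M ω s) (Set.Icc 0 T) τ := (hMc ω) τ hmem
    rw [Metric.continuousWithinAt_iff] at hcw
    obtain ⟨δ, hδ, hball⟩ := hcw (a - M ω τ) (by linarith)
    -- pick s in the hitting set with τ ≤ s < τ + min δ (T - τ)
    have hεpos : 0 < min δ (T - τ) := lt_min hδ (by linarith)
    have hsInf : sInf (S ω) < τ + min δ (T - τ) := by
      rw [← hτdef ω, ← hτ]; linarith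
    obtain ⟨s, hsS, hslt⟩ := exists_lt_of_csInf_lt (hne ω) hsInf
    have hτs : τ ≤ s := by rw [hτ, hτdef ω]; exact csInf_le (hbdd ω) hsS
    have hsT : s < T := lt_of_lt_of_le hslt (by
      have := min_le_right δ (T - τ); linarith)
    rcases hsS with ⟨hsI, hsM⟩ | rfl
    · have hdist : dist s τ < δ := by
        rw [Real.dist_eq, abs_of_nonneg (by linarith)]
        have := min_le_left δ (T - τ); linarith
      have := hball hsI hdist
      rw [Real.dist_eq] at this
      have := abs_lt.1 this
      linarith
    · exact absurd rfl (ne_of_lt hsT)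
  -- openness of {τ < t}
  have hopenτ : IsOpen {ω : E | tauUp T M a ω < t} := by
    rw [isOpen_iff_mem_nhds]
    intro ω₀ hω₀
    have h1 : sInf (S ω₀) < t := hω₀
    obtain ⟨s, hsS, hst⟩ := exists_lt_of_csInf_lt (hne ω₀) h1
    rcases hsS with ⟨hsI, hsM⟩ | rfl
    · have hmem : {ω : E | a < M ω s} ∈ 𝓝 ω₀ :=
        (isOpen_lt continuous_const (hMcE s hsI)).mem_nhds hsM
      filter_upwards [hmem] with ω hω
      exact lt_of_le_of_lt (csInf_le (hbdd ω) (Or.inl ⟨hsI, hω⟩)) hst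
    · exact absurd hst (not_lt.2 ht.2)
  -- the main openness statement
  have main : ∀ b : ℝ, IsOpen {ω : E | b < M ω (min t (tauUp T M a ω))} := by
    intro b
    rcases le_or_gt a b with hab | hab
    · have heq : {ω : E | b < M ω (min t (tauUp T M a ω))} = {ω : E | b < M ω 0} := by
        ext ω
        simp only [Set.mem_setOf_eq]
        constructor
        · intro h
          have hmin : min t (tauUp T M a ω) = 0 := by
            by_contra hne0
            have hpos : 0 < min t (tauUp T M a ω) :=
              lt_of_le_of_ne (le_min ht.1 (hτ0 ω)) (Ne.symm hne0)
            rcases lt_or_eq_of_le (min_le_right t (tauUp T M a ω)) with hlt | heq2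
            · exact absurd (hle ω _ ⟨hpos.le, (min_le_left _ _).trans ht.2⟩ hlt)
                (not_le.2 (lt_of_le_of_lt hab h))
            · rw [heq2] at h hpos
              exact absurd (hL1 ω hpos) (not_le.2 (lt_of_le_of_lt hab h))
          rwa [hmin] at h
        · intro h
          have hτz : tauUp T M a ω = 0 :=
            le_antisymm (csInf_le (hbdd ω) (Or.inl ⟨⟨le_refl 0, hT.le⟩, lt_of_le_of_lt hab h⟩))
              (hτ0 ω)
          rw [hτz, min_eq_right ht.1]
          exact h
      rw [heq]
      exact isOpen_lt continuous_const (hMcE 0 ⟨le_refl 0, hT.le⟩)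
    · have heq : {ω : E | b < M ω (min t (tauUp T M a ω))} =
          {ω : E | tauUp T M a ω < t} ∪ {ω : E | b < M ω t} := by
        ext ω
        simp only [Set.mem_setOf_eq, Set.mem_union]
        constructor
        · intro h
          rcases lt_or_ge (tauUp T M a ω) t with h1 | h1
          · exact Or.inl h1
          · right; rwa [min_eq_left h1] at h
        · rintro (h1 | h1)
          · rw [min_eq_right h1.le]
            exact lt_of_lt_of_le hab (hL2 ω (lt_of_lt_of_le h1 ht.2))
          · rcases lt_or_ge (tauUp T M a ω) t with h2 | h2
            · rw [min_eq_right h2.le]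
              exact lt_of_lt_of_le hab (hL2 ω (lt_of_lt_of_le h2 ht.2))
            · rwa [min_eq_left h2]
      rw [heq]
      exact hopenτ.union (isOpen_lt continuous_const (hMcE t ht))
  refine ⟨?_, main⟩
  rw [lowerSemicontinuous_iff_isOpen_preimage]
  intro y
  exact main y
end

section
/- For every closed set F ⊆ Ω one has c(F) = inf{ c(O) : O ⊆ Ω open, F ⊆ O }. -/
open MeasureTheory Filter Metric Topology ENNReal NNReal

/-- For a nonempty set `𝔓` of Borel probability measures on a metric space `Ω` which is
compact in the topology of weak convergence, the capacity `c(A) := ⨆ P ∈ 𝔓, P(A)` of any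
closed set `F` equals the infimum of the capacities of open sets containing `F`. -/
theorem stmt_6 {Ω : Type*} [MetricSpace Ω] [MeasurableSpace Ω] [BorelSpace Ω]
    (𝔓 : Set (ProbabilityMeasure Ω)) (h𝔓 : 𝔓.Nonempty) (hcomp : IsCompact 𝔓)
    (F : Set Ω) (hF : IsClosed F) :
    (⨆ P ∈ 𝔓, (P : Measure Ω) F) =
      ⨅ O ∈ {O : Set Ω | IsOpen O ∧ F ⊆ O}, ⨆ P ∈ 𝔓, (P : Measure Ω) O := by
  set c : Set Ω → ℝ≥0∞ := fun A => ⨆ P ∈ 𝔓, (P : Measure Ω) A with hc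
  apply le_antisymm
  · refine le_iInf₂ fun O hO => ?_
    exact iSup₂_mono fun P _ => measure_mono hO.2
  -- the hard direction
  set G : ℕ → Set Ω := fun n => thickening (1 / (n + 1)) F with hG
  set K : ℕ → Set Ω := fun n => cthickening (1 / (n + 1)) F with hK
  have hGopen : ∀ n, IsOpen (G n) := fun n => isOpen_thickening
  have hGsub : ∀ n, F ⊆ G n := fun n =>
    self_subset_thickening (by positivity) F
  have hGK : ∀ m n : ℕ, m ≤ n → G n ⊆ K m := by
    intro m n hmn
    refine (thickening_subset_cthickening _ _).trans (cthickening_mono ?_ _)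
    have h1 : (m:ℝ) ≤ n := by exact_mod_cast hmn
    gcongr
  set L : ℝ≥0∞ := ⨅ n : ℕ, c (G n) with hL
  have h1 : (⨅ O ∈ {O : Set Ω | IsOpen O ∧ F ⊆ O}, c O) ≤ L :=
    le_iInf fun n => iInf₂_le (G n) ⟨hGopen n, hGsub n⟩
  refine h1.trans ?_
  -- Now show L ≤ c F.
  rcases eq_or_ne L 0 with h0 | hL0
  · simp [h0]
  have hLtop : L ≠ ∞ := by
    have h2 : c (G 0) ≤ 1 := iSup₂_le fun P _ => prob_le_one
    exact ne_top_of_le_ne_top ENNReal.one_ne_top (le_trans (iInf_le _ 0) h2)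
  apply ENNReal.le_of_forall_pos_le_add
  intro ε hε _
  rw [← tsub_le_iff_right]
  have hεpos : (0:ℝ≥0∞) < ε := by exact_mod_cast hε
  have hsub_lt : L - ε < L := ENNReal.sub_lt_self hLtop hL0 hεpos.ne'
  -- choose P n with (P n) (G n) > L - ε
  have hchoice : ∀ n : ℕ, ∃ P ∈ 𝔓, L - ε < (P : Measure Ω) (G n) := by
    intro n
    have h3 : L - ε < ⨆ P ∈ 𝔓, (P : Measure Ω) (G n) := hsub_lt.trans_le (iInf_le _ n)
    obtain ⟨P, hP⟩ := lt_iSup_iff.mp h3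
    obtain ⟨hPm, hlt⟩ := lt_iSup_iff.mp hP
    exact ⟨P, hPm, hlt⟩
  choose Ps hPs hPs' using hchoice
  -- a cluster point along an ultrafilter
  obtain ⟨V, hu⟩ := Ultrafilter.exists_le (atTop : Filter ℕ)
  obtain ⟨P, hPmem, hPlim⟩ := hcomp.ultrafilter_le_nhds (V.map Ps)
    (by
      simp only [Ultrafilter.coe_map]
      exact Filter.le_principal_iff.mpr
        (Filter.mem_map.mpr (Filter.univ_mem' fun n => hPs n)))
  have hTendsto : Tendsto Ps (V : Filter ℕ) (𝓝 P) := hPlim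
  -- for each m, P (K m) ≥ L - ε
  have hKey : ∀ m : ℕ, L - ε ≤ (P : Measure Ω) (K m) := by
    intro m
    have hc1 : (V : Filter ℕ).limsup (fun n => (Ps n : Measure Ω) (K m)) ≤ (P : Measure Ω) (K m) :=
      ProbabilityMeasure.limsup_measure_closed_le_of_tendsto hTendsto isClosed_cthickening
    refine le_trans ?_ hc1
    have hev : ∀ᶠ n in (V : Filter ℕ), L - ε ≤ (Ps n : Measure Ω) (K m) := by
      have : ∀ᶠ n in atTop, L - ε ≤ (Ps n : Measure Ω) (K m) := by
        filter_upwards [eventually_ge_atTop m] with n hn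
        exact le_trans (hPs' n).le (measure_mono (hGK m n hn))
      exact this.filter_mono hu
    calc L - ε = (V : Filter ℕ).limsup (fun _ => L - ε) := by
          rw [limsup_const]
      _ ≤ (V : Filter ℕ).limsup fun n => (Ps n : Measure Ω) (K m) :=
          limsup_le_limsup hev
  -- P (K m) → P F, so L - ε ≤ P F
  have hmeas : Tendsto (fun r : ℝ => (P : Measure Ω) (cthickening r F)) (𝓝 0)
      (𝓝 ((P : Measure Ω) F)) :=
    tendsto_measure_cthickening_of_isClosed
      ⟨1, one_pos, measure_ne_top _ _⟩ hF
  have hseq : Tendsto (fun n : ℕ => (1 : ℝ) / (n + 1)) atTop (𝓝 0) :=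
    tendsto_one_div_add_atTop_nhds_zero_nat
  have hKlim : Tendsto (fun m : ℕ => (P : Measure Ω) (K m)) atTop (𝓝 ((P : Measure Ω) F)) :=
    hmeas.comp hseq
  have hPF : L - ε ≤ (P : Measure Ω) F := ge_of_tendsto' hKlim hKey
  exact hPF.trans (le_iSup₂ (f := fun (P : ProbabilityMeasure Ω) (_ : P ∈ 𝔓) =>
    (P : Measure Ω) F) P hPmem)
end

section
/- For every stopping time σ with σ ≤ T and all real numbers n > 0 and δ > 0, one has E[|M_σ|^p · 1_{{|M_σ| > n}}] ≤ δ^p n^{-p} E[|M_T|^p] + E[|M_T|^p · 1_{{|M_T| > δ}}]. -/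
open MeasureTheory Set Filter Topology
open scoped ENNReal NNReal

lemma young_aux {p : ℝ} (hp : 1 ≤ p) {c t : ℝ} (hc : 0 ≤ c) (ht : 0 ≤ t) :
    c ^ (p - 1) * t ≤ (1 - 1/p) * c ^ p + (1/p) * t ^ p := by
  rcases eq_or_lt_of_le hp with hp1 | hp1
  · rw [← hp1]; simp
  · have hne : p - 1 ≠ 0 := by linarith
    have hpne : p ≠ 0 := by linarith
    have hq : ((p/(p-1)) : ℝ).HolderConjugate p :=
      ((Real.holderConjugate_iff_eq_conjExponent hp1).2 rfl).symm
    have := Real.young_inequality_of_nonneg (Real.rpow_nonneg hc (p-1)) ht hq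
    rw [← Real.rpow_mul hc] at this
    have hexp : (p - 1) * (p / (p - 1)) = p := by field_simp
    rw [hexp] at this
    refine this.trans (le_of_eq ?_)
    rw [div_div_eq_mul_div, div_eq_mul_inv, div_eq_mul_inv]
    ring_nf
    rw [mul_comm]
    congr 1
    field_simp

lemma rpow_sub_one_mul {p : ℝ} (hp : 1 ≤ p) {c : ℝ} (hc : 0 ≤ c) :
    c ^ (p - 1) * c = c ^ p := by
  rcases eq_or_lt_of_le hc with hc0 | hc0
  · rw [← hc0]
    rw [Real.zero_rpow (by linarith : p ≠ 0), mul_zero]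
  · rw [← Real.rpow_add_one hc0.ne' (p - 1), sub_add_cancel]

lemma jensen_condexp_rpow {Ω : Type*} {m mΩ : MeasurableSpace Ω} (hm : m ≤ mΩ)
    {P : Measure Ω} [IsProbabilityMeasure P]
    {p : ℝ} (hp : 1 ≤ p) {X : Ω → ℝ} (hXi : Integrable X P)
    (hXp : Integrable (fun ω => |X ω| ^ p) P)
    {A : Set Ω} (hA : MeasurableSet[m] A) :
    ∫⁻ ω in A, ENNReal.ofReal ((P[(fun ω => |X ω|) | m]) ω ^ p) ∂P ≤
      ∫⁻ ω in A, ENNReal.ofReal (|X ω| ^ p) ∂P := by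
  haveI : SigmaFinite (P.trim hm) := by
    have : IsFiniteMeasure (P.trim hm) := isFiniteMeasure_trim hm
    infer_instance
  have hp0 : (0:ℝ) < p := by linarith
  set R := P[(fun ω => |X ω|) | m] with hR
  have hR_meas : StronglyMeasurable[m] R := stronglyMeasurable_condExp
  have hR_int : Integrable R P := integrable_condExp
  have hR_nn : 0 ≤ᵐ[P] R := condExp_nonneg (ae_of_all _ fun ω => abs_nonneg _)
  set Rp := fun ω => max (R ω) 0 with hRp
  have hRp_eq : (fun ω => Rp ω) =ᵐ[P] R := by
    filter_upwards [hR_nn] with ω h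
    have : (0:ℝ) ≤ R ω := h
    simpa [Rp] using max_eq_left this
  have hRp_meas : StronglyMeasurable[m] Rp :=
    (hR_meas.measurable.max measurable_const).stronglyMeasurable
  have hRp_int : Integrable Rp P := hR_int.congr hRp_eq.symm
  have hRp_nn : ∀ ω, 0 ≤ Rp ω := fun ω => le_max_right _ _
  have hAm : MeasurableSet[mΩ] A := hm _ hA
  -- main truncated estimate
  have key : ∀ K : ℝ, 0 ≤ K →
      ∫⁻ ω in A, ENNReal.ofReal ((min (Rp ω) K) ^ p) ∂P ≤
        ∫⁻ ω in A, ENNReal.ofReal (|X ω| ^ p) ∂P := by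
    intro K hK
    set W := fun ω => (min (Rp ω) K) ^ (p - 1) with hW
    have hmin_nn : ∀ ω, 0 ≤ min (Rp ω) K := fun ω => le_min (hRp_nn ω) hK
    have hmin_meas : StronglyMeasurable[m] (fun ω => min (Rp ω) K) :=
      (hRp_meas.measurable.min measurable_const).stronglyMeasurable
    have hW_meas : StronglyMeasurable[m] W :=
      (((Real.continuous_rpow_const (by linarith : (0:ℝ) ≤ p - 1)).measurable).comp
        hmin_meas.measurable).stronglyMeasurable
    have hW_nn : ∀ ω, 0 ≤ W ω := fun ω => Real.rpow_nonneg (hmin_nn ω) _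
    have hW_bdd : ∀ ω, ‖W ω‖ ≤ K ^ (p - 1) := by
      intro ω
      rw [Real.norm_eq_abs, abs_of_nonneg (hW_nn ω)]
      exact Real.rpow_le_rpow (hmin_nn ω) (min_le_right _ _) (by linarith)
    have hWX_int : Integrable (fun ω => W ω * |X ω|) P :=
      hXi.abs.bdd_mul ((hW_meas.mono hm).aestronglyMeasurable) (ae_of_all _ hW_bdd)
    have h_pull : P[(fun ω => W ω * |X ω|) | m] =ᵐ[P] fun ω => W ω * R ω := by
      have := condExp_stronglyMeasurable_mul_of_bound hm hW_meas hXi.abs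
        (K ^ (p - 1)) (ae_of_all _ hW_bdd)
      exact this
    have h_int_eq : ∫ ω in A, W ω * |X ω| ∂P = ∫ ω in A, W ω * R ω ∂P := by
      rw [← setIntegral_condExp hm hWX_int hA]
      exact setIntegral_congr_ae hAm (h_pull.mono fun ω h _ => h)
    -- integrability facts
    have hminp_int : Integrable (fun ω => (min (Rp ω) K) ^ p) P := by
      refine Integrable.mono' (integrable_const (K ^ p))
        ((((Real.continuous_rpow_const hp0.le).measurable.comp
          hmin_meas.measurable).stronglyMeasurable.mono hm)).aestronglyMeasurable
        (ae_of_all _ fun ω => ?_)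
      rw [Real.norm_eq_abs, abs_of_nonneg (Real.rpow_nonneg (hmin_nn ω) _)]
      exact Real.rpow_le_rpow (hmin_nn ω) (min_le_right _ _) (le_of_lt hp0)
    have hWRp_int : Integrable (fun ω => W ω * Rp ω) P :=
      hRp_int.bdd_mul ((hW_meas.mono hm).aestronglyMeasurable) (ae_of_all _ hW_bdd)
    have step1 : ∫ ω in A, (min (Rp ω) K) ^ p ∂P ≤ ∫ ω in A, W ω * Rp ω ∂P := by
      refine setIntegral_mono_on hminp_int.integrableOn hWRp_int.integrableOn hAm
        (fun ω _ => ?_)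
      rw [← rpow_sub_one_mul hp (hmin_nn ω)]
      exact mul_le_mul_of_nonneg_left (min_le_left _ _) (hW_nn ω)
    have step2 : ∫ ω in A, W ω * Rp ω ∂P = ∫ ω in A, W ω * |X ω| ∂P := by
      rw [h_int_eq]
      refine setIntegral_congr_ae hAm ?_
      filter_upwards [hRp_eq] with ω h _
      rw [h]
    have step3 : ∫ ω in A, W ω * |X ω| ∂P ≤
        ∫ ω in A, ((1 - 1/p) * (min (Rp ω) K) ^ p + (1/p) * |X ω| ^ p) ∂P := by
      refine setIntegral_mono_on hWX_int.integrableOn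
        ((hminp_int.const_mul _).add (hXp.const_mul _)).integrableOn hAm (fun ω _ => ?_)
      exact young_aux hp (hmin_nn ω) (abs_nonneg _)
    have step4 : ∫ ω in A, ((1 - 1/p) * (min (Rp ω) K) ^ p + (1/p) * |X ω| ^ p) ∂P
        = (1 - 1/p) * ∫ ω in A, (min (Rp ω) K) ^ p ∂P + (1/p) * ∫ ω in A, |X ω| ^ p ∂P := by
      rw [integral_add ((hminp_int.const_mul _).integrableOn) ((hXp.const_mul _).integrableOn),
        integral_const_mul, integral_const_mul]
    set u := ∫ ω in A, (min (Rp ω) K) ^ p ∂P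
    set v := ∫ ω in A, |X ω| ^ p ∂P
    have : u ≤ (1 - 1/p) * u + (1/p) * v := by
      calc u ≤ _ := step1
        _ = _ := step2
        _ ≤ _ := step3
        _ = _ := step4
    have h1p : (0:ℝ) < 1/p := by positivity
    have huv : u ≤ v := by nlinarith
    calc ∫⁻ ω in A, ENNReal.ofReal ((min (Rp ω) K) ^ p) ∂P
        = ENNReal.ofReal u := (ofReal_integral_eq_lintegral_ofReal hminp_int.integrableOn
          (ae_of_all _ fun ω => Real.rpow_nonneg (hmin_nn ω) _)).symm
      _ ≤ ENNReal.ofReal v := ENNReal.ofReal_le_ofReal huv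
      _ = _ := ofReal_integral_eq_lintegral_ofReal hXp.integrableOn
          (ae_of_all _ fun ω => Real.rpow_nonneg (abs_nonneg _) _)
  -- monotone convergence in K
  have hmin_nn' : ∀ (K : ℝ) (ω : Ω), 0 ≤ K → 0 ≤ min (Rp ω) K :=
    fun K ω hK => le_min (hRp_nn ω) hK
  have hmeas : ∀ k : ℕ, Measurable (fun ω => ENNReal.ofReal ((min (Rp ω) (k:ℝ)) ^ p)) := by
    intro k
    exact ENNReal.measurable_ofReal.comp ((Real.continuous_rpow_const hp0.le).measurable.comp
      (((hRp_meas.mono hm).measurable.min measurable_const)))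
  have hmono : Monotone (fun (k : ℕ) (ω : Ω) => ENNReal.ofReal ((min (Rp ω) (k:ℝ)) ^ p)) := by
    intro i j hij
    intro ω
    exact ENNReal.ofReal_le_ofReal (Real.rpow_le_rpow (hmin_nn' i ω (Nat.cast_nonneg i))
      (min_le_min le_rfl (Nat.cast_le.2 hij)) hp0.le)
  have hsup : ∀ ω, (⨆ k : ℕ, ENNReal.ofReal ((min (Rp ω) (k:ℝ)) ^ p))
      = ENNReal.ofReal (Rp ω ^ p) := by
    intro ω
    have hev : ∀ᶠ k : ℕ in atTop, min (Rp ω) (k:ℝ) = Rp ω := by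
      filter_upwards [eventually_ge_atTop ⌈Rp ω⌉₊] with k hk
      exact min_eq_left ((Nat.le_ceil _).trans (Nat.cast_le.2 hk))
    have htd : Tendsto (fun k : ℕ => ENNReal.ofReal ((min (Rp ω) (k:ℝ)) ^ p)) atTop
        (𝓝 (ENNReal.ofReal (Rp ω ^ p))) := by
      refine tendsto_const_nhds.congr' ?_
      filter_upwards [hev] with k hk
      rw [hk]
    exact tendsto_nhds_unique (tendsto_atTop_iSup (fun i j hij => hmono hij ω)) htd
  calc ∫⁻ ω in A, ENNReal.ofReal (R ω ^ p) ∂P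
      = ∫⁻ ω in A, ENNReal.ofReal (Rp ω ^ p) ∂P := by
        refine lintegral_congr_ae ?_
        filter_upwards [ae_restrict_of_ae hRp_eq] with ω h
        rw [h]
    _ = ∫⁻ ω in A, (⨆ k : ℕ, ENNReal.ofReal ((min (Rp ω) (k:ℝ)) ^ p)) ∂P :=
        lintegral_congr fun ω => (hsup ω).symm
    _ = ⨆ k : ℕ, ∫⁻ ω in A, ENNReal.ofReal ((min (Rp ω) (k:ℝ)) ^ p) ∂P :=
        lintegral_iSup (fun k => hmeas k) hmono
    _ ≤ _ := iSup_le fun k => key (k:ℝ) (Nat.cast_nonneg k)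


/-- Doob-type uniform integrability estimate for the stopped values of a martingale
`(M_t)_{t ∈ [0,T]}` with right-continuous paths and `E[|M_T|^p] < ∞`:
for any stopping time `σ ≤ T` and any `n, δ > 0`,
`E[|M_σ|^p 1_{|M_σ| > n}] ≤ δ^p n^{-p} E[|M_T|^p] + E[|M_T|^p 1_{|M_T| > δ}]`. -/
theorem stmt_7 {Ω : Type*} {mΩ : MeasurableSpace Ω} {P : Measure Ω}
    [IsProbabilityMeasure P]
    (T : ℝ) (hT : 0 < T) (ℱ : Filtration ℝ mΩ)
    (p : ℝ) (hp : 1 ≤ p)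
    (M : ℝ → Ω → ℝ)
    (hadp : Adapted ℱ M)
    (hint : ∀ t ∈ Set.Icc (0 : ℝ) T, Integrable (M t) P)
    (hmart : ∀ s t : ℝ, 0 ≤ s → s ≤ t → t ≤ T → P[M t | ℱ s] =ᵐ[P] M s)
    (hrc : ∀ ω, ∀ t ∈ Set.Icc (0 : ℝ) T,
      ContinuousWithinAt (fun s => M s ω) (Set.Ici t) t)
    (hMT : Integrable (fun ω => |M T ω| ^ p) P)
    (σ : Ω → ℝ) (hσ : IsStoppingTime ℱ (fun ω => (σ ω : WithTop ℝ))) (hσT : ∀ ω, σ ω ∈ Set.Icc (0 : ℝ) T)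
    (n δ : ℝ) (hn : 0 < n) (hδ : 0 < δ) :
    ∫ ω in {ω | n < |M (σ ω) ω|}, |M (σ ω) ω| ^ p ∂P ≤
      δ ^ p * n ^ (-p) * ∫ ω, |M T ω| ^ p ∂P +
        ∫ ω in {ω | δ < |M T ω|}, |M T ω| ^ p ∂P := by
  classical
  have hXi : Integrable (M T) P := hint T ⟨hT.le, le_refl T⟩
  -- extended filtration and process
  set 𝒢 : Filtration ℝ mΩ :=
    { seq := fun t => ℱ (max 0 t)
      mono' := fun s t hst => ℱ.mono (max_le_max le_rfl hst)
      le' := fun t => ℱ.le (max 0 t) } with h𝒢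
  set c : ℝ → ℝ := fun t => max 0 (min t T) with hcdef
  set N : ℝ → Ω → ℝ := fun t => M (c t) with hNdef
  have hc_mem : ∀ t, c t ∈ Icc 0 T := fun t =>
    ⟨le_max_left _ _, max_le hT.le (min_le_right _ _)⟩
  have hc_mono : Monotone c := fun s t hst =>
    max_le_max le_rfl (min_le_min hst le_rfl)
  have hNmart : Martingale N 𝒢 P := by
    constructor
    · intro t
      exact ((hadp (c t)).mono (ℱ.mono (max_le_max le_rfl (min_le_left t T))) le_rfl).stronglyMeasurable
    · intro s t hst
      show P[N t | ℱ (max 0 s)] =ᵐ[P] N s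
      by_cases hsT : s ≤ T
      · have hcs : c s = max 0 s := by rw [hcdef]; simp [min_eq_left hsT]
        rw [← hcs]
        exact hmart (c s) (c t) (hc_mem s).1 (hc_mono hst) (hc_mem t).2
      · push_neg at hsT
        have hcs : c s = T := by
          rw [hcdef]; simp [min_eq_right hsT.le, max_eq_right hT.le]
        have hct : c t = T := by
          rw [hcdef]; simp [min_eq_right (hsT.le.trans hst), max_eq_right hT.le]
        have h1 : N t = N s := by rw [hNdef]; simp only [hcs, hct]
        rw [h1]
        have h2 : P[N s | ℱ (max 0 s)] = N s := by
          refine condExp_of_stronglyMeasurable (ℱ.le _) ?_ ?_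
          · show StronglyMeasurable[ℱ (max 0 s)] (M (c s))
            exact ((hadp (c s)).mono (ℱ.mono (by rw [hcs]; exact le_max_of_le_right hsT.le)) le_rfl).stronglyMeasurable
          · rw [hNdef]; exact hint (c s) (hc_mem s)
        rw [h2]
  -- dyadic upper approximations of σ
  set τ : ℕ → Ω → ℝ := fun k ω => min T ((⌈(2:ℝ)^k * σ ω⌉ : ℝ) / (2:ℝ)^k) with hτdef
  have hτ_eq : ∀ k ω, τ k ω = min T ((⌈(2:ℝ)^k * σ ω⌉ : ℝ) / (2:ℝ)^k) := fun _ _ => rfl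
  have h2k : ∀ k : ℕ, (0:ℝ) < 2 ^ k := fun k => by positivity
  have hτ_nonneg : ∀ k ω, 0 ≤ τ k ω := by
    intro k ω
    refine le_min hT.le (div_nonneg ?_ (h2k k).le)
    exact_mod_cast Int.ceil_nonneg (mul_nonneg (h2k k).le (hσT ω).1)
  have hστ : ∀ k ω, σ ω ≤ τ k ω := by
    intro k ω
    refine le_min (hσT ω).2 ?_
    rw [le_div_iff₀ (h2k k)]
    have := Int.le_ceil ((2:ℝ) ^ k * σ ω)
    linarith
  have hτT : ∀ k ω, τ k ω ≤ T := fun k ω => min_le_left _ _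
  have hτ_tendsto : ∀ ω, Tendsto (fun k => τ k ω) atTop (𝓝 (σ ω)) := by
    intro ω
    have hub : ∀ k, τ k ω ≤ σ ω + (1/2) ^ k := by
      intro k
      refine (min_le_right _ _).trans ?_
      rw [div_le_iff₀ (h2k k)]
      have h1 := Int.ceil_lt_add_one ((2:ℝ) ^ k * σ ω)
      have h2 : ((1:ℝ)/2) ^ k * 2 ^ k = 1 := by
        rw [← mul_pow]; norm_num
      nlinarith [h2k k]
    have hlim : Tendsto (fun k : ℕ => σ ω + (1/2:ℝ) ^ k) atTop (𝓝 (σ ω)) := by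
      have := tendsto_pow_atTop_nhds_zero_of_lt_one (by norm_num : (0:ℝ) ≤ 1/2)
        (by norm_num : (1/2:ℝ) < 1)
      simpa using tendsto_const_nhds.add this
    exact tendsto_of_tendsto_of_tendsto_of_le_of_le tendsto_const_nhds hlim
      (fun k => hστ k ω) hub
  have hτ_st : ∀ k, IsStoppingTime 𝒢 (fun ω => (τ k ω : WithTop ℝ)) := by
    intro k t
    simp only [WithTop.coe_le_coe]
    show MeasurableSet[ℱ (max 0 t)] {ω | τ k ω ≤ t}
    by_cases ht0 : 0 ≤ t
    · by_cases htT : T ≤ t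
      · have : {ω | τ k ω ≤ t} = univ := by
          ext ω; simp only [mem_setOf_eq, mem_univ, iff_true]
          exact (hτT k ω).trans htT
        rw [this]; exact @MeasurableSet.univ _ (ℱ (max 0 t))
      · push_neg at htT
        have hset : {ω | τ k ω ≤ t} = {ω | σ ω ≤ (⌊(2:ℝ)^k * t⌋ : ℝ) / 2 ^ k} := by
          ext ω
          simp only [mem_setOf_eq, hτ_eq, min_le_iff]
          constructor
          · rintro (h | h)
            · exact absurd (h.trans_lt htT) (lt_irrefl T)
            · rw [div_le_iff₀ (h2k k)] at h
              rw [le_div_iff₀ (h2k k)]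
              have h1 : ((⌈(2:ℝ)^k * σ ω⌉ : ℤ) : ℝ) ≤ (⌊(2:ℝ)^k * t⌋ : ℤ) := by
                exact_mod_cast Int.le_floor.2 (by push_cast; linarith)
              have h2 := Int.le_ceil ((2:ℝ)^k * σ ω)
              linarith
          · intro h
            rw [le_div_iff₀ (h2k k)] at h
            right
            rw [div_le_iff₀ (h2k k)]
            have h1 : ((⌈(2:ℝ)^k * σ ω⌉ : ℤ) : ℝ) ≤ (⌊(2:ℝ)^k * t⌋ : ℤ) := by
              exact_mod_cast Int.ceil_le.2 (by push_cast; linarith)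
            have h2 := Int.floor_le ((2:ℝ)^k * t)
            linarith
        rw [hset]
        have hfl : (⌊(2:ℝ)^k * t⌋ : ℝ) / 2 ^ k ≤ t := by
          rw [div_le_iff₀ (h2k k)]
          have := Int.floor_le ((2:ℝ)^k * t)
          linarith
        have hms := hσ ((⌊(2:ℝ)^k * t⌋ : ℝ) / 2 ^ k)
        simp only [WithTop.coe_le_coe] at hms
        have hle : ℱ ((⌊(2:ℝ)^k * t⌋ : ℝ) / 2 ^ k) ≤ ℱ (max 0 t) :=
          ℱ.mono (hfl.trans (le_max_right 0 t))
        exact hle _ hms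
    · push_neg at ht0
      have : {ω | τ k ω ≤ t} = ∅ := by
        ext ω; simp only [mem_setOf_eq, mem_empty_iff_false, iff_false, not_le]
        exact ht0.trans_le (hτ_nonneg k ω)
      rw [this]; exact @MeasurableSet.empty _ (ℱ (max 0 t))
  have hτ_count : ∀ k, (Set.range (τ k)).Countable := by
    intro k
    have hsub : Set.range (τ k) ⊆
        insert T (Set.range (fun z : ℤ => (z : ℝ) / 2 ^ k)) := by
      rintro x ⟨ω, rfl⟩
      rw [hτ_eq]
      rcases min_cases T ((⌈(2:ℝ)^k * σ ω⌉ : ℝ) / 2 ^ k) with ⟨h, _⟩ | ⟨h, _⟩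
      · exact mem_insert_iff.2 (Or.inl h)
      · exact mem_insert_iff.2 (Or.inr ⟨⌈(2:ℝ)^k * σ ω⌉, h.symm⟩)
    exact ((Set.countable_range _).insert T).mono hsub
  have hτ_count' : ∀ k, (Set.range (fun ω => (τ k ω : WithTop ℝ))).Countable := by
    intro k
    have := (hτ_count k).image (fun x : ℝ => (x : WithTop ℝ))
    rwa [← Set.range_comp] at this
  -- optional sampling
  have hNT : N T = M T := by
    funext ω; rw [hNdef]
    simp only [hcdef, min_self, max_eq_right hT.le]
  have hos : ∀ k, stoppedValue N (fun ω => (τ k ω : WithTop ℝ)) =ᵐ[P] P[M T | (hτ_st k).measurableSpace] := by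
    intro k
    have := hNmart.stoppedValue_ae_eq_condExp_of_le_const_of_countable_range
      (hτ_st k) (fun ω => WithTop.coe_le_coe.2 (hτT k ω)) (hτ_count' k)
    rwa [hNT] at this
  have hp0 : (0:ℝ) < p := by linarith
  -- conditional expectations at the discretized stopping times
  set mk : ℕ → MeasurableSpace Ω := fun k => (hτ_st k).measurableSpace with hmk
  have hmk_le : ∀ k, mk k ≤ mΩ := fun k => (hτ_st k).measurableSpace_le_of_le (fun ω => WithTop.coe_le_coe.2 (hτT k ω))
  set Z : ℕ → Ω → ℝ := fun k => P[M T | mk k] with hZdef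
  have hZ_meas : ∀ k, StronglyMeasurable[mk k] (Z k) := fun k => stronglyMeasurable_condExp
  have hsv : ∀ k, stoppedValue N (fun ω => (τ k ω : WithTop ℝ)) = fun ω => M (τ k ω) ω := by
    intro k; funext ω
    show M (c (τ k ω)) ω = M (τ k ω) ω
    congr 1
    rw [hcdef]
    simp [min_eq_left (hτT k ω), max_eq_right (hτ_nonneg k ω)]
  have hZeq : ∀ k, Z k =ᵐ[P] fun ω => M (τ k ω) ω := by
    intro k
    have := (hos k).symm
    rw [hsv k] at this
    exact this
  have hgtend : ∀ᵐ ω ∂P, Tendsto (fun k => Z k ω) atTop (𝓝 (M (σ ω) ω)) := by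
    have hall : ∀ᵐ ω ∂P, ∀ k, Z k ω = M (τ k ω) ω := ae_all_iff.2 fun k => hZeq k
    filter_upwards [hall] with ω hω
    have h1 : Tendsto (fun k => M (τ k ω) ω) atTop (𝓝 (M (σ ω) ω)) := by
      have hcw := hrc ω (σ ω) (hσT ω)
      have h2 : Tendsto (fun k => τ k ω) atTop (𝓝[Ici (σ ω)] (σ ω)) := by
        rw [tendsto_nhdsWithin_iff]
        exact ⟨hτ_tendsto ω, Eventually.of_forall fun k => hστ k ω⟩
      exact Filter.Tendsto.comp hcw h2
    exact h1.congr fun k => (hω k).symm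
  have hg_aesm : AEStronglyMeasurable (fun ω => M (σ ω) ω) P :=
    aestronglyMeasurable_of_tendsto_ae atTop
      (fun k => ((hZ_meas k).mono (hmk_le k)).aestronglyMeasurable) hgtend
  -- basic objects
  have hXb : StronglyMeasurable (M T) := ((hadp T).mono (ℱ.le T) le_rfl).stronglyMeasurable
  set B : Set Ω := {ω | δ < |M T ω|} with hBdef
  have hB_meas : MeasurableSet B := measurableSet_lt measurable_const hXb.measurable.abs
  set I : ℝ≥0∞ := ∫⁻ ω, ENNReal.ofReal (|M T ω| ^ p) ∂P with hIdef
  have hI_eq : I = ENNReal.ofReal (∫ ω, |M T ω| ^ p ∂P) :=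
    (ofReal_integral_eq_lintegral_ofReal hMT
      (ae_of_all _ fun ω => Real.rpow_nonneg (abs_nonneg _) _)).symm
  have hI_ne : I ≠ ∞ := by rw [hI_eq]; exact ENNReal.ofReal_ne_top
  set Jt : ℝ≥0∞ := ∫⁻ ω in B, ENNReal.ofReal (|M T ω| ^ p) ∂P with hJtdef
  have hJt_le : Jt ≤ I := setLIntegral_le_lintegral _ _
  have hJt_ne : Jt ≠ ∞ := (hJt_le.trans_lt hI_ne.lt_top).ne
  -- |Z k| is a.e. dominated by the conditional expectation of |M T|
  have habs : ∀ k, ∀ᵐ ω ∂P, |Z k ω| ≤ (P[(fun ω => |M T ω|) | mk k]) ω := by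
    intro k
    have h1 : Z k ≤ᵐ[P] P[(fun ω => |M T ω|) | mk k] :=
      condExp_mono hXi hXi.abs (ae_of_all _ fun ω => le_abs_self _)
    have h2 : P[(-(M T)) | mk k] ≤ᵐ[P] P[(fun ω => |M T ω|) | mk k] :=
      condExp_mono hXi.neg hXi.abs (ae_of_all _ fun ω => neg_le_abs _)
    have h3 : P[(-(M T)) | mk k] =ᵐ[P] -(Z k) := condExp_neg (M T) (mk k)
    filter_upwards [h1, h2, h3] with ω e1 e2 e3
    rw [abs_le]
    constructor
    · have := e2
      rw [e3] at this
      have h4 : -Z k ω ≤ (P[(fun ω => |M T ω|) | mk k]) ω := this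
      exact neg_le.1 h4
    · exact e1
  -- core estimate for each k and each level q
  have keybound : ∀ q : ℝ, 0 < q → ∀ k : ℕ,
      ∫⁻ ω in {ω | q < |Z k ω|}, ENNReal.ofReal (|Z k ω| ^ p) ∂P ≤
        ENNReal.ofReal (δ ^ p) * (ENNReal.ofReal (q ^ p))⁻¹ * I + Jt := by
    intro q hq k
    set A : Set Ω := {ω | q < |Z k ω|} with hAdef
    have hA_mk : MeasurableSet[mk k] A := by
      have hme : Measurable[mk k] fun ω => |Z k ω| :=
        measurable_abs.comp (hZ_meas k).measurable
      have := hme (measurableSet_Ioi (a := q))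
      exact this
    have hA_meas : MeasurableSet A := hmk_le k _ hA_mk
    have step1 : ∫⁻ ω in A, ENNReal.ofReal (|Z k ω| ^ p) ∂P ≤
        ∫⁻ ω in A, ENNReal.ofReal ((P[(fun ω => |M T ω|) | mk k]) ω ^ p) ∂P := by
      refine lintegral_mono_ae ?_
      filter_upwards [ae_restrict_of_ae (habs k)] with ω h
      exact ENNReal.ofReal_le_ofReal (Real.rpow_le_rpow (abs_nonneg _) h hp0.le)
    have step2 := jensen_condexp_rpow (hmk_le k) hp hXi hMT hA_mk
    have step3 : ∫⁻ ω in A, ENNReal.ofReal (|M T ω| ^ p) ∂P ≤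
        ENNReal.ofReal (δ ^ p) * P A + Jt := by
      have hsplit := lintegral_add_compl (μ := P.restrict A)
        (fun ω => ENNReal.ofReal (|M T ω| ^ p)) hB_meas
      have hterm1 : ∫⁻ ω in B, ENNReal.ofReal (|M T ω| ^ p) ∂(P.restrict A) ≤ Jt := by
        rw [Measure.restrict_restrict hB_meas]
        exact lintegral_mono' (Measure.restrict_mono inter_subset_left le_rfl) le_rfl
      have hterm2 : ∫⁻ ω in Bᶜ, ENNReal.ofReal (|M T ω| ^ p) ∂(P.restrict A) ≤
          ENNReal.ofReal (δ ^ p) * P A := by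
        have hb : ∫⁻ ω in Bᶜ, ENNReal.ofReal (|M T ω| ^ p) ∂(P.restrict A) ≤
            ∫⁻ _ in Bᶜ, ENNReal.ofReal (δ ^ p) ∂(P.restrict A) := by
          refine setLIntegral_mono_ae' hB_meas.compl (ae_of_all _ fun ω hω => ?_)
          have hωB : ¬ δ < |M T ω| := hω
          push_neg at hωB
          exact ENNReal.ofReal_le_ofReal (Real.rpow_le_rpow (abs_nonneg _) hωB hp0.le)
        refine hb.trans ?_
        rw [setLIntegral_const]
        refine mul_le_mul_right ?_ _
        refine (measure_mono (subset_univ _)).trans ?_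
        rw [Measure.restrict_apply_univ]
      calc ∫⁻ ω in A, ENNReal.ofReal (|M T ω| ^ p) ∂P
          = ∫⁻ ω in B, ENNReal.ofReal (|M T ω| ^ p) ∂(P.restrict A) +
            ∫⁻ ω in Bᶜ, ENNReal.ofReal (|M T ω| ^ p) ∂(P.restrict A) := hsplit.symm
        _ ≤ Jt + ENNReal.ofReal (δ ^ p) * P A := add_le_add hterm1 hterm2
        _ = ENNReal.ofReal (δ ^ p) * P A + Jt := add_comm _ _
    have hchain : ∫⁻ ω in A, ENNReal.ofReal (|Z k ω| ^ p) ∂P ≤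
        ∫⁻ ω in A, ENNReal.ofReal (|M T ω| ^ p) ∂P := step1.trans step2
    have hAI : ∫⁻ ω in A, ENNReal.ofReal (|M T ω| ^ p) ∂P ≤ I :=
      setLIntegral_le_lintegral _ _
    have hmark : ENNReal.ofReal (q ^ p) * P A ≤ I := by
      have h1 : ENNReal.ofReal (q ^ p) * P A ≤
          ∫⁻ ω in A, ENNReal.ofReal (|Z k ω| ^ p) ∂P := by
        rw [← setLIntegral_const A (ENNReal.ofReal (q ^ p))]
        refine setLIntegral_mono_ae' hA_meas (ae_of_all _ fun ω hω => ?_)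
        have hωA : q < |Z k ω| := hω
        exact ENNReal.ofReal_le_ofReal (Real.rpow_le_rpow hq.le hωA.le hp0.le)
      exact h1.trans (hchain.trans hAI)
    have hq0 : ENNReal.ofReal (q ^ p) ≠ 0 := by
      rw [Ne, ENNReal.ofReal_eq_zero, not_le]
      positivity
    have hPA : P A ≤ (ENNReal.ofReal (q ^ p))⁻¹ * I := by
      calc P A = (ENNReal.ofReal (q ^ p))⁻¹ * (ENNReal.ofReal (q ^ p) * P A) := by
            rw [← mul_assoc, ENNReal.inv_mul_cancel hq0 ENNReal.ofReal_ne_top, one_mul]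
        _ ≤ (ENNReal.ofReal (q ^ p))⁻¹ * I := mul_le_mul_right hmark _
    calc ∫⁻ ω in A, ENNReal.ofReal (|Z k ω| ^ p) ∂P
        ≤ ENNReal.ofReal (δ ^ p) * P A + Jt := hchain.trans step3
      _ ≤ ENNReal.ofReal (δ ^ p) * ((ENNReal.ofReal (q ^ p))⁻¹ * I) + Jt :=
          add_le_add (mul_le_mul_right hPA _) le_rfl
      _ = ENNReal.ofReal (δ ^ p) * (ENNReal.ofReal (q ^ p))⁻¹ * I + Jt := by
          rw [mul_assoc]
  -- Fatou's lemma
  have hfatou : ∀ q : ℝ, 0 < q → q < n →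
      (∫⁻ ω, ({ω' | n < |M (σ ω') ω'|}.indicator
        (fun ω' => ENNReal.ofReal (|M (σ ω') ω'| ^ p))) ω ∂P) ≤
      ENNReal.ofReal (δ ^ p) * (ENNReal.ofReal (q ^ p))⁻¹ * I + Jt := by
    intro q hq hqn
    set f : ℕ → Ω → ℝ≥0∞ := fun k => ({ω | q < |Z k ω|}.indicator
      (fun ω => ENNReal.ofReal (|Z k ω| ^ p))) with hfdef
    have hZmeas' : ∀ k, Measurable fun ω => |Z k ω| :=
      fun k => measurable_abs.comp ((hZ_meas k).mono (hmk_le k)).measurable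
    have hAk_meas : ∀ k, MeasurableSet {ω | q < |Z k ω|} := by
      intro k
      have := (hZmeas' k) (measurableSet_Ioi (a := q))
      exact this
    have hf_meas : ∀ k, Measurable (f k) := by
      intro k
      refine Measurable.indicator ?_ (hAk_meas k)
      exact ENNReal.measurable_ofReal.comp
        ((Real.continuous_rpow_const hp0.le).measurable.comp (hZmeas' k))
    have hptw : ∀ᵐ ω ∂P, ({ω' | n < |M (σ ω') ω'|}.indicator
        (fun ω' => ENNReal.ofReal (|M (σ ω') ω'| ^ p))) ω ≤
        liminf (fun k => f k ω) atTop := by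
      filter_upwards [hgtend] with ω hω
      by_cases hcase : ω ∈ {ω' | n < |M (σ ω') ω'|}
      · have hnlt : n < |M (σ ω) ω| := hcase
        have habs2 : Tendsto (fun k => |Z k ω|) atTop (𝓝 (|M (σ ω) ω|)) :=
          (continuous_abs.tendsto _).comp hω
        have hev : ∀ᶠ k in atTop, q < |Z k ω| :=
          habs2.eventually (eventually_gt_nhds (hqn.trans hnlt))
        have h1 : Tendsto (fun k => ENNReal.ofReal (|Z k ω| ^ p)) atTop
            (𝓝 (ENNReal.ofReal (|M (σ ω) ω| ^ p))) :=
          (ENNReal.continuous_ofReal.tendsto _).comp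
            (((Real.continuous_rpow_const hp0.le).tendsto _).comp habs2)
        have h2 : Tendsto (fun k => f k ω) atTop
            (𝓝 (ENNReal.ofReal (|M (σ ω) ω| ^ p))) := by
          refine h1.congr' ?_
          filter_upwards [hev] with k hk
          exact (indicator_of_mem (show ω ∈ {ω | q < |Z k ω|} from hk)
            (fun ω => ENNReal.ofReal (|Z k ω| ^ p))).symm
        rw [indicator_of_mem hcase]
        exact le_of_eq h2.liminf_eq.symm
      · rw [indicator_of_notMem hcase]; exact zero_le
    calc (∫⁻ ω, ({ω' | n < |M (σ ω') ω'|}.indicator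
        (fun ω' => ENNReal.ofReal (|M (σ ω') ω'| ^ p))) ω ∂P)
        ≤ ∫⁻ ω, liminf (fun k => f k ω) atTop ∂P := lintegral_mono_ae hptw
      _ ≤ liminf (fun k => ∫⁻ ω, f k ω ∂P) atTop := lintegral_liminf_le hf_meas
      _ ≤ ENNReal.ofReal (δ ^ p) * (ENNReal.ofReal (q ^ p))⁻¹ * I + Jt := by
          have hb : ∀ k, ∫⁻ ω, f k ω ∂P ≤
              ENNReal.ofReal (δ ^ p) * (ENNReal.ofReal (q ^ p))⁻¹ * I + Jt := by
            intro k
            rw [hfdef]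
            rw [lintegral_indicator (hAk_meas k)]
            exact keybound q hq k
          refine (liminf_le_liminf (Eventually.of_forall hb)).trans ?_
          simp [liminf_const]
  -- measurable representative and conversion to Bochner integrals
  obtain ⟨g', hg'_sm, hgg'⟩ := hg_aesm
  have hS'_meas : MeasurableSet {ω | n < |g' ω|} := by
    have := (measurable_abs.comp hg'_sm.measurable) (measurableSet_Ioi (a := n))
    exact this
  have hSae : {ω | n < |M (σ ω) ω|} =ᵐ[P] {ω | n < |g' ω|} := by
    filter_upwards [hgg'] with ω h
    have : (n < |M (σ ω) ω|) = (n < |g' ω|) := by rw [h]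
    exact this
  have hLHS : ∫ ω in {ω | n < |M (σ ω) ω|}, |M (σ ω) ω| ^ p ∂P
      = (∫⁻ ω in {ω | n < |g' ω|}, ENNReal.ofReal (|g' ω| ^ p) ∂P).toReal := by
    rw [Measure.restrict_congr_set hSae]
    rw [integral_congr_ae (g := fun ω => |g' ω| ^ p)
      (ae_restrict_of_ae (hgg'.mono fun ω h => by
        rw [show M (σ ω) ω = g' ω from h]))]
    rw [integral_eq_lintegral_of_nonneg_ae
      (ae_of_all _ fun ω => Real.rpow_nonneg (abs_nonneg _) _)
      (((Real.continuous_rpow_const hp0.le).measurable.comp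
        (measurable_abs.comp hg'_sm.measurable)).aestronglyMeasurable)]
  have hlin : ∫⁻ ω in {ω | n < |g' ω|}, ENNReal.ofReal (|g' ω| ^ p) ∂P
      = ∫⁻ ω, ({ω' | n < |M (σ ω') ω'|}.indicator
        (fun ω' => ENNReal.ofReal (|M (σ ω') ω'| ^ p))) ω ∂P := by
    rw [← lintegral_indicator hS'_meas]
    refine lintegral_congr_ae ?_
    filter_upwards [hgg'] with ω h
    have h' : |g' ω| = |M (σ ω) ω| := by rw [show M (σ ω) ω = g' ω from h]
    simp only [indicator_apply, mem_setOf_eq, h']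
  have htail : Jt.toReal = ∫ ω in B, |M T ω| ^ p ∂P := by
    rw [hJtdef,
      ← ofReal_integral_eq_lintegral_ofReal hMT.restrict
        (ae_of_all _ fun ω => Real.rpow_nonneg (abs_nonneg _) _),
      ENNReal.toReal_ofReal (integral_nonneg fun ω => Real.rpow_nonneg (abs_nonneg _) _)]
  -- real-valued bound for each level q < n
  have hreal : ∀ q : ℝ, 0 < q → q < n →
      ∫ ω in {ω | n < |M (σ ω) ω|}, |M (σ ω) ω| ^ p ∂P ≤
        δ ^ p * q ^ (-p) * ∫ ω, |M T ω| ^ p ∂P + ∫ ω in B, |M T ω| ^ p ∂P := by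
    intro q hq hqn
    have hq0' : ENNReal.ofReal (q ^ p) ≠ 0 := by
      rw [Ne, ENNReal.ofReal_eq_zero, not_le]
      positivity
    rw [hLHS]
    have hb := hfatou q hq hqn
    rw [← hlin] at hb
    have hfin : ENNReal.ofReal (δ ^ p) * (ENNReal.ofReal (q ^ p))⁻¹ * I + Jt ≠ ∞ := by
      refine ENNReal.add_ne_top.2 ⟨?_, hJt_ne⟩
      exact ENNReal.mul_ne_top (ENNReal.mul_ne_top ENNReal.ofReal_ne_top
        (ENNReal.inv_ne_top.2 hq0')) hI_ne
    have hmono := ENNReal.toReal_mono hfin hb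
    refine hmono.trans (le_of_eq ?_)
    have hmulfin : ENNReal.ofReal (δ ^ p) * (ENNReal.ofReal (q ^ p))⁻¹ * I ≠ ∞ :=
      ENNReal.mul_ne_top (ENNReal.mul_ne_top ENNReal.ofReal_ne_top
        (ENNReal.inv_ne_top.2 hq0')) hI_ne
    rw [ENNReal.toReal_add hmulfin hJt_ne, htail, ENNReal.toReal_mul, ENNReal.toReal_mul,
      ENNReal.toReal_inv, ENNReal.toReal_ofReal (Real.rpow_nonneg hδ.le _),
      ENNReal.toReal_ofReal (Real.rpow_nonneg hq.le _),
      hI_eq, ENNReal.toReal_ofReal (integral_nonneg fun ω => Real.rpow_nonneg (abs_nonneg _) _),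
      Real.rpow_neg hq.le]
  -- pass to the limit q → n
  set u : ℕ → ℝ := fun j => n - n / (j + 2) with hu
  have hu_pos : ∀ j, 0 < u j := by
    intro j
    have h2 : (2:ℝ) ≤ (j:ℝ) + 2 := by
      have : (0:ℝ) ≤ (j:ℝ) := Nat.cast_nonneg j
      linarith
    have : n / ((j:ℝ) + 2) ≤ n / 2 := by
      apply div_le_div_of_nonneg_left hn.le (by norm_num) h2
    have : n / ((j:ℝ) + 2) < n := this.trans_lt (by linarith)
    simpa [hu] using sub_pos.2 this
  have hu_lt : ∀ j, u j < n := by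
    intro j
    have : 0 < n / ((j:ℝ) + 2) := by positivity
    simp only [hu]
    linarith
  have hu_tend : Tendsto u atTop (𝓝 n) := by
    have h1 : Tendsto (fun j : ℕ => n / ((j:ℝ) + 2)) atTop (𝓝 0) := by
      have := (tendsto_const_div_atTop_nhds_zero_nat n).comp (tendsto_add_atTop_nat 2)
      refine this.congr fun j => ?_
      simp only [Function.comp_apply]
      push_cast
      ring
    have := tendsto_const_nhds.sub h1 (f := fun _ : ℕ => n)
    simpa using this
  have hrhs_tend : Tendsto (fun j => δ ^ p * (u j) ^ (-p) * ∫ ω, |M T ω| ^ p ∂P +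
      ∫ ω in B, |M T ω| ^ p ∂P) atTop (𝓝 (δ ^ p * n ^ (-p) * ∫ ω, |M T ω| ^ p ∂P +
      ∫ ω in B, |M T ω| ^ p ∂P)) := by
    have hca : ContinuousAt (fun x : ℝ => x ^ (-p)) n :=
      Real.continuousAt_rpow_const n (-p) (Or.inl hn.ne')
    have h1 : Tendsto (fun j => (u j) ^ (-p)) atTop (𝓝 (n ^ (-p))) :=
      (hca.tendsto).comp hu_tend
    exact ((h1.const_mul (δ ^ p)).mul_const _).add_const _
  exact ge_of_tendsto hrhs_tend
    (Eventually.of_forall fun j => hreal (u j) (hu_pos j) (hu_lt j))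
end

section
/- Let a > m. Define pathwise τ̲_a := inf{t ∈ [0,T] : M_t ≥ a} ∧ T and τ̄_a := inf{t ∈ [0,T] : M_t > a} ∧ T (inf ∅ := +∞). Assume in addition that almost surely there is no nondegenerate interval [s,r] ⊆ [0,T] (s < r) on which M_t = a for all t ∈ [s,r]. Then τ̲_a = τ̄_a P-almost surely. -/
open MeasureTheory Set Filter Topology
open scoped ENNReal NNReal

section path
variable {T a : ℝ} {f : ℝ → ℝ}

lemma aux_bddBelow {S : Set ℝ} (hS : S ⊆ Icc 0 T) : BddBelow (S ∪ {T}) :=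
  ((bddBelow_Icc : BddBelow (Icc (0:ℝ) T)).mono hS).union bddBelow_singleton

lemma aux_ne {S : Set ℝ} : (S ∪ {T}).Nonempty := ⟨T, Or.inr rfl⟩

lemma aux_sInf_mem_Icc (hT : 0 ≤ T) {S : Set ℝ} (hS : S ⊆ Icc 0 T) :
    sInf (S ∪ {T}) ∈ Icc 0 T := by
  constructor
  · exact le_csInf aux_ne (by rintro x (hx | rfl); exacts [(hS hx).1, hT])
  · exact csInf_le (aux_bddBelow hS) (Or.inr rfl)

lemma aux_sInf_le {S : Set ℝ} (hS : S ⊆ Icc 0 T) {s : ℝ} (hs : s ∈ S) :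
    sInf (S ∪ {T}) ≤ s := csInf_le (aux_bddBelow hS) (Or.inl hs)

/-- τlow ≤ τup pathwise -/
lemma aux_low_le_up :
    sInf ({s ∈ Icc (0:ℝ) T | a ≤ f s} ∪ {T}) ≤ sInf ({s ∈ Icc (0:ℝ) T | a < f s} ∪ {T}) := by
  refine csInf_le_csInf (aux_bddBelow (fun x hx => hx.1)) aux_ne ?_
  rintro x (hx | rfl)
  · exact Or.inl ⟨hx.1, hx.2.le⟩
  · exact Or.inr rfl

/-- the hitting set is closed -/
lemma aux_isClosed (hf : ContinuousOn f (Icc 0 T)) :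
    IsClosed {s ∈ Icc (0:ℝ) T | a ≤ f s} := by
  have : {s ∈ Icc (0:ℝ) T | a ≤ f s} = Icc 0 T ∩ f ⁻¹' (Ici a) := rfl
  rw [this]
  exact hf.preimage_isClosed_of_isClosed isClosed_Icc isClosed_Ici

/-- characterization of {τlow ≤ t} for t < T -/
lemma aux_tlow_le_iff (hf : ContinuousOn f (Icc 0 T)) {t : ℝ} (ht : t < T) :
    sInf ({s ∈ Icc (0:ℝ) T | a ≤ f s} ∪ {T}) ≤ t ↔ ∃ s, s ∈ Icc 0 t ∧ a ≤ f s := by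
  set S := {s ∈ Icc (0:ℝ) T | a ≤ f s} with hSdef
  constructor
  · intro h
    rcases S.eq_empty_or_nonempty with hS | hS
    · rw [hSdef.trans hS, empty_union, csInf_singleton] at h
      exact absurd h (not_le.2 ht)
    · have hsub : S ⊆ Icc 0 T := fun x hx => hx.1
      have h1 : sInf (S ∪ {T}) = sInf S := by
        refine le_antisymm (csInf_le_csInf (aux_bddBelow hsub) hS subset_union_left) ?_
        refine le_csInf aux_ne ?_
        rintro x (hx | rfl)
        · exact csInf_le ((bddBelow_Icc).mono hsub) hx
        · obtain ⟨s, hs⟩ := hS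
          exact (csInf_le ((bddBelow_Icc).mono hsub) hs).trans (hsub hs).2
      have hmem : sInf S ∈ S :=
        (aux_isClosed hf).csInf_mem hS ((bddBelow_Icc).mono hsub)
      refine ⟨sInf S, ⟨hmem.1.1, by rwa [h1] at h⟩, hmem.2⟩
  · rintro ⟨s, hs, hfs⟩
    calc sInf (S ∪ {T}) ≤ s := aux_sInf_le (fun x hx => hx.1)
            ⟨⟨hs.1, hs.2.trans ht.le⟩, hfs⟩
      _ ≤ t := hs.2

/-- characterization of {τup < t} for t ≤ T -/
lemma aux_tup_lt_iff {t : ℝ} (ht : t ≤ T) :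
    sInf ({s ∈ Icc (0:ℝ) T | a < f s} ∪ {T}) < t ↔ ∃ s, 0 ≤ s ∧ s < t ∧ a < f s := by
  constructor
  · intro h
    have := (csInf_lt_iff (aux_bddBelow (fun x hx => hx.1)) aux_ne).1 h
    obtain ⟨x, hx, hxt⟩ := this
    rcases hx with hx | rfl
    · exact ⟨x, hx.1.1, hxt, hx.2⟩
    · exact absurd hxt (not_lt.2 ht)
  · rintro ⟨s, hs0, hst, hfs⟩
    calc sInf ({s ∈ Icc (0:ℝ) T | a < f s} ∪ {T}) ≤ s := aux_sInf_le (fun x hx => hx.1)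
          (⟨⟨hs0, (hst.trans_le ht).le⟩, hfs⟩ : s ∈ {s ∈ Icc (0:ℝ) T | a < f s})
      _ < t := hst

/-- before τup, f ≤ a -/
lemma aux_le_a_of_lt_tup {s : ℝ} (hs : s ∈ Icc 0 T)
    (h : s < sInf ({s ∈ Icc (0:ℝ) T | a < f s} ∪ {T})) : f s ≤ a := by
  by_contra h'
  exact absurd (aux_sInf_le (fun x hx => hx.1) (⟨hs, not_le.1 h'⟩ :
    s ∈ {s ∈ Icc (0:ℝ) T | a < f s})) (not_le.2 h)

/-- before τlow, f < a -/
lemma aux_lt_a_of_lt_tlow {s : ℝ} (hs : s ∈ Icc 0 T)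
    (h : s < sInf ({s ∈ Icc (0:ℝ) T | a ≤ f s} ∪ {T})) : f s < a := by
  by_contra h'
  exact absurd (aux_sInf_le (fun x hx => hx.1) (⟨hs, not_lt.1 h'⟩ :
    s ∈ {s ∈ Icc (0:ℝ) T | a ≤ f s})) (not_le.2 h)

/-- left-limit bound: if f ≤ a on [0,w) and f 0 ≤ a then f w ≤ a -/
lemma aux_left_lim (hf : ContinuousOn f (Icc 0 T)) {w : ℝ} (hw : w ∈ Icc 0 T)
    (hbd : ∀ s ∈ Ico (0:ℝ) w, f s ≤ a) (h0 : f 0 ≤ a) : f w ≤ a := by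
  rcases eq_or_lt_of_le hw.1 with h | h
  · rwa [← h]
  · -- w > 0, take s_k = w - w/(k+2)
    set s : ℕ → ℝ := fun k => w - w / (k + 2) with hs
    have hmem : ∀ k, s k ∈ Ico (0:ℝ) w := by
      intro k
      have h2 : (0:ℝ) < (k:ℝ) + 2 := by positivity
      constructor
      · have : w / (k + 2) ≤ w := by
          rw [div_le_iff₀ h2]; nlinarith
        simpa [hs] using this
      · have : 0 < w / (k + 2) := by positivity
        simp only [hs]; linarith
    have htend : Tendsto s atTop (𝓝 w) := by
      have h1 : Tendsto (fun k : ℕ => w / (k + 2)) atTop (𝓝 0) := by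
        apply Tendsto.div_atTop (tendsto_const_nhds)
        exact tendsto_atTop_add_const_right _ 2 tendsto_natCast_atTop_atTop
      simpa [hs] using (tendsto_const_nhds (x := w)).sub h1
    have hcw : ContinuousWithinAt f (Icc 0 T) w := hf w hw
    have htend2 : Tendsto (fun k => f (s k)) atTop (𝓝 (f w)) := by
      apply hcw.tendsto.comp
      apply tendsto_nhdsWithin_of_tendsto_nhds_of_eventually_within _ htend
      exact Eventually.of_forall fun k => ⟨(hmem k).1, ((hmem k).2.le.trans hw.2)⟩
    exact le_of_tendsto htend2 (Eventually.of_forall fun k => hbd _ (hmem k))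


/-- if τlow ≤ t < T then f hits a at τlow -/
lemma aux_hit (hf : ContinuousOn f (Icc 0 T)) {t : ℝ} (ht : t < T)
    (h : sInf ({s ∈ Icc (0:ℝ) T | a ≤ f s} ∪ {T}) ≤ t) :
    a ≤ f (sInf ({s ∈ Icc (0:ℝ) T | a ≤ f s} ∪ {T})) := by
  set S := {s ∈ Icc (0:ℝ) T | a ≤ f s} with hSdef
  rcases S.eq_empty_or_nonempty with hS | hS
  · rw [hSdef.trans hS, empty_union, csInf_singleton] at h
    exact absurd h (not_le.2 ht)
  · have hsub : S ⊆ Icc 0 T := fun x hx => hx.1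
    have h1 : sInf (S ∪ {T}) = sInf S := by
      refine le_antisymm (csInf_le_csInf (aux_bddBelow hsub) hS subset_union_left) ?_
      refine le_csInf aux_ne ?_
      rintro x (hx | rfl)
      · exact csInf_le ((bddBelow_Icc).mono hsub) hx
      · obtain ⟨s, hs⟩ := hS
        exact (csInf_le ((bddBelow_Icc).mono hsub) hs).trans (hsub hs).2
    have hmem : sInf S ∈ S := (aux_isClosed hf).csInf_mem hS ((bddBelow_Icc).mono hsub)
    rw [h1]; exact hmem.2

end path

section meas

variable {Ω : Type*} {mΩ : MeasurableSpace Ω}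

/-- countable index set of rationals in [0,t] plus t -/
def ratIcc (t : ℝ) : Set ℝ := insert t {s | s ∈ Icc 0 t ∧ ∃ r : ℚ, (r : ℝ) = s}

lemma ratIcc_countable (t : ℝ) : (ratIcc t).Countable := by
  refine (Set.Countable.mono ?_ (Set.countable_range (fun r : ℚ => (r:ℝ)))).insert t
  rintro s ⟨_, r, rfl⟩; exact ⟨r, rfl⟩

lemma ratIcc_subset {t : ℝ} (ht : 0 ≤ t) : ratIcc t ⊆ Icc 0 t := by
  rintro s (rfl | ⟨hs, _⟩); exacts [⟨ht, le_rfl⟩, hs]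

/-- key set identity: existence of a real time with f ≥ a equals countable intersection/union -/
lemma exists_ge_iff_rat {T a : ℝ} {f : ℝ → ℝ} (hf : ContinuousOn f (Icc 0 T))
    {t : ℝ} (ht0 : 0 ≤ t) (htT : t ≤ T) :
    (∃ s, s ∈ Icc 0 t ∧ a ≤ f s) ↔
      ∀ k : ℕ, ∃ s ∈ ratIcc t, a - 1/(k+1) < f s := by
  constructor
  · rintro ⟨s₀, hs₀, hfs₀⟩ k
    have hk : (0:ℝ) < 1/(k+1) := by positivity
    rcases eq_or_lt_of_le hs₀.2 with h | h
    · exact ⟨t, mem_insert _ _, by rw [← h]; linarith⟩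
    · -- s₀ < t; use continuity to find a rational point
      have hcw : ContinuousWithinAt f (Icc 0 T) s₀ :=
        hf s₀ ⟨hs₀.1, hs₀.2.trans htT⟩
      have hev : ∀ᶠ x in 𝓝[Icc 0 T] s₀, a - 1/(k+1) < f x :=
        hcw.eventually_const_lt (by linarith)
      rw [eventually_nhdsWithin_iff, Metric.eventually_nhds_iff] at hev
      obtain ⟨δ, hδ, hball⟩ := hev
      obtain ⟨r, hr1, hr2⟩ := exists_rat_btwn (lt_min (lt_add_of_pos_right s₀ hδ) h)
      have hrt : (r:ℝ) < t := hr2.trans_le (min_le_right _ _)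
      have hrIcc : (r:ℝ) ∈ Icc 0 T := ⟨hs₀.1.trans hr1.le, hrt.le.trans htT⟩
      have hdist : dist (r:ℝ) s₀ < δ := by
        rw [Real.dist_eq, abs_of_pos (by linarith)]
        have := hr2.trans_le (min_le_left _ _); linarith
      exact ⟨r, Or.inr ⟨⟨hs₀.1.trans hr1.le, hrt.le⟩, r, rfl⟩, hball hdist hrIcc⟩
  · intro h
    -- compactness: nested nonempty compact sets
    set K : ℕ → Set ℝ := fun k => {s ∈ Icc 0 t | a - 1/(k+1) ≤ f s} with hK
    have hfc : ContinuousOn f (Icc 0 t) := hf.mono (Icc_subset_Icc le_rfl htT)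
    have hclosed : ∀ k, IsClosed (K k) := fun k =>
      hfc.preimage_isClosed_of_isClosed isClosed_Icc isClosed_Ici
    have hcpt : ∀ k, IsCompact (K k) := fun k =>
      isCompact_Icc.of_isClosed_subset (hclosed k) (fun x hx => hx.1)
    have hsub : ∀ k, K (k+1) ⊆ K k := by
      intro k x hx
      refine ⟨hx.1, le_trans (by
        have h1 : (1:ℝ)/(k+1+1) ≤ 1/(k+1) := by
          apply one_div_le_one_div_of_le <;> push_cast <;> linarith
        push_cast at h1 ⊢; linarith) hx.2⟩
    have hne : ∀ k, (K k).Nonempty := by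
      intro k
      obtain ⟨s, hs, hfs⟩ := h k
      exact ⟨s, ratIcc_subset ht0 hs, hfs.le⟩
    obtain ⟨x, hx⟩ := IsCompact.nonempty_iInter_of_sequence_nonempty_isCompact_isClosed
      K hsub hne (hcpt 0) hclosed
    simp only [mem_iInter] at hx
    refine ⟨x, (hx 0).1, ?_⟩
    by_contra hlt
    obtain ⟨k, hk⟩ := exists_nat_one_div_lt (show (0:ℝ) < a - f x by linarith)
    have := (hx k).2
    push_cast at hk this ⊢
    linarith

/-- countable index set of rationals in [0,t) -/
def ratIco (t : ℝ) : Set ℝ := {s | s ∈ Ico 0 t ∧ ∃ r : ℚ, (r : ℝ) = s}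

lemma ratIco_countable (t : ℝ) : (ratIco t).Countable := by
  refine Set.Countable.mono ?_ (Set.countable_range (fun r : ℚ => (r:ℝ)))
  rintro s ⟨_, r, rfl⟩; exact ⟨r, rfl⟩

lemma exists_gt_iff_rat {T a : ℝ} {f : ℝ → ℝ} (hf : ContinuousOn f (Icc 0 T))
    {t : ℝ} (htT : t ≤ T) :
    (∃ s, 0 ≤ s ∧ s < t ∧ a < f s) ↔ ∃ s ∈ ratIco t, a < f s := by
  constructor
  · rintro ⟨s₀, hs₀0, hs₀t, hfs₀⟩
    have hcw : ContinuousWithinAt f (Icc 0 T) s₀ :=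
      hf s₀ ⟨hs₀0, hs₀t.le.trans htT⟩
    have hev : ∀ᶠ x in 𝓝[Icc 0 T] s₀, a < f x := hcw.eventually_const_lt hfs₀
    rw [eventually_nhdsWithin_iff, Metric.eventually_nhds_iff] at hev
    obtain ⟨δ, hδ, hball⟩ := hev
    obtain ⟨r, hr1, hr2⟩ := exists_rat_btwn (lt_min (lt_add_of_pos_right s₀ hδ) hs₀t)
    have hrt : (r:ℝ) < t := hr2.trans_le (min_le_right _ _)
    have hrIcc : (r:ℝ) ∈ Icc 0 T := ⟨hs₀0.trans hr1.le, hrt.le.trans htT⟩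
    have hdist : dist (r:ℝ) s₀ < δ := by
      rw [Real.dist_eq, abs_of_pos (by linarith)]
      have := hr2.trans_le (min_le_left _ _); linarith
    exact ⟨r, ⟨⟨hs₀0.trans hr1.le, hrt⟩, r, rfl⟩, hball hdist hrIcc⟩
  · rintro ⟨s, ⟨hs, _⟩, hfs⟩
    exact ⟨s, hs.1, hs.2, hfs⟩

end meas


section prob
variable {Ω : Type*} {mΩ : MeasurableSpace Ω} {P : Measure Ω} [IsProbabilityMeasure P]

lemma meas_tlow (T : ℝ) (ℱ : Filtration ℝ mΩ) (M : ℝ → Ω → ℝ) (hadp : Adapted ℱ M)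
    (hcont : ∀ ω, ContinuousOn (fun s => M s ω) (Icc 0 T)) (a : ℝ) {t : ℝ}
    (ht0 : 0 ≤ t) (htT : t ≤ T) :
    MeasurableSet[ℱ t] {ω | ∃ s, s ∈ Icc 0 t ∧ a ≤ M s ω} := by
  have : {ω | ∃ s, s ∈ Icc 0 t ∧ a ≤ M s ω} =
      ⋂ k : ℕ, ⋃ s ∈ ratIcc t, {ω | a - 1/(k+1) < M s ω} := by
    ext ω
    simp only [mem_iInter, mem_iUnion, mem_setOf_eq, exists_prop]
    exact exists_ge_iff_rat (hcont ω) ht0 htT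
  rw [this]
  refine MeasurableSet.iInter fun k => MeasurableSet.biUnion (ratIcc_countable t) ?_
  intro s hs
  have hst : s ≤ t := (ratIcc_subset ht0 hs).2
  exact ℱ.mono hst _ (measurableSet_lt measurable_const (hadp s))

lemma meas_tup (T : ℝ) (ℱ : Filtration ℝ mΩ) (M : ℝ → Ω → ℝ) (hadp : Adapted ℱ M)
    (hcont : ∀ ω, ContinuousOn (fun s => M s ω) (Icc 0 T)) (a : ℝ) {t : ℝ}
    (htT : t ≤ T) :
    MeasurableSet[ℱ t] {ω | ∃ s, 0 ≤ s ∧ s < t ∧ a < M s ω} := by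
  have : {ω | ∃ s, 0 ≤ s ∧ s < t ∧ a < M s ω} =
      ⋃ s ∈ ratIco t, {ω | a < M s ω} := by
    ext ω
    simp only [mem_iUnion, mem_setOf_eq, exists_prop]
    exact exists_gt_iff_rat (hcont ω) htT
  rw [this]
  refine MeasurableSet.biUnion (ratIco_countable t) ?_
  intro s hs
  exact ℱ.mono hs.1.2.le _ (measurableSet_lt measurable_const (hadp s))

/-- Optional sampling packaged: stopped value is a conditional expectation of the final value. -/
lemma helperA (T : ℝ) (ℱ : Filtration ℝ mΩ) (M : ℝ → Ω → ℝ)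
    (hadp : Adapted ℱ M)
    (hint : ∀ t ∈ Set.Icc (0 : ℝ) T, Integrable (M t) P)
    (hmart : ∀ s t : ℝ, 0 ≤ s → s ≤ t → t ≤ T → P[M t | ℱ s] =ᵐ[P] M s)
    (N : ℕ) (c : ℕ → ℝ) (hmono : Monotone c) (hc0 : ∀ i, 0 ≤ c i) (hcT : ∀ i, c i ≤ T)
    (σ : Ω → ℕ) (hσle : ∀ ω, σ ω ≤ N)
    (hst : ∀ i, MeasurableSet[ℱ (c i)] {ω | σ ω ≤ i})
    (D : Set Ω) (hD : ∀ i, MeasurableSet[ℱ (c i)] (D ∩ {ω | σ ω ≤ i})) :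
    ∃ m' : MeasurableSpace Ω, ∃ _hle : m' ≤ mΩ,
      ((fun ω => M (c (σ ω)) ω) =ᵐ[P] P[M (c N)| m']) ∧ MeasurableSet[m'] D := by
  set 𝔾 : Filtration ℕ mΩ :=
    ⟨fun i => ℱ (c i), fun i j hij => ℱ.mono (hmono hij), fun i => ℱ.le _⟩ with h𝔾
  have hY : Martingale (fun i => M (c i)) 𝔾 P :=
    ⟨fun i => (hadp (c i)).stronglyMeasurable, fun i j hij => hmart _ _ (hc0 i) (hmono hij) (hcT j)⟩
  have hσ : IsStoppingTime 𝔾 (fun ω => (σ ω : WithTop ℕ)) := fun i => by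
    simpa using hst i
  have hσle' : ∀ ω, (σ ω : WithTop ℕ) ≤ N := fun ω => WithTop.coe_le_coe.2 (hσle ω)
  have hos := hY.stoppedValue_ae_eq_condExp_of_le_const hσ hσle'
  have hDN : D ∩ {ω | σ ω ≤ N} = D := inter_eq_left.2 fun ω _ => hσle ω
  exact ⟨hσ.measurableSpace, hσ.measurableSpace_le_of_le hσle', hos,
    ⟨le_iSup (fun t => (𝔾 t : MeasurableSpace Ω)) N _ (hDN ▸ hD N),
      fun i => by simpa using hD i⟩⟩

/-- Limit passage: if V n are stopped values a.e. equal to condexps of ξ, tending a.e. to g,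
then the set integrals agree. -/
lemma helperB (ξ : Ω → ℝ) (hξ : Integrable ξ P)
    (V : ℕ → Ω → ℝ) (g : Ω → ℝ) (D : Set Ω)
    (h : ∀ n, ∃ m' : MeasurableSpace Ω, ∃ _hle : m' ≤ mΩ,
      (V n =ᵐ[P] P[ξ| m']) ∧ MeasurableSet[m'] D)
    (htend : ∀ᵐ ω ∂P, Tendsto (fun n => V n ω) atTop (𝓝 (g ω))) :
    Integrable g P ∧ ∫ ω in D, g ω ∂P = ∫ ω in D, ξ ω ∂P := by
  choose ms hle heq hDmeas using h
  set F : ℕ → Ω → ℝ := fun n => P[ξ| ms n] with hF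
  have hui : UniformIntegrable F 1 P := hξ.uniformIntegrable_condExp hle
  have hmeas : ∀ n, AEStronglyMeasurable (F n) P := fun n =>
    (stronglyMeasurable_condExp.mono (hle n)).aestronglyMeasurable
  have htendF : ∀ᵐ ω ∂P, Tendsto (fun n => F n ω) atTop (𝓝 (g ω)) := by
    have hall : ∀ᵐ ω ∂P, ∀ n, V n ω = F n ω := ae_all_iff.2 fun n => heq n
    filter_upwards [htend, hall] with ω h1 h2
    exact h1.congr fun n => h2 n
  have hgmeas : AEStronglyMeasurable g P := aestronglyMeasurable_of_tendsto_ae atTop hmeas htendF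
  obtain ⟨C, hC⟩ := hui.2.2
  have hgl : MemLp g 1 P := by
    refine ⟨hgmeas, ?_⟩
    have h1 : ∀ᵐ ω ∂P, (‖g ω‖₊ : ℝ≥0∞) ≤ liminf (fun n => (‖F n ω‖₊ : ℝ≥0∞)) atTop := by
      filter_upwards [htendF] with ω hω
      have h2 : Tendsto (fun n => (‖F n ω‖₊ : ℝ≥0∞)) atTop (𝓝 (‖g ω‖₊ : ℝ≥0∞)) :=
        ENNReal.tendsto_coe.2 hω.nnnorm
      rw [h2.liminf_eq]
    calc eLpNorm g 1 P = ∫⁻ ω, ‖g ω‖₊ ∂P := eLpNorm_one_eq_lintegral_enorm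
      _ ≤ ∫⁻ ω, liminf (fun n => (‖F n ω‖₊ : ℝ≥0∞)) atTop ∂P := lintegral_mono_ae h1
      _ ≤ liminf (fun n => ∫⁻ ω, ‖F n ω‖₊ ∂P) atTop := by
          exact lintegral_liminf_le' fun n => (hmeas n).enorm
      _ ≤ C := by
          refine liminf_le_of_frequently_le' (Frequently.of_forall fun n => ?_)
          simpa [eLpNorm_one_eq_lintegral_enorm, enorm_eq_nnnorm] using hC n
      _ < ⊤ := ENNReal.coe_lt_top
  have hLp := tendsto_Lp_finite_of_tendsto_ae le_rfl ENNReal.one_ne_top hmeas hgl hui.2.1 htendF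
  have hconv : Tendsto (fun n => ∫ ω in D, F n ω ∂P) atTop (𝓝 (∫ ω in D, g ω ∂P)) := by
    refine tendsto_setIntegral_of_L1 g (memLp_one_iff_integrable.1 hgl).1
      (Eventually.of_forall fun n => integrable_condExp) ?_ D
    simpa [eLpNorm_one_eq_lintegral_enorm] using hLp
  have hconst : ∀ n, ∫ ω in D, F n ω ∂P = ∫ ω in D, ξ ω ∂P := fun n =>
    setIntegral_condExp (hle n) hξ (hDmeas n)
  have : Tendsto (fun n => ∫ ω in D, F n ω ∂P) atTop (𝓝 (∫ ω in D, ξ ω ∂P)) := by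
    simpa [hconst] using tendsto_const_nhds (x := ∫ ω in D, ξ ω ∂P) (f := atTop (α := ℕ))
  exact ⟨memLp_one_iff_integrable.1 hgl, tendsto_nhds_unique hconv this⟩

end prob

section grid

/-- grid on [0,q] with n+2 points, then jumping to u -/
noncomputable def grid (q u : ℝ) (n i : ℕ) : ℝ := if i ≤ n + 1 then q * i / (n + 1) else u

variable {q u : ℝ}

lemma grid_mono (hq : 0 ≤ q) (hqu : q ≤ u) (n : ℕ) : Monotone (grid q u n) := by
  intro i j hij
  unfold grid
  have hn : (0:ℝ) < n + 1 := by positivity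
  by_cases hj : j ≤ n + 1
  · rw [if_pos (hij.trans hj), if_pos hj]
    have hcast : (i:ℝ) ≤ j := Nat.cast_le.2 hij
    have h1 : q * i ≤ q * j := by nlinarith
    exact (div_le_div_iff_of_pos_right hn).2 h1
  · rw [if_neg hj]
    by_cases hi : i ≤ n + 1
    · rw [if_pos hi]
      have h1 : q * i / (n+1) ≤ q := by
        rw [div_le_iff₀ hn]
        have : (i:ℝ) ≤ n + 1 := by exact_mod_cast hi
        nlinarith
      linarith
    · rw [if_neg hi]

lemma grid_nonneg (hq : 0 ≤ q) (hu : 0 ≤ u) (n i : ℕ) : 0 ≤ grid q u n i := by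
  unfold grid; split
  · positivity
  · exact hu

lemma grid_le_u (hq : 0 ≤ q) (hqu : q ≤ u) (n i : ℕ) : grid q u n i ≤ u := by
  unfold grid; split
  · have hn : (0:ℝ) < n + 1 := by positivity
    have h1 : q * i / (n+1) ≤ q := by
      rw [div_le_iff₀ hn]
      have : (i:ℝ) ≤ n + 1 := by exact_mod_cast ‹i ≤ n + 1›
      nlinarith
    linarith
  · exact le_rfl

lemma grid_le_q (hq : 0 ≤ q) {n i : ℕ} (hi : i ≤ n + 1) : grid q u n i ≤ q := by
  unfold grid
  rw [if_pos hi]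
  have hn : (0:ℝ) < n + 1 := by positivity
  rw [div_le_iff₀ hn]
  have : (i:ℝ) ≤ n + 1 := by exact_mod_cast hi
  nlinarith

lemma grid_lt_q (hq : 0 < q) {n i : ℕ} (hi : i ≤ n) : grid q u n i < q := by
  unfold grid
  rw [if_pos (hi.trans (Nat.le_succ n))]
  have hn : (0:ℝ) < n + 1 := by positivity
  rw [div_lt_iff₀ hn]
  have : (i:ℝ) ≤ n := by exact_mod_cast hi
  nlinarith

lemma grid_end (n : ℕ) : grid q u n (n+1) = q := by
  unfold grid
  rw [if_pos le_rfl]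
  have hn : ((n:ℝ) + 1) ≠ 0 := by positivity
  field_simp
  push_cast; ring

lemma grid_top {n i : ℕ} (hi : n + 2 ≤ i) : grid q u n i = u := by
  unfold grid
  rw [if_neg (by omega)]

lemma grid_succ {n k : ℕ} (hk : k ≤ n) : grid q u n (k+1) = grid q u n k + q/(n+1) := by
  unfold grid
  rw [if_pos (by omega), if_pos (by omega)]
  have hn : ((n:ℝ) + 1) ≠ 0 := by positivity
  push_cast
  field_simp

/-- discrete approximation of a hitting time from above (A-side: level sets `t ≤ ·`) -/
noncomputable def stopA (q u t : ℝ) (n : ℕ) : ℕ := sInf {i | t ≤ grid q u n i ∨ n + 1 ≤ i}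

lemma stopA_ne (t : ℝ) (n : ℕ) : {i | t ≤ grid q u n i ∨ n + 1 ≤ i}.Nonempty :=
  ⟨n+1, Or.inr le_rfl⟩

lemma stopA_le (t : ℝ) (n : ℕ) : stopA q u t n ≤ n + 1 := Nat.sInf_le (Or.inr le_rfl)

lemma stopA_mem (t : ℝ) (n : ℕ) :
    t ≤ grid q u n (stopA q u t n) ∨ n + 1 ≤ stopA q u t n := Nat.sInf_mem (stopA_ne t n)

lemma stopA_le_iff (hq : 0 ≤ q) (hqu : q ≤ u) {t : ℝ} {n i : ℕ} (hi : i ≤ n) :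
    stopA q u t n ≤ i ↔ t ≤ grid q u n i := by
  constructor
  · intro h
    rcases stopA_mem (q := q) (u := u) t n with h' | h'
    · exact h'.trans (grid_mono hq hqu n h)
    · omega
  · intro h
    exact Nat.sInf_le (Or.inl h)

lemma stopA_hit (hq : 0 ≤ q) {t : ℝ} (ht : t ≤ q) (n : ℕ) :
    t ≤ grid q u (n := n) (stopA q u t n) := by
  rcases stopA_mem (q := q) (u := u) t n with h | h
  · exact h
  · have h2 := stopA_le (q := q) (u := u) t n
    have : stopA q u t n = n + 1 := le_antisymm h2 h
    rw [this, grid_end]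
    exact ht

lemma stopA_close (hq : 0 ≤ q) {t : ℝ} (ht : 0 ≤ t) (n : ℕ) :
    grid q u n (stopA q u t n) ≤ t + q / (n+1) := by
  have hn : (0:ℝ) ≤ q/(n+1) := by positivity
  rcases Nat.eq_zero_or_eq_succ_pred (stopA q u t n) with h0 | hs
  · rw [h0]
    unfold grid
    rw [if_pos (by omega)]
    simpa using by linarith
  · set k := (stopA q u t n) - 1 with hk
    have hks : stopA q u t n = k + 1 := hs
    have hknotmem : k ∉ {i | t ≤ grid q u n i ∨ n + 1 ≤ i} := by
      apply Nat.notMem_of_lt_sInf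
      show k < stopA q u t n
      omega
    simp only [mem_setOf_eq, not_or, not_le] at hknotmem
    have hkn : k ≤ n := by
      have := stopA_le (q := q) (u := u) t n
      omega
    rw [hks, grid_succ hkn]
    linarith [hknotmem.1]

lemma stopA_eq_of_gt {t : ℝ} (hq : 0 ≤ q) (ht : q < t) (n : ℕ) : stopA q u t n = n + 1 := by
  refine le_antisymm (stopA_le t n) ?_
  refine le_csInf (stopA_ne t n) ?_
  rintro i (hi | hi)
  · by_contra h
    have h2 : i ≤ n + 1 := by omega
    have := grid_le_q (u := u) hq h2 (n := n) (i := i)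
    linarith
  · exact hi

/-- B-side: level sets `t < ·` -/
noncomputable def stopB (u t : ℝ) (n : ℕ) : ℕ := sInf {i | t < grid u u n i ∨ n + 1 ≤ i}

lemma stopB_ne (t : ℝ) (n : ℕ) : {i | t < grid u u n i ∨ n + 1 ≤ i}.Nonempty :=
  ⟨n+1, Or.inr le_rfl⟩

lemma stopB_le (t : ℝ) (n : ℕ) : stopB u t n ≤ n + 1 := Nat.sInf_le (Or.inr le_rfl)

lemma stopB_le_iff (hu : 0 ≤ u) {t : ℝ} {n i : ℕ} (hi : i ≤ n) :
    stopB u t n ≤ i ↔ t < grid u u n i := by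
  constructor
  · intro h
    rcases Nat.sInf_mem (stopB_ne (u := u) t n) with h' | h'
    · exact h'.trans_le (grid_mono hu le_rfl n h)
    · have h'' : n + 1 ≤ stopB u t n := h'
      omega
  · intro h
    exact Nat.sInf_le (Or.inl h)

lemma stopB_eq_of_ge (hu : 0 < u) {t : ℝ} (ht : u ≤ t) (n : ℕ) : stopB u t n = n + 1 := by
  refine le_antisymm (stopB_le t n) ?_
  refine le_csInf (stopB_ne t n) ?_
  rintro i (hi | hi)
  · by_contra h
    have h2 : i ≤ n := by omega
    have := grid_lt_q (u := u) hu h2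
    linarith
  · exact hi

lemma stopB_hit (hu : 0 < u) {t : ℝ} (ht : t < u) (n : ℕ) :
    t < grid u u n (stopB u t n) := by
  rcases Nat.sInf_mem (stopB_ne (u := u) t n) with h | h
  · exact h
  · have : stopB u t n = n + 1 := le_antisymm (stopB_le t n) h
    rw [this, grid_end]
    exact ht

lemma stopB_close (hu : 0 ≤ u) {t : ℝ} (ht : 0 ≤ t) (n : ℕ) :
    grid u u n (stopB u t n) ≤ t + u / (n+1) := by
  have hn : (0:ℝ) ≤ u/(n+1) := by positivity
  rcases Nat.eq_zero_or_eq_succ_pred (stopB u t n) with h0 | hs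
  · rw [h0]
    unfold grid
    rw [if_pos (by omega)]
    simpa using by linarith
  · set k := (stopB u t n) - 1 with hk
    have hks : stopB u t n = k + 1 := hs
    have hknotmem : k ∉ {i | t < grid u u n i ∨ n + 1 ≤ i} := by
      apply Nat.notMem_of_lt_sInf
      show k < stopB u t n
      omega
    simp only [mem_setOf_eq, not_or, not_lt] at hknotmem
    have hkn : k ≤ n := by
      have := stopB_le (u := u) t n
      omega
    rw [hks, grid_succ hkn]
    linarith [hknotmem.1]

lemma squeeze_aux {t e : ℝ} {x : ℕ → ℝ} (h1 : ∀ n, t ≤ x n)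
    (h2 : ∀ n, x n ≤ t + e/(n+1)) : Filter.Tendsto x atTop (𝓝 t) := by
  have he : Filter.Tendsto (fun n : ℕ => t + e/(n+1)) atTop (𝓝 t) := by
    have h3 : Filter.Tendsto (fun n : ℕ => e/(n+1)) atTop (𝓝 0) := by
      apply Filter.Tendsto.div_atTop tendsto_const_nhds
      exact tendsto_atTop_add_const_right _ 1 tendsto_natCast_atTop_atTop
    simpa using tendsto_const_nhds.add h3
  exact tendsto_of_tendsto_of_tendsto_of_le_of_le tendsto_const_nhds he h1 h2

lemma tendsto_path {T : ℝ} {f : ℝ → ℝ} (hf : ContinuousOn f (Icc 0 T)) {w : ℝ}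
    (hw : w ∈ Icc 0 T) {x : ℕ → ℝ} (hx : ∀ n, x n ∈ Icc 0 T)
    (hxt : Filter.Tendsto x atTop (𝓝 w)) :
    Filter.Tendsto (fun n => f (x n)) atTop (𝓝 (f w)) := by
  apply (hf w hw).tendsto.comp
  apply tendsto_nhdsWithin_of_tendsto_nhds_of_eventually_within _ hxt
  exact Eventually.of_forall hx

end grid

section key
variable {Ω : Type*} {mΩ : MeasurableSpace Ω} {P : Measure Ω} [IsProbabilityMeasure P]

lemma keyLemma (T : ℝ) (hT : 0 < T) (ℱ : Filtration ℝ mΩ) (M : ℝ → Ω → ℝ)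
    (hadp : Adapted ℱ M)
    (hint : ∀ t ∈ Set.Icc (0 : ℝ) T, Integrable (M t) P)
    (hmart : ∀ s t : ℝ, 0 ≤ s → s ≤ t → t ≤ T → P[M t | ℱ s] =ᵐ[P] M s)
    (hcont : ∀ ω, ContinuousOn (fun s => M s ω) (Set.Icc 0 T))
    (m : ℝ) (hM0 : ∀ᵐ ω ∂P, M 0 ω = m) (a : ℝ) (ha : m < a)
    (τlow τup : Ω → ℝ)
    (hτlow : ∀ ω, τlow ω = sInf ({s ∈ Set.Icc (0 : ℝ) T | a ≤ M s ω} ∪ {T}))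
    (hτup : ∀ ω, τup ω = sInf ({s ∈ Set.Icc (0 : ℝ) T | a < M s ω} ∪ {T}))
    (q u : ℝ) (hq0 : 0 ≤ q) (hqu : q < u) (huT : u ≤ T) :
    ∀ᵐ ω ∂P, τlow ω ≤ q → u < τup ω → M u ω = a := by
  have hT0 : (0:ℝ) ≤ T := hT.le
  have hqT : q < T := hqu.trans_le huT
  have hu0 : 0 < u := hq0.trans_lt hqu
  have huI : u ∈ Icc (0:ℝ) T := ⟨hu0.le, huT⟩
  have hlow_mem : ∀ ω, τlow ω ∈ Icc 0 T := fun ω => by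
    rw [hτlow ω]; exact aux_sInf_mem_Icc hT0 (fun x hx => hx.1)
  have hup_mem : ∀ ω, τup ω ∈ Icc 0 T := fun ω => by
    rw [hτup ω]; exact aux_sInf_mem_Icc hT0 (fun x hx => hx.1)
  have hlowle : ∀ ω, τlow ω ≤ τup ω := fun ω => by
    rw [hτlow ω, hτup ω]; exact aux_low_le_up
  have hDmF : ∀ t : ℝ, 0 ≤ t → t < T → MeasurableSet[ℱ t] {ω | τlow ω ≤ t} := by
    intro t ht0 htT
    have heq : {ω | τlow ω ≤ t} = {ω | ∃ s, s ∈ Icc 0 t ∧ a ≤ M s ω} := by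
      ext ω
      rw [mem_setOf_eq, hτlow ω, mem_setOf_eq]
      exact aux_tlow_le_iff (hcont ω) htT
    rw [heq]
    exact meas_tlow T ℱ M hadp hcont a ht0 htT.le
  have hUpF : ∀ t : ℝ, t ≤ T → MeasurableSet[ℱ t] {ω | τup ω < t} := by
    intro t htT
    have heq : {ω | τup ω < t} = {ω | ∃ s, 0 ≤ s ∧ s < t ∧ a < M s ω} := by
      ext ω; rw [mem_setOf_eq, hτup ω, mem_setOf_eq]; exact aux_tup_lt_iff htT
    rw [heq]; exact meas_tup T ℱ M hadp hcont a htT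
  set D : Set Ω := {ω | τlow ω ≤ q} with hDdef
  have hDm : MeasurableSet D := ℱ.le q _ (hDmF q hq0 hqT)
  -- A side: optional sampling at discretized τlow
  have hAcond : ∀ n : ℕ, ∃ m' : MeasurableSpace Ω, ∃ _hle : m' ≤ mΩ,
      ((fun ω => M (grid q u n (stopA q u (τlow ω) n)) ω) =ᵐ[P] P[M u| m'])
        ∧ MeasurableSet[m'] D := by
    intro n
    have h := helperA T ℱ M hadp hint hmart (n+2) (grid q u n)
      (grid_mono hq0 hqu.le n) (grid_nonneg hq0 hu0.le n)
      (fun i => (grid_le_u hq0 hqu.le n i).trans huT)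
      (fun ω => stopA q u (τlow ω) n) (fun ω => (stopA_le _ _).trans (by omega))
      ?hst D ?hD
    · rwa [grid_top (le_refl (n+2))] at h
    case hst =>
      intro i
      rcases le_or_gt i n with hi | hi
      · have heq : {ω | stopA q u (τlow ω) n ≤ i} = {ω | τlow ω ≤ grid q u n i} := by
          ext ω; exact stopA_le_iff hq0 hqu.le hi
        rw [heq]
        exact hDmF _ (grid_nonneg hq0 hu0.le n i)
          ((grid_le_q (u := u) hq0 (by omega)).trans_lt hqT)
      · have heq : {ω | stopA q u (τlow ω) n ≤ i} = univ := by
          ext ω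
          simp only [mem_setOf_eq, mem_univ, iff_true]
          exact (stopA_le _ _).trans (by omega)
        rw [heq]; exact MeasurableSet.univ
    case hD =>
      intro i
      rcases le_or_gt i n with hi | hi
      · have heq : D ∩ {ω | stopA q u (τlow ω) n ≤ i} = {ω | τlow ω ≤ grid q u n i} := by
          ext ω
          simp only [hDdef, mem_inter_iff, mem_setOf_eq, stopA_le_iff hq0 hqu.le hi]
          exact ⟨fun h => h.2, fun h => ⟨h.trans (grid_le_q (u := u) hq0 (by omega)), h⟩⟩
        rw [heq]
        exact hDmF _ (grid_nonneg hq0 hu0.le n i)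
          ((grid_le_q (u := u) hq0 (by omega)).trans_lt hqT)
      · have h1 : D ∩ {ω | stopA q u (τlow ω) n ≤ i} = D := by
          refine inter_eq_left.2 fun ω _ => ?_
          exact (stopA_le _ _).trans (by omega)
        rw [h1]
        have hq_le : q ≤ grid q u n i := by
          rcases le_or_gt i (n+1) with h2 | h2
          · have h3 : i = n+1 := by omega
            rw [h3, grid_end]
          · rw [grid_top (by omega)]; exact hqu.le
        exact ℱ.mono hq_le _ (hDmF q hq0 hqT)
  -- A-side limit function
  set gA : Ω → ℝ := fun ω => if τlow ω ≤ q then M (τlow ω) ω else M q ω with hgAdef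
  have htendA : ∀ ω, Filter.Tendsto (fun n => M (grid q u n (stopA q u (τlow ω) n)) ω)
      atTop (𝓝 (gA ω)) := by
    intro ω
    by_cases hω : τlow ω ≤ q
    · have hb1 : ∀ n : ℕ, τlow ω ≤ grid q u n (stopA q u (τlow ω) n) :=
        fun n => stopA_hit hq0 hω n
      have hb2 : ∀ n : ℕ, grid q u n (stopA q u (τlow ω) n) ≤ τlow ω + q/(n+1) :=
        fun n => stopA_close hq0 (hlow_mem ω).1 n
      have ht' : Filter.Tendsto (fun n : ℕ => grid q u n (stopA q u (τlow ω) n))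
          atTop (𝓝 (τlow ω)) := squeeze_aux hb1 hb2
      have h2 := tendsto_path (hcont ω) (hlow_mem ω)
        (fun n => ⟨grid_nonneg hq0 hu0.le n _, (grid_le_u hq0 hqu.le n _).trans huT⟩) ht'
      have h3 : gA ω = M (τlow ω) ω := by rw [hgAdef]; simp only [if_pos hω]
      rw [h3]; exact h2
    · have hstop : ∀ n : ℕ, stopA q u (τlow ω) n = n + 1 :=
        fun n => stopA_eq_of_gt hq0 (not_le.1 hω) n
      have heq : (fun n : ℕ => M (grid q u n (stopA q u (τlow ω) n)) ω)
          = fun _ => M q ω := by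
        funext n; rw [hstop n, grid_end]
      rw [heq]
      have h3 : gA ω = M q ω := by rw [hgAdef]; simp only [if_neg hω]
      rw [h3]; exact tendsto_const_nhds
  obtain ⟨-, hintA⟩ := helperB (M u) (hint u huI)
    (fun n ω => M (grid q u n (stopA q u (τlow ω) n)) ω) gA D hAcond
    (Eventually.of_forall htendA)
  -- gA = a a.e. on D
  have hgAa : ∀ᵐ ω ∂P, ω ∈ D → gA ω = a := by
    filter_upwards [hM0] with ω h0 hω
    have hω' : τlow ω ≤ q := hω
    have h3 : gA ω = M (τlow ω) ω := by rw [hgAdef]; simp only [if_pos hω']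
    rw [h3]
    have hge : a ≤ M (τlow ω) ω := by
      have h4 := aux_hit (T := T) (a := a) (f := fun s => M s ω) (hcont ω) hqT
        (by rw [← hτlow ω]; exact hω')
      rwa [← hτlow ω] at h4
    have hle : M (τlow ω) ω ≤ a := by
      refine aux_left_lim (hcont ω) (hlow_mem ω) (fun s hs => ?_) (by rw [h0]; exact ha.le)
      refine (aux_lt_a_of_lt_tlow (f := fun s => M s ω)
        ⟨hs.1, hs.2.le.trans (hlow_mem ω).2⟩ ?_).le
      rw [← hτlow ω]; exact hs.2
    linarith
  have hDint : ∫ ω in D, M u ω ∂P = ∫ ω in D, (a : ℝ) ∂P := by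
    rw [← hintA]
    exact setIntegral_congr_ae hDm (hgAa.mono fun ω h hω => h hω)
  -- B side
  have hBcond : ∀ n : ℕ, ∃ m' : MeasurableSpace Ω, ∃ _hle : m' ≤ mΩ,
      ((fun ω => M (grid u u n (stopB u (τup ω) n)) ω) =ᵐ[P] P[M u| m'])
        ∧ MeasurableSet[m'] D := by
    intro n
    have h := helperA T ℱ M hadp hint hmart (n+1) (grid u u n)
      (grid_mono hu0.le le_rfl n) (grid_nonneg hu0.le hu0.le n)
      (fun i => (grid_le_u hu0.le le_rfl n i).trans huT)
      (fun ω => stopB u (τup ω) n) (fun ω => stopB_le _ _)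
      ?hst D ?hD
    · rwa [grid_end] at h
    case hst =>
      intro i
      rcases le_or_gt i n with hi | hi
      · have heq : {ω | stopB u (τup ω) n ≤ i} = {ω | τup ω < grid u u n i} := by
          ext ω; exact stopB_le_iff hu0.le hi
        rw [heq]
        exact hUpF _ ((grid_le_u hu0.le le_rfl n i).trans huT)
      · have heq : {ω | stopB u (τup ω) n ≤ i} = univ := by
          ext ω
          simp only [mem_setOf_eq, mem_univ, iff_true]
          exact (stopB_le _ _).trans (by omega)
        rw [heq]; exact MeasurableSet.univ
    case hD =>
      intro i
      rcases le_or_gt i n with hi | hi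
      · have heq : D ∩ {ω | stopB u (τup ω) n ≤ i}
            = D ∩ {ω | τup ω < grid u u n i} := by
          ext ω
          simp only [mem_inter_iff, mem_setOf_eq, stopB_le_iff hu0.le hi]
        rw [heq]
        rcases le_or_gt (grid u u n i) q with h2 | h2
        · have heq2 : D ∩ {ω | τup ω < grid u u n i} = {ω | τup ω < grid u u n i} := by
            refine inter_eq_right.2 fun ω hω => ?_
            exact (hlowle ω).trans (le_of_lt (lt_of_lt_of_le hω h2))
          rw [heq2]
          exact hUpF _ ((grid_le_u hu0.le le_rfl n i).trans huT)
        · exact MeasurableSet.inter (ℱ.mono h2.le _ (hDmF q hq0 hqT))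
            (hUpF _ ((grid_le_u hu0.le le_rfl n i).trans huT))
      · have h1 : D ∩ {ω | stopB u (τup ω) n ≤ i} = D := by
          refine inter_eq_left.2 fun ω _ => ?_
          exact (stopB_le _ _).trans (by omega)
        rw [h1]
        have hq_le : q ≤ grid u u n i := by
          rcases le_or_gt i (n+1) with h2 | h2
          · have h3 : i = n+1 := by omega
            rw [h3, grid_end]; exact hqu.le
          · rw [grid_top (by omega)]; exact hqu.le
        exact ℱ.mono hq_le _ (hDmF q hq0 hqT)
  set gB : Ω → ℝ := fun ω => M (min (τup ω) u) ω with hgBdef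
  have htendB : ∀ ω, Filter.Tendsto (fun n => M (grid u u n (stopB u (τup ω) n)) ω)
      atTop (𝓝 (gB ω)) := by
    intro ω
    rcases lt_or_ge (τup ω) u with hc | hc
    · have hb1 : ∀ n : ℕ, τup ω ≤ grid u u n (stopB u (τup ω) n) :=
        fun n => (stopB_hit hu0 hc n).le
      have hb2 : ∀ n : ℕ, grid u u n (stopB u (τup ω) n) ≤ τup ω + u/(n+1) :=
        fun n => stopB_close hu0.le (hup_mem ω).1 n
      have ht' : Filter.Tendsto (fun n : ℕ => grid u u n (stopB u (τup ω) n))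
          atTop (𝓝 (τup ω)) := squeeze_aux hb1 hb2
      have h2 := tendsto_path (hcont ω) (hup_mem ω)
        (fun n => ⟨grid_nonneg hu0.le hu0.le n _, (grid_le_u hu0.le le_rfl n _).trans huT⟩) ht'
      have h3 : gB ω = M (τup ω) ω := by rw [hgBdef]; simp only [min_eq_left hc.le]
      rw [h3]; exact h2
    · have hstop : ∀ n : ℕ, stopB u (τup ω) n = n + 1 :=
        fun n => stopB_eq_of_ge hu0 hc n
      have heq : (fun n : ℕ => M (grid u u n (stopB u (τup ω) n)) ω)
          = fun _ => M u ω := by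
        funext n; rw [hstop n, grid_end]
      rw [heq]
      have h3 : gB ω = M u ω := by rw [hgBdef]; simp only [min_eq_right hc]
      rw [h3]; exact tendsto_const_nhds
  obtain ⟨hgBint, hintB⟩ := helperB (M u) (hint u huI)
    (fun n ω => M (grid u u n (stopB u (τup ω) n)) ω) gB D hBcond
    (Eventually.of_forall htendB)
  -- gB ≤ a a.e.
  have hgBle : ∀ᵐ ω ∂P, gB ω ≤ a := by
    filter_upwards [hM0] with ω h0
    rw [hgBdef]
    refine aux_left_lim (hcont ω)
      ⟨le_min (hup_mem ω).1 hu0.le, (min_le_right _ _).trans huT⟩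
      (fun s hs => ?_) (by rw [h0]; exact ha.le)
    refine aux_le_a_of_lt_tup (f := fun s => M s ω)
      ⟨hs.1, hs.2.le.trans ((min_le_right _ _).trans huT)⟩ ?_
    rw [← hτup ω]
    exact hs.2.trans_le (min_le_left _ _)
  -- combine
  have hzero : ∫ ω in D, (a - gB ω) ∂P = 0 := by
    rw [integral_sub (integrable_const a).integrableOn hgBint.integrableOn]
    rw [hintB, hDint, sub_self]
  have hnn : 0 ≤ᵐ[P.restrict D] fun ω => a - gB ω :=
    ae_restrict_of_ae (hgBle.mono fun ω h => by simp only [Pi.zero_apply]; linarith)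
  have hzero2 := (setIntegral_eq_zero_iff_of_nonneg_ae hnn
    ((integrable_const a).sub hgBint).integrableOn).1 hzero
  have hfinal : ∀ᵐ ω ∂P, ω ∈ D → a - gB ω = 0 := (ae_restrict_iff' hDm).1 hzero2
  filter_upwards [hfinal] with ω h hlowq hupu
  have h2 := h hlowq
  have h3 : gB ω = M u ω := by rw [hgBdef]; simp only [min_eq_right hupu.le]
  rw [h3] at h2
  linarith

end key

/-- For a continuous-path martingale `(M_t)_{t ∈ [0,T]}` with `M_0 = m` a.s., `a > m`, and
such that a.s. `M` is not identically `a` on any nondegenerate subinterval of `[0,T]`,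
the pathwise hitting times `τ̲_a = inf{t ∈ [0,T] : M_t ≥ a} ∧ T` and
`τ̄_a = inf{t ∈ [0,T] : M_t > a} ∧ T` coincide almost surely. -/
theorem stmt_14 {Ω : Type*} {mΩ : MeasurableSpace Ω} {P : Measure Ω}
    [IsProbabilityMeasure P]
    (T : ℝ) (hT : 0 < T) (ℱ : Filtration ℝ mΩ)
    (M : ℝ → Ω → ℝ)
    (hadp : Adapted ℱ M)
    (hint : ∀ t ∈ Set.Icc (0 : ℝ) T, Integrable (M t) P)
    (hmart : ∀ s t : ℝ, 0 ≤ s → s ≤ t → t ≤ T → P[M t | ℱ s] =ᵐ[P] M s)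
    (hcont : ∀ ω, ContinuousOn (fun s => M s ω) (Set.Icc 0 T))
    (m : ℝ) (hM0 : ∀ᵐ ω ∂P, M 0 ω = m)
    (a : ℝ) (ha : m < a)
    (hflat : ∀ᵐ ω ∂P, ¬ ∃ s r : ℝ, 0 ≤ s ∧ s < r ∧ r ≤ T ∧
      ∀ u ∈ Set.Icc s r, M u ω = a)
    (τlow τup : Ω → ℝ)
    (hτlow : ∀ ω, τlow ω = sInf ({s ∈ Set.Icc (0 : ℝ) T | a ≤ M s ω} ∪ {T}))
    (hτup : ∀ ω, τup ω = sInf ({s ∈ Set.Icc (0 : ℝ) T | a < M s ω} ∪ {T})) :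
    τlow =ᵐ[P] τup := by
  have hT0 : (0:ℝ) ≤ T := hT.le
  have hlow_mem : ∀ ω, τlow ω ∈ Icc 0 T := fun ω => by
    rw [hτlow ω]; exact aux_sInf_mem_Icc hT0 (fun x hx => hx.1)
  have hup_mem : ∀ ω, τup ω ∈ Icc 0 T := fun ω => by
    rw [hτup ω]; exact aux_sInf_mem_Icc hT0 (fun x hx => hx.1)
  have hlowle : ∀ ω, τlow ω ≤ τup ω := fun ω => by
    rw [hτlow ω, hτup ω]; exact aux_low_le_up
  have hkey : ∀ᵐ ω ∂P, ∀ q u : ℚ, 0 ≤ (q:ℝ) → (q:ℝ) < u → (u:ℝ) ≤ T →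
      (τlow ω ≤ q → (u:ℝ) < τup ω → M u ω = a) := by
    rw [ae_all_iff]
    intro q
    rw [ae_all_iff]
    intro u
    by_cases h : 0 ≤ (q:ℝ) ∧ (q:ℝ) < u ∧ (u:ℝ) ≤ T
    · obtain ⟨h1, h2, h3⟩ := h
      filter_upwards [keyLemma T hT ℱ M hadp hint hmart hcont m hM0 a ha
        τlow τup hτlow hτup q u h1 h2 h3] with ω hω
      exact fun _ _ _ => hω
    · filter_upwards with ω h1 h2 h3
      exact absurd ⟨h1, h2, h3⟩ h
  filter_upwards [hkey, hflat] with ω hω hflatω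
  refine le_antisymm (hlowle ω) ?_
  by_contra hlt
  push_neg at hlt
  obtain ⟨s, hs1, hs2⟩ := exists_rat_btwn hlt
  obtain ⟨r, hr1, hr2⟩ := exists_rat_btwn hs2
  apply hflatω
  refine ⟨(s:ℝ), (r:ℝ), (hlow_mem ω).1.trans hs1.le, by exact_mod_cast hr1,
    hr2.le.trans (hup_mem ω).2, ?_⟩
  intro x hx
  have hxlow : τlow ω < x := hs1.trans_le hx.1
  have hxup : x < τup ω := lt_of_le_of_lt hx.2 hr2
  have hrat : ∀ v : ℚ, τlow ω < v → (v:ℝ) < τup ω → M v ω = a := by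
    intro v hv1 hv2
    obtain ⟨p, hp1, hp2⟩ := exists_rat_btwn hv1
    exact hω p v ((hlow_mem ω).1.trans hp1.le) (by exact_mod_cast hp2)
      (hv2.le.trans (hup_mem ω).2) hp1.le hv2
  have hx0T : x ∈ Icc 0 T :=
    ⟨(hlow_mem ω).1.trans hxlow.le, hx.2.trans (hr2.le.trans (hup_mem ω).2)⟩
  have hseq : ∀ k : ℕ, ∃ v : ℚ, max (τlow ω) (x - 1/(k+1)) < v ∧ (v:ℝ) < x := by
    intro k
    refine exists_rat_btwn (max_lt hxlow ?_)
    have hk : (0:ℝ) < 1/(k+1) := by positivity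
    linarith
  choose v hv1 hv2 using hseq
  have hvx : Filter.Tendsto (fun k : ℕ => (v k : ℝ)) atTop (𝓝 x) := by
    have hlow2 : Filter.Tendsto (fun k : ℕ => x - 1/(k+1)) atTop (𝓝 x) := by
      have h3 : Filter.Tendsto (fun k : ℕ => (1:ℝ)/(k+1)) atTop (𝓝 0) := by
        apply Filter.Tendsto.div_atTop tendsto_const_nhds
        exact tendsto_atTop_add_const_right _ 1 tendsto_natCast_atTop_atTop
      simpa using tendsto_const_nhds.sub h3
    exact tendsto_of_tendsto_of_tendsto_of_le_of_le hlow2 tendsto_const_nhds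
      (fun k => le_of_lt ((le_max_right _ _).trans_lt (hv1 k)))
      (fun k => (hv2 k).le)
  have hMv : ∀ k, M (v k) ω = a := fun k =>
    hrat (v k) ((le_max_left _ _).trans_lt (hv1 k)) ((hv2 k).trans hxup)
  have hvmem : ∀ k, (v k : ℝ) ∈ Icc 0 T := fun k =>
    ⟨(hlow_mem ω).1.trans (le_of_lt ((le_max_left _ _).trans_lt (hv1 k))),
      (hv2 k).le.trans hx0T.2⟩
  have hlim := tendsto_path (hcont ω) hx0T hvmem hvx
  rw [show (fun k => M ((v k : ℝ)) ω) = fun _ => a from funext hMv] at hlim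
  exact tendsto_nhds_unique hlim tendsto_const_nhds
end

section
/- Let a ∈ ℝ with m > -a. Define pathwise σ̲_a := inf{t ∈ [0,T] : M_t ≤ -a} ∧ T and σ̄_a := inf{t ∈ [0,T] : M_t < -a} ∧ T (inf ∅ := +∞). Then for every t ∈ [0,T], M_{t ∧ σ̲_a} = M_{t ∧ σ̄_a} P-almost surely. -/
open MeasureTheory Set Filter

namespace Stmt15Aux

/-- basic facts about `sInf (S ∪ {T})` -/
lemma sInfU_nonneg {T : ℝ} (hT : 0 ≤ T) {S : Set ℝ} (hS : S ⊆ Set.Icc 0 T) :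
    0 ≤ sInf (S ∪ {T}) := by
  refine le_csInf ⟨T, by simp⟩ ?_
  rintro x (hx | hx)
  · exact (hS hx).1
  · simp only [mem_singleton_iff] at hx; simpa [hx] using hT

lemma sInfU_bddBelow {T : ℝ} (hT : 0 ≤ T) {S : Set ℝ} (hS : S ⊆ Set.Icc 0 T) :
    BddBelow (S ∪ {T}) := by
  refine ⟨0, ?_⟩
  rintro x (hx | hx)
  · exact (hS hx).1
  · simp only [mem_singleton_iff] at hx; simpa [hx] using hT

lemma sInfU_le_T {T : ℝ} (hT : 0 ≤ T) {S : Set ℝ} (hS : S ⊆ Set.Icc 0 T) :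
    sInf (S ∪ {T}) ≤ T :=
  csInf_le (sInfU_bddBelow hT hS) (by simp)

lemma sInfU_mono {T : ℝ} (hT : 0 ≤ T) {S₁ S₂ : Set ℝ} (h12 : S₁ ⊆ S₂)
    (hS : S₂ ⊆ Set.Icc 0 T) :
    sInf (S₂ ∪ {T}) ≤ sInf (S₁ ∪ {T}) :=
  csInf_le_csInf (sInfU_bddBelow hT hS) ⟨T, by simp⟩ (union_subset_union_left _ h12)

lemma sInfU_le_of_mem {T : ℝ} (hT : 0 ≤ T) {S : Set ℝ} (hS : S ⊆ Set.Icc 0 T)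
    {x : ℝ} (hx : x ∈ S) : sInf (S ∪ {T}) ≤ x :=
  csInf_le (sInfU_bddBelow hT hS) (Or.inl hx)

lemma not_mem_of_lt_sInfU {T : ℝ} (hT : 0 ≤ T) {S : Set ℝ} (hS : S ⊆ Set.Icc 0 T)
    {u : ℝ} (hu : u < sInf (S ∪ {T})) : u ∉ S := by
  intro hmem
  exact absurd (sInfU_le_of_mem hT hS hmem) (not_le.2 hu)

/-- approximation from the right when the infimum is `< T`. -/
lemma sInfU_approx {T : ℝ} (hT : 0 ≤ T) {S : Set ℝ} (hS : S ⊆ Set.Icc 0 T)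
    (h : sInf (S ∪ {T}) < T) {ε : ℝ} (hε : 0 < ε) :
    ∃ x ∈ S, sInf (S ∪ {T}) ≤ x ∧ x < sInf (S ∪ {T}) + ε := by
  set σ := sInf (S ∪ {T}) with hσ
  have hlt : σ < min T (σ + ε) := lt_min h (by linarith)
  obtain ⟨x, hxmem, hxlt⟩ := exists_lt_of_csInf_lt (⟨T, by simp⟩ : (S ∪ {T}).Nonempty) hlt
  have hxS : x ∈ S := by
    rcases hxmem with hx | hx
    · exact hx
    · simp only [mem_singleton_iff] at hx
      exact absurd (hxlt.trans_le (min_le_left _ _)) (by simp [hx])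
  exact ⟨x, hxS, csInf_le (sInfU_bddBelow hT hS) (Or.inl hxS),
    hxlt.trans_le (min_le_right _ _)⟩

/-- value at the infimum is `≤ b` when inf `< T`, for `S ⊆ {f ≤ b}`. -/
lemma val_le_at_sInfU {T b : ℝ} {f : ℝ → ℝ} (hc : ContinuousOn f (Set.Icc 0 T))
    (hT : 0 ≤ T) {S : Set ℝ} (hS : S ⊆ {s ∈ Set.Icc 0 T | f s ≤ b})
    (h : sInf (S ∪ {T}) < T) : f (sInf (S ∪ {T})) ≤ b := by
  have hSIcc : S ⊆ Set.Icc 0 T := fun x hx => (hS hx).1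
  set σ := sInf (S ∪ {T}) with hσ
  have hch : ∀ j : ℕ, ∃ x, x ∈ S ∧ σ ≤ x ∧ x < σ + 1 / (j + 1) := by
    intro j
    obtain ⟨x, h1, h2, h3⟩ := sInfU_approx hT hSIcc h (by positivity : (0:ℝ) < 1 / (j+1))
    exact ⟨x, h1, h2, h3⟩
  choose x hxS hxge hxlt using hch
  have hxt : Tendsto x atTop (nhds σ) := by
    have h1 : Tendsto (fun j : ℕ => σ + 1 / (j + 1)) atTop (nhds σ) := by
      simpa using tendsto_const_nhds.add (tendsto_one_div_add_atTop_nhds_zero_nat (𝕜 := ℝ))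
    exact tendsto_of_tendsto_of_tendsto_of_le_of_le tendsto_const_nhds h1
      (fun j => hxge j) (fun j => (hxlt j).le)
  have hσIcc : σ ∈ Set.Icc 0 T := ⟨sInfU_nonneg hT hSIcc, h.le⟩
  have hft : Tendsto (fun j => f (x j)) atTop (nhds (f σ)) := by
    have := (hc σ hσIcc).tendsto
    refine this.comp (tendsto_nhdsWithin_iff.2 ⟨hxt, ?_⟩)
    exact Eventually.of_forall fun j => hSIcc (hxS j)
  exact le_of_tendsto hft (Eventually.of_forall fun j => (hS (hxS j)).2)

/-- left-limit lower bound. -/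
lemma le_val_of_left {T b σ : ℝ} {f : ℝ → ℝ} (hc : ContinuousOn f (Set.Icc 0 T))
    (hσ : σ ∈ Set.Icc 0 T) (h0 : b ≤ f 0) (hlt : ∀ u, 0 ≤ u → u < σ → b ≤ f u) :
    b ≤ f σ := by
  rcases eq_or_lt_of_le hσ.1 with h | h
  · rw [← h]; exact h0
  · set u : ℕ → ℝ := fun j => σ - σ / (j + 2) with hu
    have huIcc : ∀ j, u j ∈ Set.Icc 0 T := by
      intro j
      have h1 : σ / (j + 2) ≤ σ := by
        rw [div_le_iff₀ (by positivity)]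
        nlinarith [h.le]
      have h2 : 0 < σ / (j + 2) := by positivity
      constructor <;> simp only [hu] <;> [linarith; linarith [hσ.2]]
    have hult : ∀ j, u j < σ := by
      intro j
      have : 0 < σ / (j + 2) := by positivity
      simp only [hu]; linarith
    have hut : Tendsto u atTop (nhds σ) := by
      have h1 : Tendsto (fun j : ℕ => σ / (j + 2)) atTop (nhds 0) := by
        rw [show (0:ℝ) = σ * 0 by ring]
        refine Tendsto.const_mul σ ?_
        have := tendsto_one_div_add_atTop_nhds_zero_nat (𝕜 := ℝ)
        have h2 : Tendsto (fun n : ℕ => (1:ℝ) / (n + 1)) atTop (nhds 0) := this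
        have h3 := h2.comp (tendsto_add_atTop_nat 1)
        refine h3.congr fun n => ?_
        simp [Function.comp]
        push_cast
        ring_nf
      have h2 : Tendsto (fun j : ℕ => σ - σ / (j + 2)) atTop (nhds (σ - 0)) :=
        (tendsto_const_nhds : Tendsto (fun _ : ℕ => σ) atTop (nhds σ)).sub h1
      simpa using h2
    have hft : Tendsto (fun j => f (u j)) atTop (nhds (f σ)) := by
      refine (hc σ hσ).tendsto.comp (tendsto_nhdsWithin_iff.2 ⟨hut, ?_⟩)
      exact Eventually.of_forall fun j => huIcc j
    exact ge_of_tendsto hft (Eventually.of_forall fun j => hlt (u j) (huIcc j).1 (hult j))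

end Stmt15Aux

namespace Stmt15Aux

lemma exists_rat_near {T : ℝ} {f : ℝ → ℝ} (hc : ContinuousOn f (Set.Icc 0 T))
    {u β : ℝ} (hu0 : 0 < u) (huT : u ≤ T) (hfu : f u < β) :
    ∃ q : ℚ, 0 ≤ (q : ℝ) ∧ (q : ℝ) < u ∧ f q < β := by
  have hc' := hc u ⟨hu0.le, huT⟩
  rw [Metric.continuousWithinAt_iff] at hc'
  obtain ⟨δ, hδ, hδ'⟩ := hc' (β - f u) (by linarith)
  have ha : max (u - δ / 2) 0 < u := max_lt (by linarith) hu0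
  obtain ⟨q, hq1, hq2⟩ := exists_rat_btwn ha
  have hq0 : 0 ≤ (q : ℝ) := le_of_lt (lt_of_le_of_lt (le_max_right _ _) hq1)
  have hqIcc : (q : ℝ) ∈ Set.Icc 0 T := ⟨hq0, le_trans hq2.le huT⟩
  have hdist : dist (q : ℝ) u < δ := by
    rw [Real.dist_eq, abs_of_nonpos (by linarith)]
    have := lt_of_le_of_lt (le_max_left (u - δ/2) 0) hq1
    linarith
  have := hδ' hqIcc hdist
  rw [Real.dist_eq] at this
  have := abs_lt.1 this
  exact ⟨q, hq0, hq2, by linarith [this.1, this.2]⟩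

lemma exists_le_of_seq {T s b : ℝ} {f : ℝ → ℝ} (hc : ContinuousOn f (Set.Icc 0 T))
    (hsT : s ≤ T) (u : ℕ → ℝ) (hu : ∀ j, u j ∈ Set.Icc 0 s)
    (hfu : ∀ j, f (u j) < b + 1 / (j + 1)) :
    ∃ v ∈ Set.Icc (0:ℝ) s, f v ≤ b := by
  obtain ⟨v, hv, φ, hφ, hconv⟩ := isCompact_Icc.tendsto_subseq hu
  have hvT : v ∈ Set.Icc 0 T := ⟨hv.1, hv.2.trans hsT⟩
  have hIccsub : Set.Icc (0:ℝ) s ⊆ Set.Icc 0 T := fun x hx => ⟨hx.1, hx.2.trans hsT⟩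
  have hft : Tendsto (fun i => f (u (φ i))) atTop (nhds (f v)) := by
    refine (hc v hvT).tendsto.comp (tendsto_nhdsWithin_iff.2 ⟨hconv, ?_⟩)
    exact Eventually.of_forall fun i => hIccsub (hu (φ i))
  have hβt : Tendsto (fun i : ℕ => b + 1 / ((φ i : ℝ) + 1)) atTop (nhds (b + 0)) := by
    refine Tendsto.const_add b ?_
    exact tendsto_one_div_add_atTop_nhds_zero_nat.comp hφ.tendsto_atTop
  rw [add_zero] at hβt
  refine ⟨v, hv, le_of_tendsto_of_tendsto' hft hβt fun i => (hfu (φ i)).le⟩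

section Meas

variable {Ω : Type*} {mΩ : MeasurableSpace Ω} (T : ℝ) (ℱ : Filtration ℝ mΩ)
  (M : ℝ → Ω → ℝ)

lemma measSet_low (hadp : Adapted ℱ M)
    (hcont : ∀ ω, ContinuousOn (fun s => M s ω) (Set.Icc 0 T))
    (a : ℝ) (σl : Ω → ℝ)
    (hσl : ∀ ω, σl ω = sInf ({s ∈ Set.Icc (0 : ℝ) T | M s ω ≤ -a} ∪ {T}))
    {s : ℝ} (hs0 : 0 ≤ s) (hsT : s < T) :
    MeasurableSet[ℱ s] {ω | σl ω ≤ s} := by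
  have hT : 0 ≤ T := hs0.trans hsT.le
  have hkey : {ω | σl ω ≤ s} =
      ⋂ (j : ℕ), ({ω | M 0 ω < -a + 1/(j+1)} ∪ {ω | M s ω < -a + 1/(j+1)} ∪
        ⋃ (q : ℚ) (_ : 0 ≤ (q:ℝ) ∧ (q:ℝ) ≤ s), {ω | M (q:ℝ) ω < -a + 1/(j+1)}) := by
    ext ω
    simp only [mem_setOf_eq, mem_iInter, mem_union, mem_iUnion]
    constructor
    · intro hω j
      set S : Set ℝ := {s' ∈ Set.Icc (0:ℝ) T | M s' ω ≤ -a} with hS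
      have hSsub : S ⊆ Set.Icc 0 T := fun x hx => hx.1
      have hflow : M (σl ω) ω ≤ -a := by
        rw [hσl ω]
        exact val_le_at_sInfU (hcont ω) hT (fun x hx => hx) (by rw [← hσl ω]; exact lt_of_le_of_lt hω hsT)
      have hσ0 : 0 ≤ σl ω := by rw [hσl ω]; exact sInfU_nonneg hT hSsub
      have hβ : M (σl ω) ω < -a + 1/(j+1) := by
        have hj : (0:ℝ) < 1/(j+1) := by positivity
        linarith
      rcases eq_or_lt_of_le hσ0 with h0 | h0
      · left; left; rw [h0]; exact hβ
      · obtain ⟨q, hq0, hqlt, hqval⟩ :=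
          exists_rat_near (hcont ω) h0 (le_trans hω hsT.le) hβ
        right
        exact ⟨q, ⟨hq0, le_trans hqlt.le hω⟩, hqval⟩
    · intro hω
      have hch : ∀ j : ℕ, ∃ u, u ∈ Set.Icc (0:ℝ) s ∧ M u ω < -a + 1/(j+1) := by
        intro j
        rcases hω j with (h | h) | ⟨q, ⟨hq0, hqs⟩, hqval⟩
        · exact ⟨0, ⟨le_refl _, hs0⟩, h⟩
        · exact ⟨s, ⟨hs0, le_refl _⟩, h⟩
        · exact ⟨q, ⟨hq0, hqs⟩, hqval⟩
      choose u hu hfu using hch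
      obtain ⟨v, hv, hfv⟩ := exists_le_of_seq (hcont ω) hsT.le u hu hfu
      have hvS : v ∈ {s' ∈ Set.Icc (0:ℝ) T | M s' ω ≤ -a} :=
        ⟨⟨hv.1, hv.2.trans hsT.le⟩, hfv⟩
      rw [hσl ω]
      exact le_trans (sInfU_le_of_mem hT (fun x hx => hx.1) hvS) hv.2
  rw [hkey]
  refine MeasurableSet.iInter fun j => ?_
  refine MeasurableSet.union (MeasurableSet.union ?_ ?_) ?_
  · exact ℱ.mono hs0 _ ((hadp 0) measurableSet_Iio)
  · exact (hadp s) measurableSet_Iio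
  · refine MeasurableSet.iUnion fun q => MeasurableSet.iUnion fun hq => ?_
    exact ℱ.mono hq.2 _ ((hadp (q:ℝ)) measurableSet_Iio)

lemma measSet_up (hadp : Adapted ℱ M)
    (hcont : ∀ ω, ContinuousOn (fun s => M s ω) (Set.Icc 0 T))
    (a : ℝ) (σu : Ω → ℝ)
    (hσu : ∀ ω, σu ω = sInf ({s ∈ Set.Icc (0 : ℝ) T | M s ω < -a} ∪ {T}))
    {s : ℝ} (hs0 : 0 < s) (hsT : s ≤ T) :
    MeasurableSet[ℱ s] {ω | σu ω < s} := by
  have hT : 0 ≤ T := hs0.le.trans hsT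
  have hkey : {ω | σu ω < s} =
      {ω | M 0 ω < -a} ∪ ⋃ (q : ℚ) (_ : 0 ≤ (q:ℝ) ∧ (q:ℝ) < s), {ω | M (q:ℝ) ω < -a} := by
    ext ω
    simp only [mem_setOf_eq, mem_union, mem_iUnion]
    constructor
    · intro hω
      set S : Set ℝ := {s' ∈ Set.Icc (0:ℝ) T | M s' ω < -a} with hS
      have hSsub : S ⊆ Set.Icc 0 T := fun x hx => hx.1
      obtain ⟨x, hxS, hxge, hxlt⟩ := by
        refine sInfU_approx hT hSsub ?_ (show (0:ℝ) < s - σu ω by rw [sub_pos]; exact hω)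
        · rw [← hσu ω]; exact lt_of_lt_of_le hω hsT
      rw [← hσu ω] at hxlt
      have hxs : x < s := by linarith
      rcases eq_or_lt_of_le hxS.1.1 with h0 | h0
      · left; rw [h0]; exact hxS.2
      · obtain ⟨q, hq0, hqlt, hqval⟩ := exists_rat_near (hcont ω) h0 hxS.1.2 hxS.2
        right
        exact ⟨q, ⟨hq0, hqlt.trans hxs⟩, hqval⟩
    · intro hω
      rcases hω with h | ⟨q, ⟨hq0, hqs⟩, hqval⟩
      · have h0S : (0:ℝ) ∈ {s' ∈ Set.Icc (0:ℝ) T | M s' ω < -a} := ⟨⟨le_refl _, hT⟩, h⟩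
        rw [hσu ω]
        exact lt_of_le_of_lt (sInfU_le_of_mem hT (fun x hx => hx.1) h0S) hs0
      · have hqS : (q:ℝ) ∈ {s' ∈ Set.Icc (0:ℝ) T | M s' ω < -a} :=
          ⟨⟨hq0, hqs.le.trans hsT⟩, hqval⟩
        rw [hσu ω]
        exact lt_of_le_of_lt (sInfU_le_of_mem hT (fun x hx => hx.1) hqS) hqs
  rw [hkey]
  refine MeasurableSet.union ?_ ?_
  · exact ℱ.mono hs0.le _ ((hadp 0) measurableSet_Iio)
  · refine MeasurableSet.iUnion fun q => MeasurableSet.iUnion fun hq => ?_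
    exact ℱ.mono hq.2.le _ ((hadp (q:ℝ)) measurableSet_Iio)

end Meas
end Stmt15Aux

namespace Stmt15Aux

variable {Ω : Type*} {mΩ : MeasurableSpace Ω} {P : Measure Ω} [IsProbabilityMeasure P]

set_option maxHeartbeats 2000000 in
lemma key (T : ℝ) (ℱ : Filtration ℝ mΩ) (M : ℝ → Ω → ℝ)
    (hadp : Adapted ℱ M)
    (hint : ∀ s ∈ Set.Icc (0:ℝ) T, Integrable (M s) P)
    (hsuper : ∀ s u : ℝ, 0 ≤ s → s ≤ u → u ≤ T → P[M u | ℱ s] ≤ᵐ[P] M s)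
    (hcont : ∀ ω, ContinuousOn (fun s => M s ω) (Set.Icc 0 T))
    (b : ℝ) (σl σu : Ω → ℝ) (t : ℝ) (ht0 : 0 < t) (htT : t ≤ T)
    (hl0 : ∀ ω, 0 ≤ σl ω) (hu0 : ∀ ω, 0 ≤ σu ω) (hlu : ∀ ω, σl ω ≤ σu ω)
    (hsl : ∀ s : ℝ, 0 ≤ s → s < t → MeasurableSet[ℱ s] {ω | σl ω ≤ s})
    (hsu : ∀ s : ℝ, 0 < s → s ≤ t → MeasurableSet[ℱ s] {ω | σu ω < s})
    (hXval : ∀ᵐ ω ∂P, σl ω < t → M (σl ω) ω = b)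
    (hYge : ∀ᵐ ω ∂P, b ≤ M (min t (σu ω)) ω) :
    ∀ᵐ ω ∂P, M (min t (σl ω)) ω = M (min t (σu ω)) ω := by
  have hT0 : 0 ≤ T := ht0.le.trans htT
  set c : ℝ := b + 1 with hc
  set N : ℝ → Ω → ℝ := fun s ω => min (M s ω) c - c with hN
  -- basic properties of N
  have hN_nonpos : ∀ s ω, N s ω ≤ 0 := fun s ω => by
    simp only [hN, sub_nonpos]; exact min_le_right _ _
  have hN_meas : ∀ s, StronglyMeasurable[ℱ s] (N s) := fun s =>
    (((hadp s).min measurable_const).sub measurable_const).stronglyMeasurable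
  have hN_int : ∀ s, s ∈ Set.Icc (0:ℝ) T → Integrable (N s) P := by
    intro s hs
    refine Integrable.mono' (((hint s hs).abs.add (integrable_const (|c| + |c|)))) 
      ((hN_meas s).mono (ℱ.le s)).aestronglyMeasurable ?_
    refine Eventually.of_forall fun ω => ?_
    simp only [hN, Real.norm_eq_abs]
    calc |min (M s ω) c - c| ≤ |min (M s ω) c| + |c| := abs_sub _ _
      _ ≤ max |M s ω| |c| + |c| := by gcongr; exact abs_min_le_max_abs_abs
      _ ≤ (|M s ω| + |c|) + |c| := by gcongr; exact max_le (le_add_of_nonneg_right (abs_nonneg _)) (le_add_of_nonneg_left (abs_nonneg _))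
      _ = |M s ω| + (|c| + |c|) := by ring
  have hN_cont : ∀ ω, ContinuousOn (fun s => N s ω) (Set.Icc 0 T) := fun ω =>
    ((hcont ω).inf continuousOn_const).sub continuousOn_const
  have hN_super : ∀ s u : ℝ, 0 ≤ s → s ≤ u → u ≤ T → P[N u | ℱ s] ≤ᵐ[P] N s := by
    intro s u hs hsu' huT
    have hsIcc : s ∈ Set.Icc (0:ℝ) T := ⟨hs, hsu'.trans huT⟩
    have huIcc : u ∈ Set.Icc (0:ℝ) T := ⟨hs.trans hsu', huT⟩
    have hmin_int : Integrable (fun ω => min (M u ω) c) P := by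
      have := hN_int u huIcc
      have h2 : (fun ω => min (M u ω) c) = fun ω => N u ω + c := by
        funext ω; simp [hN]
      rw [h2]; exact this.add (integrable_const c)
    have h1 : P[N u | ℱ s] =ᵐ[P] P[fun ω => min (M u ω) c | ℱ s] - fun _ => c := by
      have : N u = (fun ω => min (M u ω) c) - fun _ => c := by funext ω; simp [hN]
      rw [this]
      refine (condExp_sub hmin_int (integrable_const c) _).trans ?_
      rw [condExp_const (ℱ.le s)]
    have hA : P[fun ω => min (M u ω) c | ℱ s] ≤ᵐ[P] M s := by
      refine (condExp_mono hmin_int (hint u huIcc)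
        (Eventually.of_forall fun ω => min_le_left _ _)).trans (hsuper s u hs hsu' huT)
    have hB : P[fun ω => min (M u ω) c | ℱ s] ≤ᵐ[P] fun _ => c := by
      have hBB : P[fun ω => min (M u ω) c | ℱ s] ≤ᵐ[P] P[(fun _ => c : Ω → ℝ) | ℱ s] :=
        condExp_mono hmin_int (integrable_const c)
          (Eventually.of_forall fun ω => min_le_right (M u ω) c)
      rwa [condExp_const (ℱ.le s)] at hBB
    filter_upwards [h1, hA, hB] with ω hω1 hω2 hω3
    rw [hω1]
    simp only [Pi.sub_apply, hN]
    exact sub_le_sub_right (le_min hω2 hω3) c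
  -- the grid
  set gg : ℕ → ℕ → ℝ := fun n k => ((min k (n+1) : ℕ) : ℝ) * t / ((n:ℝ)+1) with hgg
  have hgg_nonneg : ∀ n k, 0 ≤ gg n k := fun n k => by positivity
  have hgg_le : ∀ n k, gg n k ≤ t := by
    intro n k
    rw [hgg, div_le_iff₀ (by positivity)]
    have : ((min k (n+1) : ℕ) : ℝ) ≤ ((n:ℝ)+1) := by
      have := min_le_right k (n+1)
      exact_mod_cast this
    nlinarith
  have hgg_Icc : ∀ n k, gg n k ∈ Set.Icc (0:ℝ) T := fun n k =>
    ⟨hgg_nonneg n k, (hgg_le n k).trans htT⟩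
  have hgg_mono : ∀ n, Monotone (gg n) := by
    intro n k l hkl
    simp only [hgg]
    gcongr
  have hgg_top : ∀ n, gg n (n+1) = t := by
    intro n
    simp only [hgg, min_self]
    field_simp
    norm_num
  -- filtration and process on the grid
  set 𝒢 : ℕ → Filtration ℕ mΩ := fun n =>
    ⟨fun k => ℱ (gg n k), fun _ _ hkl => ℱ.mono (hgg_mono _ hkl), fun k => ℱ.le _⟩ with h𝒢
  set ff : ℕ → ℕ → Ω → ℝ := fun n k => N (gg n k) with hff
  have hff_super : ∀ n, Supermartingale (ff n) (𝒢 n) P := by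
    intro n
    refine ⟨fun k => (hN_meas (gg n k)).mono le_rfl, fun i j hij => ?_,
      fun k => hN_int _ (hgg_Icc n k)⟩
    exact hN_super (gg n i) (gg n j) (hgg_nonneg n i) (hgg_mono n hij) (hgg_Icc n j).2
  -- the discretized stopping times
  set τ : ℕ → Ω → ℕ := fun n ω => min (n+1) ⌈((n:ℝ)+1) * σl ω / t⌉₊ with hτ
  set ρ : ℕ → Ω → ℕ := fun n ω => min (n+1) (⌊((n:ℝ)+1) * σu ω / t⌋₊ + 1) with hρ
  have hτ_bdd : ∀ n ω, τ n ω ≤ n + 1 := fun n ω => min_le_left _ _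
  have hρ_bdd : ∀ n ω, ρ n ω ≤ n + 1 := fun n ω => min_le_left _ _
  have hτ_le_ρ : ∀ n, τ n ≤ ρ n := by
    intro n ω
    refine min_le_min_left _ ?_
    have h1 : ((n:ℝ)+1) * σl ω / t ≤ ((n:ℝ)+1) * σu ω / t := by
      gcongr
      exact hlu ω
    calc ⌈((n:ℝ)+1) * σl ω / t⌉₊ ≤ ⌈((n:ℝ)+1) * σu ω / t⌉₊ := Nat.ceil_mono h1
      _ ≤ ⌊((n:ℝ)+1) * σu ω / t⌋₊ + 1 := by
          rw [Nat.ceil_le]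
          push_cast
          exact (Nat.lt_floor_add_one _).le
  have hτ_le_iff : ∀ n ω (k : ℕ), k < n + 1 → (τ n ω ≤ k ↔ σl ω ≤ gg n k) := by
    intro n ω k hk
    have hd : (0:ℝ) < (n:ℝ) + 1 := by positivity
    have hmin : min k (n+1) = k := min_eq_left (by omega)
    have hggk : gg n k = (k:ℝ) * t / ((n:ℝ)+1) := by simp only [hgg, hmin]
    have hnot : ¬ (n + 1 ≤ k) := by omega
    simp only [hτ]
    rw [min_le_iff, or_iff_right hnot, Nat.ceil_le, hggk, div_le_iff₀ ht0,
      le_div_iff₀ hd]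
    constructor <;> intro h <;> nlinarith
  have hρ_le_iff : ∀ n ω (k : ℕ), 0 < k → k < n + 1 → (ρ n ω ≤ k ↔ σu ω < gg n k) := by
    intro n ω k hk0 hk
    have hd : (0:ℝ) < (n:ℝ) + 1 := by positivity
    have hmin : min k (n+1) = k := min_eq_left (by omega)
    have hggk : gg n k = (k:ℝ) * t / ((n:ℝ)+1) := by simp only [hgg, hmin]
    have hnot : ¬ (n + 1 ≤ k) := by omega
    have hy0 : 0 ≤ ((n:ℝ)+1) * σu ω / t := div_nonneg (mul_nonneg (by positivity) (hu0 ω)) ht0.le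
    simp only [hρ]
    rw [min_le_iff, or_iff_right hnot, hggk]
    have hstep : ⌊((n:ℝ)+1) * σu ω / t⌋₊ + 1 ≤ k ↔ ⌊((n:ℝ)+1) * σu ω / t⌋₊ < k := by omega
    rw [hstep, Nat.floor_lt hy0, div_lt_iff₀ ht0, lt_div_iff₀ hd]
    constructor <;> intro h <;> nlinarith
  have hτ_st : ∀ n, IsStoppingTime (𝒢 n) (fun ω => ((τ n ω : ℕ) : ENat)) := by
    intro n k
    show MeasurableSet[(𝒢 n) k] {ω | ((τ n ω : ℕ) : ENat) ≤ (k : ENat)}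
    simp only [Nat.cast_le]
    by_cases hk : k < n + 1
    · have : {ω | τ n ω ≤ k} = {ω | σl ω ≤ gg n k} := by
        ext ω; exact hτ_le_iff n ω k hk
      rw [this]
      have hlt : gg n k < t := by
        have hmin : min k (n+1) = k := min_eq_left (by omega)
        simp only [hgg, hmin]
        rw [div_lt_iff₀ (by positivity : (0:ℝ) < ((n:ℝ)+1))]
        have : (k:ℝ) < (n:ℝ)+1 := by exact_mod_cast hk
        nlinarith
      exact hsl (gg n k) (hgg_nonneg n k) hlt
    · have : {ω | τ n ω ≤ k} = univ := by
        ext ω; simp only [mem_setOf_eq, mem_univ, iff_true]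
        exact (hτ_bdd n ω).trans (by omega)
      rw [this]
      exact @MeasurableSet.univ _ ((𝒢 n) k)
  have hρ_st : ∀ n, IsStoppingTime (𝒢 n) (fun ω => ((ρ n ω : ℕ) : ENat)) := by
    intro n k
    show MeasurableSet[(𝒢 n) k] {ω | ((ρ n ω : ℕ) : ENat) ≤ (k : ENat)}
    simp only [Nat.cast_le]
    rcases Nat.eq_zero_or_pos k with hk0 | hk0
    · have : {ω | ρ n ω ≤ k} = ∅ := by
        ext ω
        simp only [mem_setOf_eq, mem_empty_iff_false, iff_false, not_le, hk0]
        simp only [hρ]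
        exact lt_min (by omega) (by omega)
      rw [this]; exact @MeasurableSet.empty _ ((𝒢 n) k)
    by_cases hk : k < n + 1
    · have : {ω | ρ n ω ≤ k} = {ω | σu ω < gg n k} := by
        ext ω; exact hρ_le_iff n ω k hk0 hk
      rw [this]
      have h0 : 0 < gg n k := by
        have hmin : min k (n+1) = k := min_eq_left (by omega)
        simp only [hgg, hmin]
        have : (0:ℝ) < (k:ℝ) := by exact_mod_cast hk0
        positivity
      exact hsu (gg n k) h0 (hgg_le n k)
    · have : {ω | ρ n ω ≤ k} = univ := by
        ext ω; simp only [mem_setOf_eq, mem_univ, iff_true]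
        exact (hρ_bdd n ω).trans (by omega)
      rw [this]
      exact @MeasurableSet.univ _ ((𝒢 n) k)
  -- optional sampling wrapper (supermartingale version)
  have hstV_neg : ∀ n (π : Ω → ENat), stoppedValue (-(ff n)) π = -(stoppedValue (ff n) π) := by
    intro n π
    funext ω
    simp [stoppedValue]
  have hOS : ∀ n (π₁ π₂ : Ω → ENat), IsStoppingTime (𝒢 n) π₁ → IsStoppingTime (𝒢 n) π₂ →
      π₁ ≤ π₂ → (∀ ω, π₂ ω ≤ ((n + 1 : ℕ) : ENat)) →
      ∫ ω, stoppedValue (ff n) π₂ ω ∂P ≤ ∫ ω, stoppedValue (ff n) π₁ ω ∂P := by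
    intro n π₁ π₂ h1 h2 hle hbdd
    have := (hff_super n).neg.expected_stoppedValue_mono h1 h2 hle hbdd
    rw [hstV_neg, hstV_neg] at this
    simp only [Pi.neg_apply, integral_neg] at this
    linarith
  have hstV_int : ∀ n (π : Ω → ENat), IsStoppingTime (𝒢 n) π → (∀ ω, π ω ≤ ((n + 1 : ℕ) : ENat)) →
      Integrable (stoppedValue (ff n) π) P := by
    intro n π hst hbdd
    have := (hff_super n).neg.integrable_stoppedValue hst hbdd
    rw [hstV_neg] at this
    simpa using this.neg
  -- stopped values
  set X : ℕ → Ω → ℝ := fun n => stoppedValue (ff n) (fun ω => ((τ n ω : ℕ) : ENat)) with hX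
  set Y : ℕ → Ω → ℝ := fun n => stoppedValue (ff n) (fun ω => ((ρ n ω : ℕ) : ENat)) with hY
  have hX_int : ∀ n, Integrable (X n) P := fun n =>
    hstV_int n _ (hτ_st n) (fun ω => Nat.cast_le.2 (hτ_bdd n ω))
  have hY_int : ∀ n, Integrable (Y n) P := fun n =>
    hstV_int n _ (hρ_st n) (fun ω => Nat.cast_le.2 (hρ_bdd n ω))
  have hY_nonpos : ∀ n ω, Y n ω ≤ 0 := fun n ω => hN_nonpos _ ω
  have hX_nonpos : ∀ n ω, X n ω ≤ 0 := fun n ω => hN_nonpos _ ω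
  have hY_meas : ∀ n, Measurable (Y n) := by
    intro n
    simp only [hY]
    rw [stoppedValue_eq (fun ω => Nat.cast_le.2 (hρ_bdd n ω))]
    simp only [Finset.sum_apply]
    refine Finset.measurable_sum _ fun i _ => ?_
    refine Measurable.indicator ?_ ?_
    · exact ((hN_meas (gg n i)).mono (ℱ.le _)).measurable
    · exact (𝒢 n).le i _ ((hρ_st n).measurableSet_eq i)
  have hX_meas : ∀ n, Measurable (X n) := by
    intro n
    simp only [hX]
    rw [stoppedValue_eq (fun ω => Nat.cast_le.2 (hτ_bdd n ω))]
    simp only [Finset.sum_apply]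
    refine Finset.measurable_sum _ fun i _ => ?_
    refine Measurable.indicator ?_ ?_
    · exact ((hN_meas (gg n i)).mono (ℱ.le _)).measurable
    · exact (𝒢 n).le i _ ((hτ_st n).measurableSet_eq i)
  -- the fixed final value
  set Z : Ω → ℝ := N t with hZ
  have hZ_int : Integrable Z P := hN_int t ⟨ht0.le, htT⟩
  have hZ_nonpos : ∀ ω, Z ω ≤ 0 := fun ω => hN_nonpos t ω
  have hstV_const : ∀ n, stoppedValue (ff n) (fun _ => WithTop.some (n + 1)) = Z := by
    intro n
    funext ω
    simp only [stoppedValue, hff, hZ, WithTop.untopA, WithTop.untopD_coe, untopD_coe_enat]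
    rw [hgg_top n]
  have h1 : ∀ n, ∫ ω, Y n ω ∂P ≤ ∫ ω, X n ω ∂P := fun n =>
    hOS n _ _ (hτ_st n) (hρ_st n) (fun ω => Nat.cast_le.2 (hτ_le_ρ n ω))
      (fun ω => Nat.cast_le.2 (hρ_bdd n ω))
  have h2 : ∀ n, ∫ ω, Z ω ∂P ≤ ∫ ω, Y n ω ∂P := by
    intro n
    have := hOS n _ _ (hρ_st n) (isStoppingTime_const (𝒢 n) (n+1))
      (fun ω => Nat.cast_le.2 (hρ_bdd n ω)) (fun ω => le_rfl)
    rwa [hstV_const n] at this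
  -- the eta trick : ∫_G Z ≤ ∫_G (Y n) for G = {Y n < -K}
  have hG_meas𝒢 : ∀ n (K : ℝ), MeasurableSet[(𝒢 n) (n+1)] {ω | Y n ω < -K} := by
    intro n K
    have : {ω | Y n ω < -K} = ⋃ (j : ℕ) (_ : j ≤ n + 1), ({ω | ρ n ω = j} ∩ {ω | ff n j ω < -K}) := by
      ext ω
      simp only [mem_setOf_eq, mem_iUnion, mem_inter_iff]
      constructor
      · intro h
        exact ⟨ρ n ω, hρ_bdd n ω, rfl, by simpa only [hY, stoppedValue, WithTop.untopA, WithTop.untopD_coe, untopD_coe_enat] using h⟩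
      · rintro ⟨j, hj, hj2, hj3⟩
        simp only [hY, stoppedValue, hj2, WithTop.untopA, WithTop.untopD_coe, untopD_coe_enat]
        exact hj3
    rw [this]
    refine MeasurableSet.iUnion fun j => MeasurableSet.iUnion fun hj => ?_
    refine MeasurableSet.inter ?_ ?_
    · exact (𝒢 n).mono hj _ (by have h := (hρ_st n).measurableSet_eq j; change MeasurableSet[(𝒢 n) j] {ω | ((ρ n ω : ℕ) : ENat) = (j : ENat)} at h; simpa only [Nat.cast_inj] using h)
    · exact (𝒢 n).mono hj _ ((hN_meas (gg n j)).measurable measurableSet_Iio)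
  have hG_meas : ∀ n (K : ℝ), MeasurableSet {ω | Y n ω < -K} := fun n K =>
    (𝒢 n).le _ _ (hG_meas𝒢 n K)
  have hη : ∀ n (K : ℝ), ∫ ω in {ω | Y n ω < -K}, Z ω ∂P ≤ ∫ ω in {ω | Y n ω < -K}, Y n ω ∂P := by
    intro n K
    set G : Set Ω := {ω | Y n ω < -K} with hG
    set η : Ω → ℕ := fun ω => if ω ∈ G then ρ n ω else n + 1 with hηdef
    have hη_st : IsStoppingTime (𝒢 n) (fun ω => ((η ω : ℕ) : ENat)) := by
      intro k
      show MeasurableSet[(𝒢 n) k] {ω | ((η ω : ℕ) : ENat) ≤ (k : ENat)}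
      simp only [Nat.cast_le]
      have hsplit : {ω | η ω ≤ k} = (G ∩ {ω | ρ n ω ≤ k}) ∪ (Gᶜ ∩ {ω | n + 1 ≤ k}) := by
        ext ω
        by_cases hωG : ω ∈ G
        · simp only [hηdef, mem_setOf_eq, mem_union, mem_inter_iff, mem_compl_iff, hωG,
            if_true]
          tauto
        · simp only [hηdef, mem_setOf_eq, mem_union, mem_inter_iff, mem_compl_iff, hωG,
            if_false]
          tauto
      rw [hsplit]
      refine MeasurableSet.union ?_ ?_
      · -- G ∩ {ρ ≤ k}
        have : G ∩ {ω | ρ n ω ≤ k} = ⋃ (j : ℕ) (_ : j ≤ k), ({ω | ρ n ω = j} ∩ {ω | ff n j ω < -K}) := by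
          ext ω
          simp only [hG, mem_inter_iff, mem_setOf_eq, mem_iUnion, mem_inter_iff]
          constructor
          · rintro ⟨h1', h2'⟩
            exact ⟨ρ n ω, h2', rfl, by simpa only [hY, stoppedValue, WithTop.untopA, WithTop.untopD_coe, untopD_coe_enat] using h1'⟩
          · rintro ⟨j, hj, hj2, hj3⟩
            constructor
            · simp only [hY, stoppedValue, hj2, WithTop.untopA, WithTop.untopD_coe, untopD_coe_enat]; exact hj3
            · omega
        rw [this]
        refine MeasurableSet.iUnion fun j => MeasurableSet.iUnion fun hj => ?_
        refine MeasurableSet.inter ?_ ?_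
        · exact (𝒢 n).mono hj _ (by have h := (hρ_st n).measurableSet_eq j; change MeasurableSet[(𝒢 n) j] {ω | ((ρ n ω : ℕ) : ENat) = (j : ENat)} at h; simpa only [Nat.cast_inj] using h)
        · exact (𝒢 n).mono hj _ ((hN_meas (gg n j)).measurable measurableSet_Iio)
      · by_cases hk : n + 1 ≤ k
        · have : Gᶜ ∩ {ω | n + 1 ≤ k} = Gᶜ := by
            ext ω; simp [hk]
          rw [this]
          exact ((𝒢 n).mono hk _ (hG_meas𝒢 n K)).compl
        · have : Gᶜ ∩ {ω | n + 1 ≤ k} = ∅ := by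
            ext ω; simp [hk]
          rw [this]
          exact @MeasurableSet.empty _ ((𝒢 n) k)
    have hη_le : (fun ω => ((η ω : ℕ) : ENat)) ≤ fun _ => ((n + 1 : ℕ) : ENat) := by
      intro ω
      rw [hηdef]
      by_cases hωG : ω ∈ G <;> simp [hωG, hρ_bdd n ω] <;> exact_mod_cast hρ_bdd n ω
    have hOSη := hOS n _ _ hη_st (isStoppingTime_const (𝒢 n) (n+1))
      hη_le (fun ω => le_rfl)
    rw [hstV_const n] at hOSη
    have hstV_η : stoppedValue (ff n) (fun ω => ((η ω : ℕ) : ENat)) = fun ω => G.indicator (Y n) ω + Gᶜ.indicator Z ω := by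
      funext ω
      by_cases hωG : ω ∈ G
      · simp only [stoppedValue, hηdef, hωG, if_true, indicator_of_mem, WithTop.untopA, WithTop.untopD_coe, untopD_coe_enat,
          indicator_of_notMem (by simp [hωG] : ω ∉ Gᶜ), add_zero]
        rfl
      · simp only [stoppedValue, hηdef, hωG, if_false, indicator_of_notMem hωG, WithTop.untopA, WithTop.untopD_coe, untopD_coe_enat,
          indicator_of_mem (by simp [hωG] : ω ∈ Gᶜ), zero_add]
        simp only [hff, hZ]
        rw [hgg_top n]
    rw [hstV_η] at hOSη
    have hGm : MeasurableSet G := hG_meas n K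
    have hadd : ∫ ω, (G.indicator (Y n) ω + Gᶜ.indicator Z ω) ∂P
        = ∫ ω in G, Y n ω ∂P + ∫ ω in Gᶜ, Z ω ∂P := by
      rw [integral_add ((hY_int n).indicator hGm) (hZ_int.indicator hGm.compl),
        integral_indicator hGm, integral_indicator hGm.compl]
    rw [hadd] at hOSη
    have hsplitZ : ∫ ω, Z ω ∂P = ∫ ω in G, Z ω ∂P + ∫ ω in Gᶜ, Z ω ∂P :=
      (integral_add_compl hGm hZ_int).symm
    rw [hsplitZ] at hOSη
    linarith
  -- convergence of the evaluation times
  have hd_pos : ∀ n : ℕ, (0:ℝ) < (n:ℝ) + 1 := fun n => by positivity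
  have hτ_time : ∀ n ω, |gg n (τ n ω) - min t (σl ω)| ≤ t / ((n:ℝ)+1) := by
    intro n ω
    have hd : (0:ℝ) < (n:ℝ)+1 := by positivity
    have hdiv_nonneg : (0:ℝ) ≤ t / ((n:ℝ)+1) := by positivity
    rcases le_or_gt t (σl ω) with hge | hlt
    · have hx : ((n:ℝ)+1) ≤ ((n:ℝ)+1) * σl ω / t := by
        rw [le_div_iff₀ ht0]
        nlinarith
      have hceil : (n+1 : ℕ) ≤ ⌈((n:ℝ)+1) * σl ω / t⌉₊ := by
        have h2 := hx.trans (Nat.le_ceil _)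
        exact_mod_cast h2
      have hτval : τ n ω = n + 1 := by
        simp only [hτ]
        omega
      rw [hτval, hgg_top n, min_eq_left hge, sub_self, abs_zero]
      exact hdiv_nonneg
    · set x := ((n:ℝ)+1) * σl ω / t with hxdef
      have hx0 : 0 ≤ x := div_nonneg (mul_nonneg hd.le (hl0 ω)) ht0.le
      have hxlt : x < (n:ℝ)+1 := by
        rw [hxdef, div_lt_iff₀ ht0]
        nlinarith
      have hmin2 : min (τ n ω) (n+1) = τ n ω := min_eq_left (hτ_bdd n ω)
      have hggτ : gg n (τ n ω) = (τ n ω : ℝ) * t / ((n:ℝ)+1) := by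
        simp only [hgg, hmin2]
      have hcast : (τ n ω : ℝ) = min ((n+1 : ℕ) : ℝ) ((⌈x⌉₊ : ℕ) : ℝ) := by
        simp only [hτ]
        rw [← hxdef]
        exact Nat.cast_min _ _
      have hub : (τ n ω : ℝ) ≤ x + 1 := by
        rw [hcast]
        exact le_trans (min_le_right _ _) (Nat.ceil_lt_add_one hx0).le
      have hlb : x ≤ (τ n ω : ℝ) := by
        rw [hcast]
        refine le_min ?_ (Nat.le_ceil x)
        push_cast
        linarith
      have hxt : x * t / ((n:ℝ)+1) = σl ω := by
        rw [hxdef]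
        field_simp
      have hlow : σl ω ≤ gg n (τ n ω) := by
        rw [hggτ, ← hxt]
        gcongr
      have hupp : gg n (τ n ω) ≤ σl ω + t / ((n:ℝ)+1) := by
        rw [hggτ]
        have h2 : (τ n ω : ℝ) * t / ((n:ℝ)+1) ≤ (x+1) * t / ((n:ℝ)+1) := by gcongr
        have h3 : (x+1) * t / ((n:ℝ)+1) = x * t / ((n:ℝ)+1) + t/((n:ℝ)+1) := by ring
        rw [h3, hxt] at h2
        exact h2
      rw [min_eq_right hlt.le, abs_le]
      constructor
      · linarith
      · linarith
  have hρ_time : ∀ n ω, |gg n (ρ n ω) - min t (σu ω)| ≤ t / ((n:ℝ)+1) := by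
    intro n ω
    have hd : (0:ℝ) < (n:ℝ)+1 := by positivity
    have hdiv_nonneg : (0:ℝ) ≤ t / ((n:ℝ)+1) := by positivity
    rcases le_or_gt t (σu ω) with hge | hlt
    · have hy : ((n:ℝ)+1) ≤ ((n:ℝ)+1) * σu ω / t := by
        rw [le_div_iff₀ ht0]
        nlinarith
      have hfl : (n+1 : ℕ) ≤ ⌊((n:ℝ)+1) * σu ω / t⌋₊ := Nat.le_floor (by exact_mod_cast hy)
      have hρval : ρ n ω = n + 1 := by
        simp only [hρ]
        omega
      rw [hρval, hgg_top n, min_eq_left hge, sub_self, abs_zero]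
      exact hdiv_nonneg
    · set y := ((n:ℝ)+1) * σu ω / t with hydef
      have hy0 : 0 ≤ y := div_nonneg (mul_nonneg hd.le (hu0 ω)) ht0.le
      have hylt : y < (n:ℝ)+1 := by
        rw [hydef, div_lt_iff₀ ht0]
        nlinarith
      have hmin2 : min (ρ n ω) (n+1) = ρ n ω := min_eq_left (hρ_bdd n ω)
      have hggρ : gg n (ρ n ω) = (ρ n ω : ℝ) * t / ((n:ℝ)+1) := by
        simp only [hgg, hmin2]
      have hcast : (ρ n ω : ℝ) = min ((n+1 : ℕ) : ℝ) ((⌊y⌋₊ + 1 : ℕ) : ℝ) := by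
        simp only [hρ]
        rw [← hydef]
        exact Nat.cast_min _ _
      have hub : (ρ n ω : ℝ) ≤ y + 1 := by
        rw [hcast]
        refine le_trans (min_le_right _ _) ?_
        push_cast
        linarith [Nat.floor_le hy0]
      have hlb : y ≤ (ρ n ω : ℝ) := by
        rw [hcast]
        refine le_min ?_ ?_
        · push_cast
          linarith
        · push_cast
          linarith [Nat.lt_floor_add_one y]
      have hyt : y * t / ((n:ℝ)+1) = σu ω := by
        rw [hydef]
        field_simp
      have hlow : σu ω ≤ gg n (ρ n ω) := by
        rw [hggρ, ← hyt]
        gcongr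
      have hupp : gg n (ρ n ω) ≤ σu ω + t / ((n:ℝ)+1) := by
        rw [hggρ]
        have h2 : (ρ n ω : ℝ) * t / ((n:ℝ)+1) ≤ (y+1) * t / ((n:ℝ)+1) := by gcongr
        have h3 : (y+1) * t / ((n:ℝ)+1) = y * t / ((n:ℝ)+1) + t/((n:ℝ)+1) := by ring
        rw [h3, hyt] at h2
        exact h2
      rw [min_eq_right hlt.le, abs_le]
      constructor
      · linarith
      · linarith
  have hmesh0 : Tendsto (fun n : ℕ => t / ((n:ℝ)+1)) atTop (nhds 0) := by
    have h1 := (tendsto_const_div_atTop_nhds_zero_nat t).comp (tendsto_add_atTop_nat 1)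
    refine h1.congr fun n => ?_
    simp only [Function.comp]
    push_cast
    ring_nf
  have htime_conv : ∀ (v : ℕ → ℝ) (s : ℝ), (∀ n, |v n - s| ≤ t / ((n:ℝ)+1)) →
      Tendsto v atTop (nhds s) := by
    intro v s hv
    rw [tendsto_iff_dist_tendsto_zero]
    refine squeeze_zero (fun n => dist_nonneg) (fun n => ?_) hmesh0
    rw [Real.dist_eq]
    exact hv n
  -- limit values
  set Xinf : Ω → ℝ := fun ω => N (min t (σl ω)) ω with hXinf
  set Yinf : Ω → ℝ := fun ω => N (min t (σu ω)) ω with hYinf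
  have hNconv : ∀ (ω : Ω) (v : ℕ → ℝ) (s : ℝ), (∀ n, v n ∈ Set.Icc (0:ℝ) t) →
      s ∈ Set.Icc (0:ℝ) t → Tendsto v atTop (nhds s) →
      Tendsto (fun n => N (v n) ω) atTop (nhds (N s ω)) := by
    intro ω v s hv hs hconv
    have hsT : s ∈ Set.Icc (0:ℝ) T := ⟨hs.1, hs.2.trans htT⟩
    refine ((hN_cont ω) s hsT).tendsto.comp (tendsto_nhdsWithin_iff.2 ⟨hconv, ?_⟩)
    exact Eventually.of_forall fun n => ⟨(hv n).1, (hv n).2.trans htT⟩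
  have hX_conv : ∀ ω, Tendsto (fun n => X n ω) atTop (nhds (Xinf ω)) := by
    intro ω
    have h1 : ∀ n, X n ω = N (gg n (τ n ω)) ω := fun n => rfl
    simp only [h1]
    refine hNconv ω _ _ (fun n => ⟨hgg_nonneg n _, hgg_le n _⟩)
      ⟨le_min ht0.le (hl0 ω), min_le_left _ _⟩
      (htime_conv _ _ (fun n => hτ_time n ω))
  have hY_conv : ∀ ω, Tendsto (fun n => Y n ω) atTop (nhds (Yinf ω)) := by
    intro ω
    have h1 : ∀ n, Y n ω = N (gg n (ρ n ω)) ω := fun n => rfl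
    simp only [h1]
    refine hNconv ω _ _ (fun n => ⟨hgg_nonneg n _, hgg_le n _⟩)
      ⟨le_min ht0.le (hu0 ω), min_le_left _ _⟩
      (htime_conv _ _ (fun n => hρ_time n ω))
  -- properties of the limit values
  have hXinf_nonpos : ∀ ω, Xinf ω ≤ 0 := fun ω => hN_nonpos _ ω
  have hYinf_nonpos : ∀ ω, Yinf ω ≤ 0 := fun ω => hN_nonpos _ ω
  have hXinf_asm : AEStronglyMeasurable Xinf P :=
    aestronglyMeasurable_of_tendsto_ae atTop (fun n => (hX_meas n).aestronglyMeasurable)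
      (Eventually.of_forall hX_conv)
  have hYinf_asm : AEStronglyMeasurable Yinf P :=
    aestronglyMeasurable_of_tendsto_ae atTop (fun n => (hY_meas n).aestronglyMeasurable)
      (Eventually.of_forall hY_conv)
  have hYinf_lb : ∀ᵐ ω ∂P, -1 ≤ Yinf ω := by
    filter_upwards [hYge] with ω hω
    have h1 : min b c ≤ min (M (min t (σu ω)) ω) c := min_le_min hω le_rfl
    have h2 : min b c = b := min_eq_left (by rw [hc]; linarith)
    rw [hYinf]
    simp only [hN]
    rw [h2] at h1
    rw [hc] at h1 ⊢
    linarith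
  have hXinf_eq_of_lt : ∀ᵐ ω ∂P, σl ω < t → Xinf ω = -1 := by
    filter_upwards [hXval] with ω hω hlt
    rw [hXinf]
    simp only [hN]
    rw [min_eq_right hlt.le, hω hlt]
    rw [hc]
    rw [min_eq_left (by linarith)]
    ring
  have hXY_eq_of_ge : ∀ ω, t ≤ σl ω → Xinf ω = Yinf ω := by
    intro ω hge
    simp only [hXinf, hYinf]
    rw [min_eq_left hge, min_eq_left (hge.trans (hlu ω))]
  have hXinf_int : Integrable Xinf P := by
    refine Integrable.mono' ((integrable_const (1:ℝ)).add hZ_int.abs) hXinf_asm ?_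
    filter_upwards [hXinf_eq_of_lt] with ω hω
    have hgoal : ‖Xinf ω‖ ≤ 1 + |Z ω| := by
      rcases lt_or_ge (σl ω) t with hlt | hge
      · rw [hω hlt]
        simp only [Real.norm_eq_abs, abs_neg, abs_one]
        linarith [abs_nonneg (Z ω)]
      · have hXZ : Xinf ω = Z ω := by simp only [hXinf, hZ]; rw [min_eq_left hge]
        rw [hXZ]
        simp only [Real.norm_eq_abs]
        linarith [abs_nonneg (Z ω)]
    simpa using hgoal
  have hYinf_int : Integrable Yinf P := by
    refine Integrable.mono' (integrable_const (1:ℝ)) hYinf_asm ?_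
    filter_upwards [hYinf_lb] with ω hω
    rw [Real.norm_eq_abs, abs_le]
    exact ⟨hω, (hYinf_nonpos ω).trans zero_le_one⟩
  -- the constant C and the Markov bound
  set C : ℝ := -∫ ω, Z ω ∂P with hC
  have hC0 : 0 ≤ C := by
    rw [hC, neg_nonneg]
    exact integral_nonpos (fun ω => hZ_nonpos ω)
  have hmark : ∀ n (K : ℝ), 0 < K → (P {ω | Y n ω < -K}).toReal ≤ C / K := by
    intro n K hK
    set G : Set Ω := {ω | Y n ω < -K} with hGdef
    have hGm : MeasurableSet G := hG_meas n K
    have e1 : K * (P G).toReal = ∫ _ in G, K ∂P := by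
      rw [setIntegral_const, smul_eq_mul, mul_comm, measureReal_def]
    have e2 : ∫ _ in G, K ∂P ≤ ∫ ω in G, -Y n ω ∂P := by
      refine setIntegral_mono_on (integrableOn_const (measure_lt_top P G).ne)
        ((hY_int n).neg.integrableOn) hGm ?_
      intro ω hω
      rw [hGdef, mem_setOf_eq] at hω
      linarith
    have e3 : ∫ ω in G, -Y n ω ∂P ≤ ∫ ω, -Y n ω ∂P := by
      refine setIntegral_le_integral (hY_int n).neg ?_
      exact Eventually.of_forall fun ω => by simpa using hY_nonpos n ω
    have e4 : ∫ ω, -Y n ω ∂P ≤ C := by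
      rw [integral_neg, hC]
      have := h2 n
      linarith
    rw [le_div_iff₀ hK, mul_comm]
    linarith
  -- integrability of truncations
  have hmax_int : ∀ (W : Ω → ℝ), Measurable W → (∀ ω, W ω ≤ 0) → ∀ K : ℝ, 0 ≤ K →
      Integrable (fun ω => max (W ω) (-K)) P := by
    intro W hWm hW0 K hK
    refine Integrable.mono' (integrable_const K) (hWm.max measurable_const).aestronglyMeasurable ?_
    refine Eventually.of_forall fun ω => ?_
    rw [Real.norm_eq_abs, abs_le]
    constructor
    · linarith [le_max_right (W ω) (-K)]
    · exact max_le ((hW0 ω).trans hK) (by linarith)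
  -- the penalty terms
  set D : ℝ → ℝ := fun K' => ∫ ω, max (-Z ω - K') 0 ∂P with hD
  have hD_int : ∀ K' : ℝ, Integrable (fun ω => max (-Z ω - K') 0) P := fun K' =>
    (hZ_int.neg.sub (integrable_const K')).pos_part
  set em : ℝ → ℝ := fun K => ∫ ω, max (-Xinf ω - K) 0 ∂P with hem
  have hem_int : ∀ K : ℝ, Integrable (fun ω => max (-Xinf ω - K) 0) P := fun K =>
    (hXinf_int.neg.sub (integrable_const K)).pos_part
  -- main chain of inequalities, for fixed n and truncation levels
  have hchain : ∀ (n : ℕ) (K K' : ℝ), 1 ≤ K → 0 ≤ K' →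
      ∫ ω, max (Y n ω) (-K) ∂P ≤ ∫ ω, max (X n ω) (-K) ∂P + D K' + K' * (C / K) := by
    intro n K K' hK hK'
    have hK0 : (0:ℝ) < K := by linarith
    set G : Set Ω := {ω | Y n ω < -K} with hGdef
    have hGm : MeasurableSet G := hG_meas n K
    -- step 1
    have s1 : ∫ ω, max (Y n ω) (-K) ∂P ≤ ∫ ω, Y n ω ∂P + ∫ ω in G, -Y n ω ∂P := by
      have hptw : ∀ ω, max (Y n ω) (-K) ≤ Y n ω + G.indicator (fun ω => -Y n ω) ω := by
        intro ω
        by_cases hωG : ω ∈ G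
        · rw [indicator_of_mem hωG]
          rw [hGdef, mem_setOf_eq] at hωG
          have : max (Y n ω) (-K) = -K := max_eq_right hωG.le
          rw [this]; linarith
        · rw [indicator_of_notMem hωG, add_zero]
          rw [hGdef, mem_setOf_eq, not_lt] at hωG
          exact max_le le_rfl hωG
      have hint1 : Integrable (fun ω => max (Y n ω) (-K)) P :=
        hmax_int (Y n) (hY_meas n) (hY_nonpos n) K hK0.le
      have hint2 : Integrable (fun ω => Y n ω + G.indicator (fun ω => -Y n ω) ω) P :=
        (hY_int n).add ((hY_int n).neg.indicator hGm)
      calc ∫ ω, max (Y n ω) (-K) ∂P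
          ≤ ∫ ω, (Y n ω + G.indicator (fun ω' => -Y n ω') ω) ∂P :=
            integral_mono hint1 hint2 hptw
        _ = ∫ ω, Y n ω ∂P + ∫ ω, G.indicator (fun ω' => -Y n ω') ω ∂P :=
            integral_add (hY_int n) ((hY_int n).neg.indicator hGm)
        _ = ∫ ω, Y n ω ∂P + ∫ ω in G, -Y n ω ∂P := by rw [integral_indicator hGm]
    -- step 2
    have s2 : ∫ ω in G, -Y n ω ∂P ≤ ∫ ω in G, -Z ω ∂P := by
      rw [integral_neg, integral_neg]
      have := hη n K
      linarith
    -- step 3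
    have s3 : ∫ ω in G, -Z ω ∂P ≤ D K' + K' * (P G).toReal := by
      have hptw : ∀ ω ∈ G, -Z ω ≤ max (-Z ω - K') 0 + K' := by
        intro ω _
        rcases le_or_gt (-Z ω) K' with h | h
        · linarith [le_max_right (-Z ω - K') (0:ℝ)]
        · rw [max_eq_left (by linarith)]
          linarith
      have e1 : ∫ ω in G, -Z ω ∂P ≤ ∫ ω in G, (max (-Z ω - K') 0 + K') ∂P := by
        refine setIntegral_mono_on hZ_int.neg.integrableOn
          (((hD_int K').add (integrable_const K')).integrableOn) hGm hptw
      have e2 : ∫ ω in G, (max (-Z ω - K') 0 + K') ∂P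
          = ∫ ω in G, max (-Z ω - K') 0 ∂P + ∫ _ in G, K' ∂P := by
        rw [integral_add ((hD_int K').integrableOn) (integrableOn_const (measure_lt_top P G).ne)]
      have e3 : ∫ ω in G, max (-Z ω - K') 0 ∂P ≤ D K' := by
        refine setIntegral_le_integral (hD_int K') ?_
        exact Eventually.of_forall fun ω => le_max_right _ _
      have e4 : ∫ _ in G, K' ∂P = (P G).toReal * K' := by
        rw [setIntegral_const, smul_eq_mul, measureReal_def]
      calc ∫ ω in G, -Z ω ∂P ≤ ∫ ω in G, (max (-Z ω - K') 0 + K') ∂P := e1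
        _ = ∫ ω in G, max (-Z ω - K') 0 ∂P + ∫ _ in G, K' ∂P := e2
        _ ≤ D K' + (P G).toReal * K' := add_le_add e3 (le_of_eq e4)
        _ = D K' + K' * (P G).toReal := by ring
    -- step 4
    have s4 : K' * (P G).toReal ≤ K' * (C / K) :=
      mul_le_mul_of_nonneg_left (hmark n K hK0) hK'
    -- step 5
    have s5 : ∫ ω, X n ω ∂P ≤ ∫ ω, max (X n ω) (-K) ∂P := by
      refine integral_mono (hX_int n) (hmax_int (X n) (hX_meas n) (hX_nonpos n) K hK0.le) ?_
      exact fun ω => le_max_left _ _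
    have h1n := h1 n
    linarith
  -- pass to the limit in n
  have hdom : ∀ (W : ℕ → Ω → ℝ) (Winf : Ω → ℝ), (∀ n, Measurable (W n)) →
      (∀ n ω, W n ω ≤ 0) → (∀ ω, Tendsto (fun n => W n ω) atTop (nhds (Winf ω))) →
      ∀ K : ℝ, 0 < K →
      Tendsto (fun n => ∫ ω, max (W n ω) (-K) ∂P) atTop (nhds (∫ ω, max (Winf ω) (-K) ∂P)) := by
    intro W Winf hWm hW0 hWconv K hK
    refine tendsto_integral_of_dominated_convergence (fun _ => K)
      (fun n => ((hWm n).max measurable_const).aestronglyMeasurable)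
      (integrable_const K) (fun n => Eventually.of_forall fun ω => ?_)
      (Eventually.of_forall fun ω => ?_)
    · rw [Real.norm_eq_abs, abs_le]
      exact ⟨by linarith [le_max_right (W n ω) (-K)],
        max_le ((hW0 n ω).trans hK.le) (by linarith)⟩
    · exact (hWconv ω).max tendsto_const_nhds
  have hlim1 : ∀ (K K' : ℝ), 1 ≤ K → 0 ≤ K' →
      ∫ ω, max (Yinf ω) (-K) ∂P ≤ ∫ ω, max (Xinf ω) (-K) ∂P + D K' + K' * (C / K) := by
    intro K K' hK hK'
    have hK0 : (0:ℝ) < K := by linarith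
    refine le_of_tendsto_of_tendsto'
      (hdom Y Yinf hY_meas hY_nonpos hY_conv K hK0)
      (((hdom X Xinf hX_meas hX_nonpos hX_conv K hK0).add_const (D K')).add_const (K' * (C / K)))
      (fun n => hchain n K K' hK hK')
  -- rewrite the truncations of the limits
  have hYtrunc : ∀ K : ℝ, 1 ≤ K → ∫ ω, max (Yinf ω) (-K) ∂P = ∫ ω, Yinf ω ∂P := by
    intro K hK
    refine integral_congr_ae ?_
    filter_upwards [hYinf_lb] with ω hω
    exact max_eq_left (by linarith)
  have hXtrunc : ∀ K : ℝ, 0 ≤ K →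
      ∫ ω, max (Xinf ω) (-K) ∂P = ∫ ω, Xinf ω ∂P + em K := by
    intro K hK
    have hptw : ∀ ω, max (Xinf ω) (-K) = Xinf ω + max (-Xinf ω - K) 0 := by
      intro ω
      rcases le_or_gt (-K) (Xinf ω) with h | h
      · rw [max_eq_left h, max_eq_right (by linarith)]
        ring
      · rw [max_eq_right h.le, max_eq_left (by linarith)]
        ring
    calc ∫ ω, max (Xinf ω) (-K) ∂P = ∫ ω, (Xinf ω + max (-Xinf ω - K) 0) ∂P :=
          integral_congr_ae (Eventually.of_forall hptw)
      _ = ∫ ω, Xinf ω ∂P + em K := integral_add hXinf_int (hem_int K)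
  have hlim2 : ∀ (K K' : ℝ), 1 ≤ K → 0 ≤ K' →
      ∫ ω, Yinf ω ∂P ≤ ∫ ω, Xinf ω ∂P + em K + D K' + K' * (C / K) := by
    intro K K' hK hK'
    have := hlim1 K K' hK hK'
    rw [hYtrunc K hK, hXtrunc K (by linarith)] at this
    linarith
  -- K → ∞ along naturals
  have hpen_tendsto : ∀ (W : Ω → ℝ), Integrable W P →
      Tendsto (fun k : ℕ => ∫ ω, max (-W ω - (k:ℝ)) 0 ∂P) atTop (nhds 0) := by
    intro W hW
    have hmain : Tendsto (fun k : ℕ => ∫ ω, max (-W ω - (k:ℝ)) 0 ∂P) atTop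
        (nhds (∫ _ : Ω, (0:ℝ) ∂P)) := by
      refine tendsto_integral_of_dominated_convergence (fun ω => |W ω|)
        (fun k => ((hW.neg.sub (integrable_const _)).pos_part).aestronglyMeasurable)
        hW.abs (fun k => Eventually.of_forall fun ω => ?_)
        (Eventually.of_forall fun ω => ?_)
      · rw [Real.norm_eq_abs, abs_le]
        constructor
        · linarith [le_max_right (-W ω - (k:ℝ)) (0:ℝ), abs_nonneg (W ω)]
        · refine max_le ?_ (abs_nonneg _)
          have h1 : -W ω ≤ |W ω| := neg_le_abs _
          have h2 : (0:ℝ) ≤ (k:ℝ) := Nat.cast_nonneg k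
          linarith
      · have hev : ∀ᶠ k : ℕ in atTop, max (-W ω - (k:ℝ)) 0 = 0 := by
          obtain ⟨k0, hk0⟩ := exists_nat_ge (-W ω)
          refine eventually_atTop.2 ⟨k0, fun k hk => ?_⟩
          have : (k0:ℝ) ≤ (k:ℝ) := Nat.cast_le.2 hk
          exact max_eq_right (by linarith)
        exact (tendsto_const_nhds).congr' (hev.mono fun k hk => hk.symm)
    simpa using hmain
  have hlim3 : ∀ K' : ℝ, 0 ≤ K' → ∫ ω, Yinf ω ∂P ≤ ∫ ω, Xinf ω ∂P + D K' := by
    intro K' hK'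
    have hseq : Tendsto (fun k : ℕ => ∫ ω, Xinf ω ∂P + em (k:ℝ) + D K' + K' * (C / (k:ℝ)))
        atTop (nhds (∫ ω, Xinf ω ∂P + 0 + D K' + K' * 0)) := by
      refine Tendsto.add (Tendsto.add_const _ (Tendsto.const_add _ ?_)) ?_
      · exact hpen_tendsto Xinf hXinf_int
      · refine Tendsto.const_mul K' ?_
        have := tendsto_const_div_atTop_nhds_zero_nat C
        exact this
    rw [add_zero, mul_zero, add_zero] at hseq
    refine ge_of_tendsto hseq ?_
    refine eventually_atTop.2 ⟨1, fun k hk => ?_⟩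
    have hk1 : (1:ℝ) ≤ (k:ℝ) := by exact_mod_cast hk
    exact hlim2 (k:ℝ) K' hk1 hK'
  have hlim4 : ∫ ω, Yinf ω ∂P ≤ ∫ ω, Xinf ω ∂P := by
    have hseq : Tendsto (fun k : ℕ => ∫ ω, Xinf ω ∂P + D (k:ℝ)) atTop
        (nhds (∫ ω, Xinf ω ∂P + 0)) := by
      refine Tendsto.const_add _ ?_
      exact hpen_tendsto Z hZ_int
    rw [add_zero] at hseq
    refine ge_of_tendsto hseq ?_
    refine Eventually.of_forall fun k => ?_
    exact hlim3 (k:ℝ) (Nat.cast_nonneg k)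
  -- conclude a.e. equality of the limits
  have hdiff_nonneg : 0 ≤ᵐ[P] fun ω => Yinf ω - Xinf ω := by
    filter_upwards [hXinf_eq_of_lt, hYinf_lb] with ω h1' h2'
    rcases lt_or_ge (σl ω) t with hlt | hge
    · rw [h1' hlt]; simp only [Pi.zero_apply]; linarith
    · rw [hXY_eq_of_ge ω hge]; simp
  have hdiff_int : Integrable (fun ω => Yinf ω - Xinf ω) P := hYinf_int.sub hXinf_int
  have hdiff_zero : (fun ω => Yinf ω - Xinf ω) =ᵐ[P] 0 := by
    refine (integral_eq_zero_iff_of_nonneg_ae hdiff_nonneg hdiff_int).1 ?_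
    have h1' : ∫ ω, (Yinf ω - Xinf ω) ∂P = ∫ ω, Yinf ω ∂P - ∫ ω, Xinf ω ∂P :=
      integral_sub hYinf_int hXinf_int
    have h2' : 0 ≤ ∫ ω, (Yinf ω - Xinf ω) ∂P := integral_nonneg_of_ae hdiff_nonneg
    linarith [hlim4]
  -- final unpacking
  filter_upwards [hdiff_zero, hXval, hYge] with ω hω hval hge
  rcases le_or_gt t (σl ω) with hget | hlt
  · rw [min_eq_left hget, min_eq_left (hget.trans (hlu ω))]
  · have hXm1 : Xinf ω = -1 := by
      rw [hXinf]
      simp only [hN]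
      rw [min_eq_right hlt.le, hval hlt, hc, min_eq_left (by linarith)]
      ring
    have hYeq : Yinf ω = -1 := by
      have : Yinf ω - Xinf ω = 0 := hω
      rw [hXm1] at this
      linarith
    have hminb : min (M (min t (σu ω)) ω) c = b := by
      rw [hYinf] at hYeq
      simp only [hN] at hYeq
      rw [hc] at hYeq ⊢
      linarith
    have hMu : M (min t (σu ω)) ω = b := by
      rcases le_total (M (min t (σu ω)) ω) c with h | h
      · rw [min_eq_left h] at hminb; exact hminb
      · rw [min_eq_right h] at hminb
        rw [hc] at hminb
        linarith [hge]
    rw [min_eq_right hlt.le, hval hlt, hMu]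

end Stmt15Aux

/-- For a continuous-path supermartingale `(M_t)_{t ∈ [0,T]}` with `M_0 = m` a.s. and
`m > -a`, the processes stopped at the pathwise hitting times
`σ̲_a = inf{t ∈ [0,T] : M_t ≤ -a} ∧ T` and `σ̄_a = inf{t ∈ [0,T] : M_t < -a} ∧ T`
coincide: for every `t ∈ [0,T]`, `M_{t ∧ σ̲_a} = M_{t ∧ σ̄_a}` almost surely. -/
theorem stmt_15 {Ω : Type*} {mΩ : MeasurableSpace Ω} {P : Measure Ω}
    [IsProbabilityMeasure P]
    (T : ℝ) (hT : 0 < T) (ℱ : Filtration ℝ mΩ)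
    (M : ℝ → Ω → ℝ)
    (hadp : Adapted ℱ M)
    (hint : ∀ t ∈ Set.Icc (0 : ℝ) T, Integrable (M t) P)
    (hsuper : ∀ s t : ℝ, 0 ≤ s → s ≤ t → t ≤ T → P[M t | ℱ s] ≤ᵐ[P] M s)
    (hcont : ∀ ω, ContinuousOn (fun s => M s ω) (Set.Icc 0 T))
    (m : ℝ) (hM0 : ∀ᵐ ω ∂P, M 0 ω = m)
    (a : ℝ) (ha : -a < m)
    (σlow σup : Ω → ℝ)
    (hσlow : ∀ ω, σlow ω = sInf ({s ∈ Set.Icc (0 : ℝ) T | M s ω ≤ -a} ∪ {T}))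
    (hσup : ∀ ω, σup ω = sInf ({s ∈ Set.Icc (0 : ℝ) T | M s ω < -a} ∪ {T})) :
    ∀ t ∈ Set.Icc (0 : ℝ) T,
      ∀ᵐ ω ∂P, M (min t (σlow ω)) ω = M (min t (σup ω)) ω := by
  intro t ht
  obtain ⟨ht0, htT⟩ := ht
  have hT0 : (0:ℝ) ≤ T := hT.le
  have hS_low_sub : ∀ ω, {s ∈ Set.Icc (0 : ℝ) T | M s ω ≤ -a} ⊆ Set.Icc (0:ℝ) T :=
    fun ω x hx => hx.1
  have hS_up_sub : ∀ ω, {s ∈ Set.Icc (0 : ℝ) T | M s ω < -a} ⊆ Set.Icc (0:ℝ) T :=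
    fun ω x hx => hx.1
  have hl0 : ∀ ω, 0 ≤ σlow ω := fun ω => by
    rw [hσlow ω]; exact Stmt15Aux.sInfU_nonneg hT0 (hS_low_sub ω)
  have hu0 : ∀ ω, 0 ≤ σup ω := fun ω => by
    rw [hσup ω]; exact Stmt15Aux.sInfU_nonneg hT0 (hS_up_sub ω)
  have hlT : ∀ ω, σlow ω ≤ T := fun ω => by
    rw [hσlow ω]; exact Stmt15Aux.sInfU_le_T hT0 (hS_low_sub ω)
  rcases eq_or_lt_of_le ht0 with ht0' | ht0'
  · -- t = 0 : both stopped times are 0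
    refine Eventually.of_forall fun ω => ?_
    rw [← ht0', min_eq_left (hl0 ω), min_eq_left (hu0 ω)]
  -- t > 0 : use the key lemma
  have hlu : ∀ ω, σlow ω ≤ σup ω := by
    intro ω
    rw [hσlow ω, hσup ω]
    exact Stmt15Aux.sInfU_mono hT0 (fun x hx => ⟨hx.1, hx.2.le⟩) (hS_low_sub ω)
  refine Stmt15Aux.key T ℱ M hadp hint hsuper hcont (-a) σlow σup t ht0' htT
    hl0 hu0 hlu ?_ ?_ ?_ ?_
  · -- hsl
    intro s hs0 hst
    exact Stmt15Aux.measSet_low T ℱ M hadp hcont a σlow hσlow hs0 (hst.trans_le htT)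
  · -- hsu
    intro s hs0 hst
    exact Stmt15Aux.measSet_up T ℱ M hadp hcont a σup hσup hs0 (hst.trans htT)
  · -- hXval
    filter_upwards [hM0] with ω hm hlt
    have hσT : σlow ω < T := hlt.trans_le htT
    have hle : M (σlow ω) ω ≤ -a := by
      rw [hσlow ω]
      refine Stmt15Aux.val_le_at_sInfU (hcont ω) hT0 (fun x hx => hx) ?_
      rw [← hσlow ω]; exact hσT
    have hge : -a ≤ M (σlow ω) ω := by
      refine Stmt15Aux.le_val_of_left (hcont ω) ⟨hl0 ω, hlT ω⟩ ?_ ?_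
      · rw [hm]; linarith
      · intro u hu0' hult
        have hnot : u ∉ {s ∈ Set.Icc (0 : ℝ) T | M s ω ≤ -a} := by
          refine Stmt15Aux.not_mem_of_lt_sInfU hT0 (hS_low_sub ω) ?_
          rw [← hσlow ω]; exact hult
        by_contra hcon
        exact hnot ⟨⟨hu0', (hult.trans_le (hlT ω)).le⟩, by linarith⟩
    linarith
  · -- hYge
    filter_upwards [hM0] with ω hm
    refine Stmt15Aux.le_val_of_left (hcont ω) ?_ ?_ ?_
    · exact ⟨le_min ht0 (hu0 ω), (min_le_left _ _).trans htT⟩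
    · rw [hm]; linarith
    · intro u hu0' hult
      have hult' : u < σup ω := hult.trans_le (min_le_right _ _)
      have huT : u ≤ T := ((hult.trans_le (min_le_left _ _)).trans_le htT).le
      have hnot : u ∉ {s ∈ Set.Icc (0 : ℝ) T | M s ω < -a} := by
        refine Stmt15Aux.not_mem_of_lt_sInfU hT0 (hS_up_sub ω) ?_
        rw [← hσup ω]; exact hult'
      by_contra hcon
      exact hnot ⟨⟨hu0', huT⟩, by linarith⟩
end

section
/- Let β ≥ 1 and n ≥ 0 be real numbers, and let x, y ∈ ℝ be such that |x| < n implies x = y. Then |x − y|^β ≤ 2^{2β−1} |x|^β · 1_{{|x| ≥ n}} + 2^{β−1} |y|^β · 1_{{|y| > n}}. -/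
lemma aux_rpow_add (a b p : ℝ) (ha : 0 ≤ a) (hb : 0 ≤ b) (hp : 1 ≤ p) :
    (a + b) ^ p ≤ 2 ^ (p - 1) * (a ^ p + b ^ p) := by
  have h := NNReal.rpow_add_le_mul_rpow_add_rpow a.toNNReal b.toNNReal hp
  have := (NNReal.coe_le_coe.2 h)
  push_cast at this
  simpa [Real.toNNReal_of_nonneg ha, Real.toNNReal_of_nonneg hb] using this

/-- If `β ≥ 1`, `n ≥ 0`, and `|x| < n` implies `x = y`, then
`|x − y|^β ≤ 2^{2β−1} |x|^β 1_{|x| ≥ n} + 2^{β−1} |y|^β 1_{|y| > n}`. -/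
theorem stmt_16 (β n : ℝ) (hβ : 1 ≤ β) (hn : 0 ≤ n) (x y : ℝ)
    (hxy : |x| < n → x = y) :
    |x - y| ^ β ≤
      (2 : ℝ) ^ (2 * β - 1) * (if n ≤ |x| then |x| ^ β else 0) +
        (2 : ℝ) ^ (β - 1) * (if n < |y| then |y| ^ β else 0) := by
  by_cases hx : n ≤ |x|
  · rw [if_pos hx]
    have h1 : |x - y| ^ β ≤ (|x| + |y|) ^ β := by
      apply Real.rpow_le_rpow (abs_nonneg _) (abs_sub _ _) (by linarith)
    by_cases hy : n < |y|
    · rw [if_pos hy]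
      have h2 := aux_rpow_add |x| |y| β (abs_nonneg _) (abs_nonneg _) hβ
      have h3 : (2 : ℝ) ^ (β - 1) ≤ 2 ^ (2 * β - 1) :=
        Real.rpow_le_rpow_of_exponent_le one_le_two (by linarith)
      have hxp : (0:ℝ) ≤ |x| ^ β := Real.rpow_nonneg (abs_nonneg _) _
      nlinarith [Real.rpow_nonneg (abs_nonneg y) β]
    · rw [if_neg hy, mul_zero, add_zero]
      have hy' : |y| ≤ |x| := le_trans (not_lt.1 hy) hx
      have h2 : |x - y| ^ β ≤ (2 * |x|) ^ β := by
        apply Real.rpow_le_rpow (abs_nonneg _) _ (by linarith)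
        calc |x - y| ≤ |x| + |y| := abs_sub _ _
          _ ≤ 2 * |x| := by linarith
      have h3 : (2 * |x|) ^ β = 2 ^ β * |x| ^ β :=
        Real.mul_rpow (by norm_num) (abs_nonneg _)
      have h4 : (2 : ℝ) ^ β ≤ 2 ^ (2 * β - 1) :=
        Real.rpow_le_rpow_of_exponent_le one_le_two (by linarith)
      have hxp : (0:ℝ) ≤ |x| ^ β := Real.rpow_nonneg (abs_nonneg _) _
      nlinarith
  · have hxe := hxy (not_le.1 hx)
    subst hxe
    simp only [sub_self, abs_zero]
    rw [Real.zero_rpow (by linarith)]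
    positivity
end
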